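/- arXiv:1611.02880 — 9 statements merged into one kernel-verified Lean document; each statement's English description precedes it below -/
import Mathlib

section
/- Let M, k, α be integers with 1 ≤ k ≤ M and α ≥ k. Then the sum Σ_{h=k}^{α} (-1)^{h-k} · C(h-1, k-1) · C(M, h) is ≥ 1 if α - k is even, and ≤ 1 if α - k is odd (here C(a,b) denotes the binomial coefficient). -/
open MeasureTheory Matrix Metric
open scoped Classical

noncomputable section

/-- remainder term -/
def gRem (N k β : ℕ) : ℕ :=
  ∑ j ∈ Finset.range k, (β + j).choose j * (N + j).choose (β + j + 1)

lemma keyTelescope (N β m : ℕ) :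
    ∑ j ∈ Finset.range (m + 1),
      ((β + j).choose j * (N + j).choose (β + j + 1) +
        (β + j + 1).choose j * (N + j).choose (β + j + 2)) =
    (β + m + 1).choose m * (N + m + 1).choose (β + m + 2) := by
  induction m with
  | zero =>
      rw [Finset.sum_range_succ, Finset.sum_range_zero]
      have p0 : (N + 1).choose (β + 2) = N.choose (β + 1) + N.choose (β + 2) :=
        Nat.choose_succ_succ N (β + 1)
      simp [p0]
  | succ m ih =>
      rw [Finset.sum_range_succ, ih]
      have p1 : (β + (m+1) + 1).choose (m+1)
          = (β + m + 1).choose m + (β + m + 1).choose (m+1) :=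
        Nat.choose_succ_succ (β + m + 1) m
      have p2 : (N + (m+1) + 1).choose (β + (m+1) + 2)
          = (N + m + 1).choose (β + m + 2) + (N + m + 1).choose (β + m + 3) :=
        Nat.choose_succ_succ (N + m + 1) (β + m + 2)
      have e1 : (β + (m+1)).choose (m+1) = (β + m + 1).choose (m+1) := rfl
      have e2 : (N + (m+1)).choose (β + (m+1) + 1) = (N + m + 1).choose (β + m + 2) := rfl
      have e4 : (N + (m+1)).choose (β + (m+1) + 2) = (N + m + 1).choose (β + m + 3) := rfl
      rw [e1, e2, e4, p2, p1]
      ring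

lemma hockeyStick (N : ℕ) : ∀ k : ℕ,
    (N + k).choose k = 1 + ∑ j ∈ Finset.range k, (N + j).choose (j + 1) := by
  intro k
  induction k with
  | zero => simp
  | succ k ih =>
      rw [Finset.sum_range_succ]
      have : (N + (k+1)).choose (k+1) = (N + k).choose k + (N + k).choose (k+1) :=
        Nat.choose_succ_succ (N + k) k
      rw [this, ih]
      ring

lemma gRem_step (N k β : ℕ) (hk : 1 ≤ k) :
    gRem N k β + gRem N k (β + 1)
      = (β + k).choose (k - 1) * (N + k).choose (β + k + 1) := by
  obtain ⟨m, rfl⟩ : ∃ m, k = m + 1 := ⟨k - 1, by omega⟩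
  unfold gRem
  rw [← Finset.sum_add_distrib]
  have e : ∀ j ∈ Finset.range (m+1),
      ((β + j).choose j * (N + j).choose (β + j + 1) +
        (β + 1 + j).choose j * (N + j).choose (β + 1 + j + 1))
      = ((β + j).choose j * (N + j).choose (β + j + 1) +
        (β + j + 1).choose j * (N + j).choose (β + j + 2)) := by
    intro j _
    have h1 : β + 1 + j = β + j + 1 := by omega
    rw [h1]
  rw [Finset.sum_congr rfl e, keyTelescope]
  congr 2 <;> omega

lemma main_identity (N k : ℕ) (hk : 1 ≤ k) : ∀ β : ℕ,
    ∑ h ∈ Finset.Icc k (k + β),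
        (-1 : ℝ) ^ (h - k) * ((h - 1).choose (k - 1)) * ((N + k).choose h)
      = 1 + (-1 : ℝ) ^ β * (gRem N k β : ℝ) := by
  intro β
  induction β with
  | zero =>
      rw [Nat.add_zero, Finset.Icc_self, Finset.sum_singleton]
      have h1 : k - k = 0 := by omega
      have h2 : (k - 1).choose (k - 1) = 1 := Nat.choose_self _
      rw [h1, h2]
      have h3 : gRem N k 0 = ∑ j ∈ Finset.range k, (N + j).choose (j + 1) := by
        unfold gRem
        refine Finset.sum_congr rfl fun j _ => ?_
        simp
      rw [h3]
      have := hockeyStick N k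
      push_cast [this]
      ring
  | succ β ih =>
      have hle : k ≤ k + β + 1 := by omega
      rw [show k + (β + 1) = (k + β) + 1 by omega,
        Finset.sum_Icc_succ_top (by omega : k ≤ k + β + 1), ih]
      have hsub : k + β + 1 - k = β + 1 := by omega
      have hsub2 : k + β + 1 - 1 = β + k := by omega
      rw [hsub, hsub2]
      have step := gRem_step N k β hk
      have stepR : (gRem N k β : ℝ) + (gRem N k (β+1) : ℝ)
          = ((β + k).choose (k - 1) : ℝ) * ((N + k).choose (β + k + 1) : ℝ) := by
        exact_mod_cast congrArg (Nat.cast : ℕ → ℝ) step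
      have e5 : ((N + k).choose (k + β + 1) : ℝ) = ((N + k).choose (β + k + 1) : ℝ) := by
        congr 2; omega
      rw [e5]
      have : (gRem N k (β+1) : ℝ)
          = ((β + k).choose (k - 1) : ℝ) * ((N + k).choose (β + k + 1) : ℝ)
            - (gRem N k β : ℝ) := by linarith
      rw [this]
      ring

theorem binomial_alternating_sum_one (M k α : ℕ) (hk : 1 ≤ k) (hkM : k ≤ M) (hkα : k ≤ α) :
    (Even (α - k) →
      1 ≤ ∑ h ∈ Finset.Icc k α,
        (-1 : ℝ) ^ (h - k) * ((h - 1).choose (k - 1)) * (M.choose h)) ∧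
    (Odd (α - k) →
      ∑ h ∈ Finset.Icc k α,
        (-1 : ℝ) ^ (h - k) * ((h - 1).choose (k - 1)) * (M.choose h) ≤ 1) := by
  set β := α - k with hβ
  have hα : α = k + β := by omega
  have hM : M = (M - k) + k := by omega
  have key := main_identity (M - k) k hk β
  rw [← hα, ← hM] at key
  constructor
  · intro hev
    rw [key, hev.neg_one_pow]
    have : (0 : ℝ) ≤ (gRem (M - k) k β : ℝ) := Nat.cast_nonneg _
    linarith
  · intro hodd
    rw [key, hodd.neg_one_pow]
    have : (0 : ℝ) ≤ (gRem (M - k) k β : ℝ) := Nat.cast_nonneg _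
    linarith
end
end

section
/- Let k, M, α be integers with 1 ≤ k ≤ M, α ≥ k, and α - k odd. Let σ_{k-1}, σ_k, ..., σ_α be real numbers in [0,1] satisfying σ_{k+2t-1} ≥ σ_{k+2t} and σ_{k+2t} ≤ σ_{k+2t+1} for all integers t ≥ 0 (whenever the indices involved lie in {k-1, ..., α}). Then Σ_{h=k}^{α} (-1)^{h-k} · C(h-1, k-1) · C(M, h) · σ_h ≤ σ_{k-1}. -/
open Finset

def Fa (k M h : ℕ) : ℤ :=
  ∑ j ∈ Finset.Icc h M, (-1 : ℤ) ^ (j - h) * ((j - 1).choose (k - 1)) * (M.choose j)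

lemma Fa_zero {k M h : ℕ} (h1 : M < h) : Fa k M h = 0 := by
  unfold Fa
  rw [Finset.Icc_eq_empty (by omega), Finset.sum_empty]

lemma Fa_peel (k M h : ℕ) :
    Fa k M h + Fa k M (h + 1) = ((h - 1).choose (k - 1) : ℤ) * (M.choose h) := by
  by_cases hM : h ≤ M
  · unfold Fa
    have hins : Finset.Icc h M = insert h (Finset.Icc (h+1) M) := by
      ext x; simp only [Finset.mem_Icc, Finset.mem_insert]; omega
    rw [hins, Finset.sum_insert (by simp [Finset.mem_Icc])]
    have hcg : ∀ j ∈ Finset.Icc (h+1) M,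
        (-1:ℤ)^(j-h) * ((j-1).choose (k-1)) * (M.choose j)
        = -((-1:ℤ)^(j-(h+1)) * ((j-1).choose (k-1)) * (M.choose j)) := by
      intro j hj
      simp only [Finset.mem_Icc] at hj
      have he : j - h = (j - (h+1)) + 1 := by omega
      rw [he, pow_succ]
      ring
    rw [Finset.sum_congr rfl hcg, Finset.sum_neg_distrib]
    simp
  · rw [Fa_zero (by omega), Fa_zero (by omega), (show ((M.choose h : ℤ)) = 0 by rw [Nat.choose_eq_zero_of_lt (show M < h by omega)]; simp)]
    simp

lemma Fa_rec (k M h : ℕ) (hk : 2 ≤ k) (hh : k ≤ h) (hhM : h ≤ M + 1) :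
    Fa k (M+1) h = Fa k M h + Fa k M (h-1) + Fa (k-1) M (h-1) := by
  have step1 : Fa k (M+1) h =
      (∑ j ∈ Finset.Icc h (M+1), (-1:ℤ)^(j-h) * ((j-1).choose (k-1)) * (M.choose j))
      + ∑ j ∈ Finset.Icc h (M+1), (-1:ℤ)^(j-h) * ((j-1).choose (k-1)) * (M.choose (j-1)) := by
    unfold Fa
    rw [← Finset.sum_add_distrib]
    apply Finset.sum_congr rfl
    intro j hj
    simp only [Finset.mem_Icc] at hj
    have hj1 : j = (j-1) + 1 := by omega
    have : ((M+1).choose j : ℤ) = (M.choose (j-1)) + (M.choose j) := by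
      rw [hj1, Nat.choose_succ_succ']
      push_cast
      rw [← hj1]
    rw [this]
    ring
  have part1 : (∑ j ∈ Finset.Icc h (M+1), (-1:ℤ)^(j-h) * ((j-1).choose (k-1)) * (M.choose j))
      = Fa k M h := by
    rw [Finset.sum_Icc_succ_top hhM]
    have : (M.choose (M+1) : ℤ) = 0 := by
      rw [Nat.choose_eq_zero_of_lt (by omega)]; simp
    rw [this]
    unfold Fa
    ring
  have part2 : (∑ j ∈ Finset.Icc h (M+1), (-1:ℤ)^(j-h) * ((j-1).choose (k-1)) * (M.choose (j-1)))
      = Fa k M (h-1) + Fa (k-1) M (h-1) := by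
    have hmap : Finset.Icc h (M+1) = Finset.map ⟨(· + 1), add_left_injective 1⟩ (Finset.Icc (h-1) M) := by
      ext x
      simp only [Finset.mem_Icc, Finset.mem_map, Function.Embedding.coeFn_mk]
      constructor
      · intro hx; exact ⟨x - 1, by omega, by omega⟩
      · rintro ⟨y, hy, rfl⟩; omega
    rw [hmap, Finset.sum_map]
    simp only [Function.Embedding.coeFn_mk, Nat.add_sub_cancel]
    unfold Fa
    rw [← Finset.sum_add_distrib]
    apply Finset.sum_congr rfl
    intro i hi
    simp only [Finset.mem_Icc] at hi
    have hi1 : 1 ≤ i := by omega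
    have he : i + 1 - h = i - (h-1) := by omega
    have hsplit : ((i).choose (k-1) : ℤ) = ((i-1).choose (k-1-1)) + ((i-1).choose (k-1)) := by
      have e1 : i = (i-1)+1 := by omega
      have e2 : k - 1 = (k-2)+1 := by omega
      rw [e1, e2, Nat.choose_succ_succ']
      push_cast
      rfl
    rw [he, hsplit]
    ring
  rw [step1, part1, part2]
  ring

lemma Fa_one_aux (M : ℕ) (hM : 1 ≤ M) :
    ∀ d h, 1 ≤ h → M + 1 ≤ h + d → Fa 1 M h = ((M-1).choose (h-1) : ℤ) := by
  intro d
  induction d with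
  | zero =>
    intro h h1 h2
    rw [Fa_zero (by omega), Nat.choose_eq_zero_of_lt (by omega)]
    simp
  | succ d ih =>
    intro h h1 h2
    by_cases hcase : M + 1 ≤ h + d
    · exact ih h h1 hcase
    · have hhM : h ≤ M := by omega
      have hpeel := Fa_peel 1 M h
      have hnext := ih (h+1) (by omega) (by omega)
      have hch : ((h-1).choose 0 : ℤ) = 1 := by simp
      have hpas : (M.choose h : ℤ) = ((M-1).choose (h-1)) + ((M-1).choose h) := by
        have e1 : M = (M-1)+1 := by omega
        have e2 : h = (h-1)+1 := by omega
        rw [e1, e2, Nat.choose_succ_succ']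
        push_cast
        rw [← e2]
      have e3 : h + 1 - 1 = h := by omega
      rw [e3] at hnext
      simp only [hch] at hpeel
      rw [hnext, hpas] at hpeel
      linarith

lemma Fa_nonneg : ∀ M k h : ℕ, 1 ≤ k → k ≤ h → 0 ≤ Fa k M h := by
  intro M
  induction M with
  | zero =>
    intro k h hk hkh
    rw [Fa_zero (by omega)]
  | succ M ih =>
    intro k h hk hkh
    by_cases hhM : M + 1 < h
    · rw [Fa_zero hhM]
    · push_neg at hhM
      rcases eq_or_lt_of_le hk with hk1 | hk2
      · rw [← hk1, Fa_one_aux (M+1) (by omega) (M+2) h (by omega) (by omega)]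
        positivity
      · have hk2' : 2 ≤ k := hk2
        rw [Fa_rec k M h hk2' hkh hhM]
        rcases eq_or_lt_of_le hkh with hhk | hhk
        · -- h = k
          have hzero : Fa k M (k-1) + Fa k M k = 0 := by
            have hpeel := Fa_peel k M (k-1)
            have e1 : k - 1 + 1 = k := by omega
            have e2 : ((k-1-1).choose (k-1) : ℤ) = 0 := by
              rw [Nat.choose_eq_zero_of_lt (by omega)]; simp
            rw [e1, e2] at hpeel
            linarith [hpeel]
          have h3 := ih (k-1) (k-1) (by omega) le_rfl
          rw [← hhk]
          linarith [hzero, h3]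
        · have h1 := ih k h (by omega) hkh
          have h2 := ih k (h-1) (by omega) (by omega)
          have h3 := ih (k-1) (h-1) (by omega) (by omega)
          linarith

lemma Fa_diag : ∀ k M : ℕ, 1 ≤ k → k ≤ M → Fa k M k = 1 := by
  intro k
  induction k with
  | zero => intro M h; omega
  | succ k ih =>
    intro M h1 hM
    rcases Nat.eq_zero_or_pos k with hk0 | hk1
    · subst hk0
      rw [Fa_one_aux M (by omega) (M+1) 1 le_rfl (by omega)]
      simp
    · obtain ⟨N, rfl⟩ : ∃ N, M = N + 1 := ⟨M - 1, by omega⟩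
      rw [Fa_rec (k+1) N (k+1) (by omega) le_rfl (by omega)]
      have hzero : Fa (k+1) N k + Fa (k+1) N (k+1) = 0 := by
        have hpeel := Fa_peel (k+1) N k
        have e2 : ((k-1).choose (k+1-1) : ℤ) = 0 := by
          rw [Nat.choose_eq_zero_of_lt (by omega)]; simp
        rw [e2] at hpeel
        linarith [hpeel]
      have hsimp : k + 1 - 1 = k := by omega
      rw [hsimp]
      have := ih N hk1 (by omega)
      linarith [hzero, this]

open MeasureTheory Matrix Metric
open scoped Classical

noncomputable section

theorem schmidt_sieve_upper (k M α : ℕ) (σ : ℕ → ℝ)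
    (hk : 1 ≤ k) (hkM : k ≤ M) (hkα : k ≤ α) (hodd : Odd (α - k))
    (hrange : ∀ h, k - 1 ≤ h → h ≤ α → σ h ∈ Set.Icc (0 : ℝ) 1)
    (hdown : ∀ t : ℕ, k + 2 * t ≤ α → σ (k + 2 * t) ≤ σ (k + 2 * t - 1))
    (hup : ∀ t : ℕ, k + 2 * t + 1 ≤ α → σ (k + 2 * t) ≤ σ (k + 2 * t + 1)) :
    ∑ h ∈ Finset.Icc k α,
      (-1 : ℝ) ^ (h - k) * ((h - 1).choose (k - 1)) * (M.choose h) * σ h ≤ σ (k - 1) := by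
  obtain ⟨u, hu⟩ := hodd
  have hα : α = k + 2*u + 1 := by omega
  have key : ∀ r s : ℕ, r + s = u + 1 →
      ∃ c : ℝ, 0 ≤ c ∧ c ≤ ((Fa k M (k + 2*s) : ℤ) : ℝ) ∧
        ∑ h ∈ Finset.Icc (k + 2*s) α,
          (-1 : ℝ) ^ (h - k) * ((h - 1).choose (k - 1)) * (M.choose h) * σ h
          ≤ c * σ (k + 2*s - 1) := by
    intro r
    induction r with
    | zero =>
      intro s hs
      refine ⟨0, le_rfl, ?_, ?_⟩
      · exact_mod_cast Fa_nonneg M k (k+2*s) hk (by omega)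
      · have hemp : Finset.Icc (k + 2*s) α = ∅ := Finset.Icc_eq_empty (by omega)
        rw [hemp, Finset.sum_empty]
        simp
    | succ r ih =>
      intro s hs
      obtain ⟨c', hc'0, hc'F, hc'sum⟩ := ih (s+1) (by omega)
      rw [show k + 2*(s+1) = k + 2*s + 2 by ring] at hc'F hc'sum
      rw [show k + 2*s + 2 - 1 = k + 2*s + 1 by omega] at hc'sum
      have hmα : k + 2*s + 1 ≤ α := by omega
      have hσm0 : 0 ≤ σ (k+2*s) := (hrange (k+2*s) (by omega) (by omega)).1
      have hσm1 : 0 ≤ σ (k+2*s+1) := (hrange (k+2*s+1) (by omega) (by omega)).1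
      have hσup : σ (k+2*s) ≤ σ (k+2*s+1) := hup s (by omega)
      have hσdn : σ (k+2*s) ≤ σ (k+2*s-1) := hdown s (by omega)
      have hA0 : (0:ℝ) ≤ ((k+2*s-1).choose (k-1) : ℝ) * (M.choose (k+2*s)) := by positivity
      have hFpeel1 : ((Fa k M (k+2*s) : ℤ) : ℝ) + ((Fa k M (k+2*s+1) : ℤ) : ℝ)
          = ((k+2*s-1).choose (k-1) : ℝ) * (M.choose (k+2*s)) := by
        exact_mod_cast Fa_peel k M (k+2*s)
      have hFpeel2 : ((Fa k M (k+2*s+1) : ℤ) : ℝ) + ((Fa k M (k+2*s+2) : ℤ) : ℝ)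
          = ((k+2*s).choose (k-1) : ℝ) * (M.choose (k+2*s+1)) := by
        have hp := Fa_peel k M (k+2*s+1)
        rw [show k + 2*s + 1 - 1 = k + 2*s by omega] at hp
        exact_mod_cast hp
      have hF1 : (0:ℝ) ≤ ((Fa k M (k+2*s+1) : ℤ) : ℝ) := by
        exact_mod_cast Fa_nonneg M k (k+2*s+1) hk (by omega)
      have hsum_le : ∑ h ∈ Finset.Icc (k + 2*s) α,
          (-1 : ℝ) ^ (h - k) * ((h - 1).choose (k - 1)) * (M.choose h) * σ h
          ≤ ((k+2*s-1).choose (k-1) : ℝ) * (M.choose (k+2*s)) * σ (k+2*s)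
            - (((k+2*s).choose (k-1) : ℝ) * (M.choose (k+2*s+1)) - c') * σ (k+2*s+1) := by
        have hins : Finset.Icc (k+2*s) α
            = insert (k+2*s) (insert (k+2*s+1) (Finset.Icc (k+2*s+2) α)) := by
          ext x
          simp only [Finset.mem_Icc, Finset.mem_insert]
          omega
        rw [hins, Finset.sum_insert (by simp only [Finset.mem_insert, Finset.mem_Icc]; omega),
          Finset.sum_insert (by simp only [Finset.mem_Icc]; omega)]
        rw [show k + 2*s - k = 2*s by omega, show k + 2*s + 1 - k = 2*s + 1 by omega,
          show k + 2*s + 1 - 1 = k + 2*s by omega]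
        have t1 : (-1:ℝ)^(2*s) = 1 := by rw [pow_mul]; norm_num
        have t2 : (-1:ℝ)^(2*s+1) = -1 := by rw [pow_succ, pow_mul]; norm_num
        rw [t1, t2]
        linarith [hc'sum]
      rcases le_or_gt (((k+2*s-1).choose (k-1) : ℝ) * (M.choose (k+2*s)))
          (((k+2*s).choose (k-1) : ℝ) * (M.choose (k+2*s+1)) - c') with hcs | hcs
      · refine ⟨0, le_rfl, ?_, ?_⟩
        · exact_mod_cast Fa_nonneg M k (k+2*s) hk (by omega)
        · have hint1 : 0 ≤ ((k+2*s-1).choose (k-1) : ℝ) * (M.choose (k+2*s))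
              * (σ (k+2*s+1) - σ (k+2*s)) := mul_nonneg hA0 (by linarith)
          have hint2 : 0 ≤ (((k+2*s).choose (k-1) : ℝ) * (M.choose (k+2*s+1)) - c'
              - ((k+2*s-1).choose (k-1) : ℝ) * (M.choose (k+2*s))) * σ (k+2*s+1) :=
            mul_nonneg (by linarith) hσm1
          nlinarith [hsum_le, hint1, hint2]
      · refine ⟨((k+2*s-1).choose (k-1) : ℝ) * (M.choose (k+2*s))
            - (((k+2*s).choose (k-1) : ℝ) * (M.choose (k+2*s+1)) - c'), by linarith, ?_, ?_⟩
        · linarith [hFpeel1, hFpeel2, hc'F]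
        · have hd0 : 0 ≤ ((k+2*s).choose (k-1) : ℝ) * (M.choose (k+2*s+1)) - c' := by
            linarith [hFpeel2, hF1, hc'F]
          have hint1 : 0 ≤ (((k+2*s).choose (k-1) : ℝ) * (M.choose (k+2*s+1)) - c')
              * (σ (k+2*s+1) - σ (k+2*s)) := mul_nonneg hd0 (by linarith)
          have hint2 : 0 ≤ (((k+2*s-1).choose (k-1) : ℝ) * (M.choose (k+2*s))
              - (((k+2*s).choose (k-1) : ℝ) * (M.choose (k+2*s+1)) - c'))
              * (σ (k+2*s-1) - σ (k+2*s)) := mul_nonneg (by linarith) (by linarith)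
          nlinarith [hsum_le, hint1, hint2]
  obtain ⟨c, hc0, hcF, hcsum⟩ := key (u+1) 0 (by omega)
  rw [show k + 2*0 = k by omega] at hcF hcsum
  rw [Fa_diag k M hk hkM] at hcF
  have hσ0 : 0 ≤ σ (k-1) := (hrange (k-1) le_rfl (by omega)).1
  have : c * σ (k-1) ≤ 1 * σ (k-1) := by
    apply mul_le_mul_of_nonneg_right _ hσ0
    exact_mod_cast hcF
  linarith [hcsum, this]
end
end

section
/- Let k, M, β be integers with 1 ≤ k ≤ M, β ≥ k, and β - k even. Let τ_{k-1}, τ_k, ..., τ_β be real numbers in [0,1] satisfying τ_{k+2t-1} ≤ τ_{k+2t} and τ_{k+2t} ≥ τ_{k+2t+1} for all integers t ≥ 0 (whenever the indices involved lie in {k-1, ..., β}). Then Σ_{h=k}^{β} (-1)^{h-k} · C(h-1, k-1) · C(M, h) · τ_h ≥ τ_{k-1}. -/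
open MeasureTheory Matrix Metric
open scoped Classical

noncomputable section

namespace SchmidtAux

lemma prefix_alt (L : ℕ) (hL : 1 ≤ L) : ∀ j, 1 ≤ j →
    ∑ i ∈ Finset.range j, (-1 : ℤ) ^ i * (L.choose i) =
      (-1) ^ (j - 1) * ((L - 1).choose (j - 1)) := by
  intro j hj
  induction j with
  | zero => omega
  | succ j ih =>
    rcases Nat.lt_or_ge 1 (j + 1) with h | h
    · have hj1 : 1 ≤ j := by omega
      rw [Finset.sum_range_succ, ih hj1]
      obtain ⟨L', rfl⟩ : ∃ L', L = L' + 1 := ⟨L - 1, by omega⟩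
      obtain ⟨j', rfl⟩ : ∃ j', j = j' + 1 := ⟨j - 1, by omega⟩
      have hp : (L' + 1).choose (j' + 1) = L'.choose j' + L'.choose (j' + 1) :=
        Nat.choose_succ_succ _ _
      simp only [Nat.add_sub_cancel, hp]
      push_cast
      ring
    · have : j = 0 := by omega
      subst this
      simp

lemma Icc_alt (L j : ℕ) (hL : 1 ≤ L) (hj : 1 ≤ j) :
    ∑ i ∈ Finset.Icc j L, (-1 : ℤ) ^ (i - j) * (L.choose i) =
      ((L - 1).choose (j - 1)) := by
  rcases Nat.lt_or_ge L j with h | h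
  · rw [Finset.Icc_eq_empty (by omega), Nat.choose_eq_zero_of_lt (by omega)]
    simp
  · have hsplit : (∑ i ∈ Finset.Ico 0 j, (-1 : ℤ) ^ i * (L.choose i)) +
        ∑ i ∈ Finset.Ico j (L + 1), (-1 : ℤ) ^ i * (L.choose i)
        = ∑ i ∈ Finset.Ico 0 (L + 1), (-1 : ℤ) ^ i * (L.choose i) :=
      Finset.sum_Ico_consecutive _ (by omega) (by omega)
    have hfull : ∑ i ∈ Finset.Ico 0 (L + 1), (-1 : ℤ) ^ i * (L.choose i) = 0 := by
      rw [← Finset.range_eq_Ico]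
      exact Int.alternating_sum_range_choose_of_ne (by omega)
    have hpre : ∑ i ∈ Finset.Ico 0 j, (-1 : ℤ) ^ i * (L.choose i)
        = (-1) ^ (j - 1) * ((L - 1).choose (j - 1)) := by
      rw [← Finset.range_eq_Ico]; exact prefix_alt L hL j hj
    have htail : ∑ i ∈ Finset.Icc j L, (-1 : ℤ) ^ i * (L.choose i)
        = (-1) ^ j * ((L - 1).choose (j - 1)) := by
      rw [← Finset.Ico_add_one_right_eq_Icc]
      have h1 : ∑ i ∈ Finset.Ico j (L + 1), (-1 : ℤ) ^ i * (L.choose i)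
          = - ((-1) ^ (j - 1) * ((L - 1).choose (j - 1))) := by
        have := hsplit
        rw [hfull, hpre] at this
        linarith
      rw [h1]
      obtain ⟨j', rfl⟩ : ∃ j', j = j' + 1 := ⟨j - 1, by omega⟩
      simp only [Nat.add_sub_cancel, pow_succ]
      ring
    have hrel : ∑ i ∈ Finset.Icc j L, (-1 : ℤ) ^ i * (L.choose i)
        = (-1) ^ j * ∑ i ∈ Finset.Icc j L, (-1 : ℤ) ^ (i - j) * (L.choose i) := by
      rw [Finset.mul_sum]
      refine Finset.sum_congr rfl fun i hi => ?_
      have hij : j ≤ i := (Finset.mem_Icc.mp hi).1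
      have : (-1 : ℤ) ^ i = (-1) ^ j * (-1) ^ (i - j) := by
        rw [← pow_add]; congr 1; omega
      rw [this]; ring
    rw [hrel] at htail
    have hne : ((-1 : ℤ) ^ j) ≠ 0 := pow_ne_zero _ (by norm_num)
    exact mul_left_cancel₀ hne htail

def U (N c j : ℕ) : ℤ := ∑ h ∈ Finset.Icc j N, (-1) ^ (h - j) * (h.choose c) * (N.choose h)

lemma U_eq (N c j : ℕ) (hc : c ≤ j) (hcN : c ≤ N) :
    U N c j = (N.choose c) *
      ∑ i ∈ Finset.Icc (j - c) (N - c), (-1 : ℤ) ^ (i - (j - c)) * ((N - c).choose i) := by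
  have hmap : Finset.Icc j N = (Finset.Icc (j - c) (N - c)).map (addLeftEmbedding c) := by
    rw [Finset.map_add_left_Icc]
    congr 1 <;> omega
  rw [U, hmap, Finset.sum_map, Finset.mul_sum]
  refine Finset.sum_congr rfl fun i hi => ?_
  have hi' : j - c ≤ i ∧ i ≤ N - c := Finset.mem_Icc.mp hi
  have hemb : addLeftEmbedding c i = c + i := rfl
  rw [hemb]
  have hch : N.choose (c + i) * (c + i).choose c = N.choose c * (N - c).choose (c + i - c) :=
    Nat.choose_mul (by omega)
  have hch' : (c + i).choose c * N.choose (c + i) = N.choose c * (N - c).choose i := by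
    rw [Nat.mul_comm] at hch; rw [hch]; congr 2; omega
  have hexp : c + i - j = i - (j - c) := by omega
  rw [hexp]
  have hc2 : (((c + i).choose c : ℤ)) * (N.choose (c + i)) = (N.choose c) * ((N - c).choose i) := by
    exact_mod_cast hch'
  linear_combination (-1 : ℤ) ^ (i - (j - c)) * hc2

lemma U_nonneg (N c j : ℕ) (hc : c ≤ j) : 0 ≤ U N c j := by
  rcases Nat.lt_or_ge N j with h | h
  · rw [U, Finset.Icc_eq_empty (by omega)]; simp
  · rw [U_eq N c j hc (by omega)]
    have hin : 0 ≤ ∑ i ∈ Finset.Icc (j - c) (N - c), (-1 : ℤ) ^ (i - (j - c)) * ((N - c).choose i) := by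
      rcases Nat.eq_zero_or_pos (j - c) with hs | hs
      · rw [hs]
        have : Finset.Icc 0 (N - c) = Finset.range (N - c + 1) := by
          rw [Finset.range_eq_Ico, ← Finset.Ico_add_one_right_eq_Icc]
        rw [this]
        have : ∑ i ∈ Finset.range (N - c + 1), (-1 : ℤ) ^ (i - 0) * ((N - c).choose i)
            = ∑ i ∈ Finset.range (N - c + 1), (-1 : ℤ) ^ i * ((N - c).choose i) := by
          refine Finset.sum_congr rfl fun i _ => by rw [Nat.sub_zero]
        rw [this, Int.alternating_sum_range_choose]
        split <;> norm_num
      · rcases Nat.eq_zero_or_pos (N - c) with hL | hL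
        · rw [hL, Finset.Icc_eq_empty (by omega)]; simp
        · rw [Icc_alt (N - c) (j - c) hL hs]
          positivity
    positivity

lemma U_diag_zero (N c : ℕ) (h : c < N) : U N c c = 0 := by
  rw [U_eq N c c le_rfl (by omega), Nat.sub_self]
  have : Finset.Icc 0 (N - c) = Finset.range (N - c + 1) := by
    rw [Finset.range_eq_Ico, ← Finset.Ico_add_one_right_eq_Icc]
  rw [this]
  have h2 : ∑ i ∈ Finset.range (N - c + 1), (-1 : ℤ) ^ (i - 0) * ((N - c).choose i)
      = ∑ i ∈ Finset.range (N - c + 1), (-1 : ℤ) ^ i * ((N - c).choose i) := by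
    refine Finset.sum_congr rfl fun i _ => by rw [Nat.sub_zero]
  rw [h2, Int.alternating_sum_range_choose_of_ne (by omega), mul_zero]

def T (M k m : ℕ) : ℤ :=
  ∑ h ∈ Finset.Icc m M, (-1) ^ (h - m) * ((h - 1).choose (k - 1)) * (M.choose h)

lemma T_succ (M k m : ℕ) (hk : 1 ≤ k) (hm : k ≤ m) :
    T (M + 1) k m = T M k m + U M (k - 1) (m - 1) := by
  rcases Nat.lt_or_ge (M + 1) m with h | h
  · rw [T, T, U, Finset.Icc_eq_empty (by omega), Finset.Icc_eq_empty (by omega),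
      Finset.Icc_eq_empty (by omega)]
    simp
  · have hsplit : T (M + 1) k m =
        (∑ h ∈ Finset.Icc m (M + 1), (-1 : ℤ) ^ (h - m) * ((h - 1).choose (k - 1)) * (M.choose h))
        + ∑ h ∈ Finset.Icc m (M + 1), (-1 : ℤ) ^ (h - m) * ((h - 1).choose (k - 1)) * (M.choose (h - 1)) := by
      rw [T, ← Finset.sum_add_distrib]
      refine Finset.sum_congr rfl fun x hx => ?_
      have hx1 : m ≤ x ∧ x ≤ M + 1 := Finset.mem_Icc.mp hx
      obtain ⟨x', rfl⟩ : ∃ x', x = x' + 1 := ⟨x - 1, by omega⟩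
      rw [Nat.choose_succ_succ (M) (x')]
      push_cast
      ring
    have h1 : ∑ h ∈ Finset.Icc m (M + 1), (-1 : ℤ) ^ (h - m) * ((h - 1).choose (k - 1)) * (M.choose h)
        = T M k m := by
      rw [Finset.sum_Icc_succ_top (by omega), Nat.choose_succ_self]
      simp [T]
    have h2 : ∑ h ∈ Finset.Icc m (M + 1), (-1 : ℤ) ^ (h - m) * ((h - 1).choose (k - 1)) * (M.choose (h - 1))
        = U M (k - 1) (m - 1) := by
      have hmap : Finset.Icc m (M + 1) = (Finset.Icc (m - 1) M).map (addLeftEmbedding 1) := by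
        rw [Finset.map_add_left_Icc]
        congr 1 <;> omega
      rw [hmap, Finset.sum_map, U]
      refine Finset.sum_congr rfl fun i hi => ?_
      have hi' : m - 1 ≤ i ∧ i ≤ M := Finset.mem_Icc.mp hi
      have hemb : addLeftEmbedding 1 i = 1 + i := rfl
      rw [hemb]
      have e1 : 1 + i - m = i - (m - 1) := by omega
      have e2 : 1 + i - 1 = i := by omega
      rw [e1, e2]
    rw [hsplit, h1, h2]

lemma T_nonneg (M k m : ℕ) (hk : 1 ≤ k) (hm : k ≤ m) : 0 ≤ T M k m := by
  induction M with
  | zero =>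
    rw [T, Finset.Icc_eq_empty (by omega)]; simp
  | succ M ih =>
    rw [T_succ M k m hk hm]
    have := U_nonneg M (k - 1) (m - 1) (by omega)
    omega

lemma T_diag_one (M k : ℕ) (hk : 1 ≤ k) (hkM : k ≤ M) : T M k k = 1 := by
  induction M, hkM using Nat.le_induction with
  | base =>
    rw [T, Finset.Icc_self, Finset.sum_singleton, Nat.sub_self, Nat.choose_self,
      Nat.choose_self]
    simp
  | succ M hM ih =>
    rw [T_succ M k k hk le_rfl, ih, U_diag_zero M (k - 1) (by omega)]
    omega

lemma T_stable (M k m N : ℕ) (hMN : M ≤ N) :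
    ∑ h ∈ Finset.Icc m N, (-1 : ℤ) ^ (h - m) * ((h - 1).choose (k - 1)) * (M.choose h)
      = T M k m := by
  rw [T]
  refine (Finset.sum_subset (Finset.Icc_subset_Icc_right hMN) fun x hx hx2 => ?_).symm
  have h1 : m ≤ x ∧ x ≤ N := Finset.mem_Icc.mp hx
  have h2 : ¬(m ≤ x ∧ x ≤ M) := fun hc => hx2 (Finset.mem_Icc.mpr hc)
  rw [Nat.choose_eq_zero_of_lt (show M < x by omega)]
  simp

lemma B_eq (M k n : ℕ) (hk : 1 ≤ k) (hkM : k ≤ M) (hkn : k ≤ n) :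
    ∑ h ∈ Finset.Icc k n, (-1 : ℤ) ^ (h - k) * ((h - 1).choose (k - 1)) * (M.choose h)
      = 1 - (-1) ^ (n + 1 - k) * T M k (n + 1) := by
  set N := max M n with hN
  have hfull : ∑ h ∈ Finset.Icc k N, (-1 : ℤ) ^ (h - k) * ((h - 1).choose (k - 1)) * (M.choose h)
      = 1 := by
    rw [T_stable M k k N (le_max_left _ _), T_diag_one M k hk hkM]
  have hsplit : (∑ h ∈ Finset.Ico k (n + 1), (-1 : ℤ) ^ (h - k) * ((h - 1).choose (k - 1)) * (M.choose h))
      + ∑ h ∈ Finset.Ico (n + 1) (N + 1), (-1 : ℤ) ^ (h - k) * ((h - 1).choose (k - 1)) * (M.choose h)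
      = ∑ h ∈ Finset.Ico k (N + 1), (-1 : ℤ) ^ (h - k) * ((h - 1).choose (k - 1)) * (M.choose h) :=
    Finset.sum_Ico_consecutive _ (by omega) (by have := le_max_right M n; omega)
  rw [← Finset.Ico_add_one_right_eq_Icc] at hfull
  have htail : ∑ h ∈ Finset.Ico (n + 1) (N + 1), (-1 : ℤ) ^ (h - k) * ((h - 1).choose (k - 1)) * (M.choose h)
      = (-1) ^ (n + 1 - k) * T M k (n + 1) := by
    rw [Finset.Ico_add_one_right_eq_Icc, ← T_stable M k (n + 1) N (le_max_left _ _), Finset.mul_sum]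
    refine Finset.sum_congr rfl fun h hh => ?_
    have hh' : n + 1 ≤ h ∧ h ≤ N := Finset.mem_Icc.mp hh
    have : (-1 : ℤ) ^ (h - k) = (-1) ^ (n + 1 - k) * (-1) ^ (h - (n + 1)) := by
      rw [← pow_add]; congr 1; omega
    rw [this]; ring
  rw [htail, hfull] at hsplit
  rw [Finset.Ico_add_one_right_eq_Icc] at hsplit
  linarith

end SchmidtAux

theorem schmidt_sieve_lower (k M β : ℕ) (τ : ℕ → ℝ)
    (hk : 1 ≤ k) (hkM : k ≤ M) (hkβ : k ≤ β) (heven : Even (β - k))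
    (hrange : ∀ h, k - 1 ≤ h → h ≤ β → τ h ∈ Set.Icc (0 : ℝ) 1)
    (hup : ∀ t : ℕ, k + 2 * t ≤ β → τ (k + 2 * t - 1) ≤ τ (k + 2 * t))
    (hdown : ∀ t : ℕ, k + 2 * t + 1 ≤ β → τ (k + 2 * t + 1) ≤ τ (k + 2 * t)) :
    τ (k - 1) ≤ ∑ h ∈ Finset.Icc k β,
      (-1 : ℝ) ^ (h - k) * ((h - 1).choose (k - 1)) * (M.choose h) * τ h := by
  -- integer partial coefficient sums
  set Bz : ℕ → ℤ := fun n =>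
    ∑ h ∈ Finset.Icc k n, (-1 : ℤ) ^ (h - k) * ((h - 1).choose (k - 1)) * (M.choose h) with hBz
  have Bge : ∀ n, k ≤ n → Even (n - k) → (1 : ℤ) ≤ Bz n := by
    intro n hn he
    simp only [hBz]
    rw [SchmidtAux.B_eq M k n hk hkM hn]
    have hodd : Odd (n + 1 - k) := by
      obtain ⟨t, ht⟩ := he
      exact ⟨t, by omega⟩
    rw [hodd.neg_one_pow]
    have := SchmidtAux.T_nonneg M k (n + 1) hk (by omega)
    omega
  have Ble : ∀ n, k ≤ n → ¬ Even (n - k) → Bz n ≤ 1 := by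
    intro n hn he
    simp only [hBz]
    rw [SchmidtAux.B_eq M k n hk hkM hn]
    have heve : Even (n + 1 - k) := by
      rcases Nat.even_or_odd (n - k) with h | h
      · exact absurd h he
      · obtain ⟨t, ht⟩ := h
        exact ⟨t + 1, by omega⟩
    rw [heve.neg_one_pow]
    have := SchmidtAux.T_nonneg M k (n + 1) hk (by omega)
    omega
  -- Abel-style induction
  have aux : ∀ d, k + d ≤ β →
      τ k - τ (k + d) + (Bz (k + d) : ℝ) * τ (k + d) ≤
        ∑ h ∈ Finset.Icc k (k + d), (-1 : ℝ) ^ (h - k) * ((h - 1).choose (k - 1)) * (M.choose h) * τ h := by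
    intro d
    induction d with
    | zero =>
      intro _
      simp only [Nat.add_zero, hBz, Finset.Icc_self, Finset.sum_singleton, Nat.sub_self,
        pow_zero, Nat.choose_self]
      push_cast
      ring_nf
      exact le_rfl
    | succ d ih =>
      intro hle
      have hIH := ih (by omega)
      have hsum : ∑ h ∈ Finset.Icc k (k + (d + 1)), (-1 : ℝ) ^ (h - k) * ((h - 1).choose (k - 1)) * (M.choose h) * τ h
          = (∑ h ∈ Finset.Icc k (k + d), (-1 : ℝ) ^ (h - k) * ((h - 1).choose (k - 1)) * (M.choose h) * τ h)
            + (-1 : ℝ) ^ (k + d + 1 - k) * ((k + d + 1 - 1).choose (k - 1)) * (M.choose (k + d + 1)) * τ (k + d + 1) := by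
      -- reduce k + (d+1) to (k+d)+1
        have : k + (d + 1) = (k + d) + 1 := by omega
        rw [this, Finset.sum_Icc_succ_top (by omega)]
      have hBstep : Bz (k + (d + 1)) = Bz (k + d)
          + (-1 : ℤ) ^ (k + d + 1 - k) * ((k + d + 1 - 1).choose (k - 1)) * (M.choose (k + d + 1)) := by
        have e : k + (d + 1) = (k + d) + 1 := by omega
        simp only [hBz, e]
        rw [Finset.sum_Icc_succ_top (by omega)]
      -- key sign product
      have hkey : 0 ≤ ((Bz (k + d) : ℝ) - 1) * (τ (k + d) - τ (k + d + 1)) := by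
        rcases Nat.even_or_odd d with hde | hdo
        · obtain ⟨t, ht⟩ := hde
          have hB : (1 : ℤ) ≤ Bz (k + d) := Bge (k + d) (by omega) (by rw [Nat.add_sub_cancel_left]; exact ⟨t, ht⟩)
          have hτ : τ (k + d + 1) ≤ τ (k + d) := by
            have := hdown t (by omega)
            have e1 : k + 2 * t = k + d := by omega
            rwa [e1] at this
          have hB' : (1 : ℝ) ≤ (Bz (k + d) : ℝ) := by exact_mod_cast hB
          have := mul_nonneg (by linarith : (0:ℝ) ≤ (Bz (k+d) : ℝ) - 1) (by linarith : (0:ℝ) ≤ τ (k+d) - τ (k+d+1))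
          linarith
        · obtain ⟨t, ht⟩ := hdo
          have hB : Bz (k + d) ≤ 1 := Ble (k + d) (by omega)
            (by rw [Nat.add_sub_cancel_left]; rw [ht]; simp [Nat.even_add_one, parity_simps])
          have hτ : τ (k + d) ≤ τ (k + d + 1) := by
            have := hup (t + 1) (by omega)
            have e1 : k + 2 * (t + 1) - 1 = k + d := by omega
            have e2 : k + 2 * (t + 1) = k + d + 1 := by omega
            rwa [e1, e2] at this
          have hB' : (Bz (k + d) : ℝ) ≤ 1 := by exact_mod_cast hB
          have := mul_nonneg (by linarith : (0:ℝ) ≤ 1 - (Bz (k+d) : ℝ)) (by linarith : (0:ℝ) ≤ τ (k+d+1) - τ (k+d))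
          nlinarith
      rw [hsum]
      have hcast : ((Bz (k + (d + 1)) : ℤ) : ℝ) = (Bz (k + d) : ℝ)
          + (-1 : ℝ) ^ (k + d + 1 - k) * ((k + d + 1 - 1).choose (k - 1)) * (M.choose (k + d + 1)) := by
        rw [hBstep]; push_cast; ring
      have e3 : k + (d + 1) = k + d + 1 := by omega
      rw [e3] at hcast
      rw [e3, hcast]
      nlinarith [hIH, hkey]
  -- final assembly
  have hfin := aux (β - k) (by omega)
  have e4 : k + (β - k) = β := by omega
  rw [e4] at hfin
  have hBβ : (1 : ℝ) ≤ (Bz β : ℝ) := by exact_mod_cast Bge β hkβ heven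
  have hτβ : 0 ≤ τ β := (hrange β (by omega) le_rfl).1
  have hτk : τ (k - 1) ≤ τ k := by
    have := hup 0 (by omega)
    simpa using this
  have hprod : 0 ≤ ((Bz β : ℝ) - 1) * τ β := mul_nonneg (by linarith) hτβ
  have hgoal : ∑ h ∈ Finset.Icc k β, (-1 : ℝ) ^ (h - k) * ((h - 1).choose (k - 1)) * (M.choose h) * τ h
      = ∑ h ∈ Finset.Icc k β, (-1 : ℝ) ^ (h - k) * ((h - 1).choose (k - 1)) * (M.choose h) * τ h := rfl
  nlinarith [hfin, hprod, hτk]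
end
end

section
/- Let P be a finite set of cardinality M ≥ 1. For each i = 1, ..., M let A_i be a collection of i-element subsets of P such that if E ∈ A_i and p ∈ E then E \ {p} ∈ A_{i-1}, and let A'_i be a collection of i-element subsets of P such that if F ∈ A_{i-1} and p ∈ P \ F then F ∪ {p} ∈ A'_i. Define σ_i and τ_i by σ_i · C(M,i) = |A_i| if i is odd and = |A'_i| if i is even, and τ_i · C(M,i) = |A_i| if i is even and = |A'_i| if i is odd. Then σ_1 ≤ σ_2 ≥ σ_3 ≤ σ_4 ≥ ... and τ_1 ≥ τ_2 ≤ τ_3 ≥ τ_4 ≤ ... (i.e., σ_{2t-1} ≤ σ_{2t} and σ_{2t} ≥ σ_{2t+1}, and τ_{2t-1} ≥ τ_{2t} and τ_{2t} ≤ τ_{2t+1}, for all t ≥ 1 with indices at most M). -/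
open MeasureTheory Matrix Metric
open scoped Classical

noncomputable section

theorem alternating_proportions {γ : Type*} [DecidableEq γ]
    (P : Finset γ) (M : ℕ) (hPM : P.card = M) (hM : 1 ≤ M)
    (A A' : ℕ → Finset (Finset γ))
    (hAsub : ∀ i, i ≤ M → ∀ E ∈ A i, E ⊆ P ∧ E.card = i)
    (hA'sub : ∀ i, i ≤ M → ∀ E ∈ A' i, E ⊆ P ∧ E.card = i)
    (hAdown : ∀ i, 1 ≤ i → i ≤ M → ∀ E ∈ A i, ∀ p ∈ E, E.erase p ∈ A (i - 1))
    (hA'up : ∀ i, 1 ≤ i → i ≤ M → ∀ F ∈ A (i - 1), ∀ p ∈ P, p ∉ F → insert p F ∈ A' i)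
    (σ τ : ℕ → ℝ)
    (hσ : ∀ i, 1 ≤ i → i ≤ M →
      σ i * (M.choose i) = if Odd i then ((A i).card : ℝ) else ((A' i).card : ℝ))
    (hτ : ∀ i, 1 ≤ i → i ≤ M →
      τ i * (M.choose i) = if Even i then ((A i).card : ℝ) else ((A' i).card : ℝ)) :
    ∀ t : ℕ, 1 ≤ t →
      (2 * t ≤ M → σ (2 * t - 1) ≤ σ (2 * t) ∧ τ (2 * t) ≤ τ (2 * t - 1)) ∧
      (2 * t + 1 ≤ M → σ (2 * t + 1) ≤ σ (2 * t) ∧ τ (2 * t) ≤ τ (2 * t + 1)) := by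
  -- Double counting: downward
  have L1 : ∀ i, 1 ≤ i → i ≤ M →
      (A i).card * i ≤ (A (i - 1)).card * (M - (i - 1)) := by
    intro i h1 h2
    apply Finset.card_mul_le_card_mul (fun E F => F ⊆ E)
    · intro E hE
      obtain ⟨hEP, hEc⟩ := hAsub i h2 E hE
      have himg : E.image (E.erase ·) ⊆ (A (i - 1)).bipartiteAbove (fun E F => F ⊆ E) E := by
        intro F hF
        simp only [Finset.mem_image] at hF
        obtain ⟨p, hp, rfl⟩ := hF
        exact (Finset.mem_bipartiteAbove _).mpr
          ⟨hAdown i h1 h2 E hE p hp, Finset.erase_subset _ _⟩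
      calc i = (E.image (E.erase ·)).card := by
                rw [Finset.card_image_of_injOn, hEc]
                intro p hp q hq h
                have h' : E.erase p = E.erase q := h
                by_contra hne
                have hq' : q ∈ E.erase p := Finset.mem_erase.mpr ⟨Ne.symm hne, hq⟩
                rw [h'] at hq'
                exact (Finset.mem_erase.mp hq').1 rfl
        _ ≤ _ := Finset.card_le_card himg
    · intro F hF
      obtain ⟨hFP, hFc⟩ := hAsub (i - 1) (le_trans (Nat.sub_le _ _) h2) F hF
      have hsub : (A i).bipartiteBelow (fun E F => F ⊆ E) F ⊆
          (P \ F).image (fun p => insert p F) := by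
        intro E hE
        obtain ⟨hEA, hFE⟩ := (Finset.mem_bipartiteBelow _).mp hE
        obtain ⟨hEP, hEc⟩ := hAsub i h2 E hEA
        have hcard : (E \ F).card = 1 := by
          rw [Finset.card_sdiff_of_subset hFE, hEc, hFc]; omega
        obtain ⟨p, hp⟩ := Finset.card_eq_one.mp hcard
        have hpEF : p ∈ E \ F := hp ▸ Finset.mem_singleton_self p
        refine Finset.mem_image.mpr ⟨p, ?_, ?_⟩
        · exact Finset.mem_sdiff.mpr
            ⟨hEP (Finset.mem_sdiff.mp hpEF).1, (Finset.mem_sdiff.mp hpEF).2⟩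
        · have h := Finset.sdiff_union_of_subset hFE
          rw [hp] at h
          rwa [← Finset.insert_eq] at h
      calc ((A i).bipartiteBelow (fun E F => F ⊆ E) F).card
          ≤ ((P \ F).image (fun p => insert p F)).card := Finset.card_le_card hsub
        _ ≤ (P \ F).card := Finset.card_image_le
        _ = M - (i - 1) := by rw [Finset.card_sdiff_of_subset hFP, hPM, hFc]
  -- Double counting: upward
  have L2 : ∀ i, 1 ≤ i → i ≤ M →
      (A (i - 1)).card * (M - (i - 1)) ≤ (A' i).card * i := by
    intro i h1 h2
    apply Finset.card_mul_le_card_mul (fun F E => F ⊆ E)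
    · intro F hF
      obtain ⟨hFP, hFc⟩ := hAsub (i - 1) (le_trans (Nat.sub_le _ _) h2) F hF
      have himg : (P \ F).image (fun p => insert p F) ⊆
          (A' i).bipartiteAbove (fun F E => F ⊆ E) F := by
        intro E hE
        simp only [Finset.mem_image] at hE
        obtain ⟨p, hp, rfl⟩ := hE
        obtain ⟨hpP, hpF⟩ := Finset.mem_sdiff.mp hp
        exact (Finset.mem_bipartiteAbove _).mpr
          ⟨hA'up i h1 h2 F hF p hpP hpF, Finset.subset_insert _ _⟩
      calc M - (i - 1) = (P \ F).card := by rw [Finset.card_sdiff_of_subset hFP, hPM, hFc]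
        _ = ((P \ F).image (fun p => insert p F)).card := by
              rw [Finset.card_image_of_injOn]
              intro p hp q hq h
              have hpF := (Finset.mem_sdiff.mp hp).2
              have h' : insert p F = insert q F := h
              have : p ∈ insert q F := h' ▸ Finset.mem_insert_self p F
              rcases Finset.mem_insert.mp this with h' | h'
              · exact h'
              · exact absurd h' hpF
        _ ≤ _ := Finset.card_le_card himg
    · intro E hE
      obtain ⟨hEP, hEc⟩ := hA'sub i h2 E hE
      have hsub : (A (i - 1)).bipartiteBelow (fun F E => F ⊆ E) E ⊆
          E.image (E.erase ·) := by
        intro F hF'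
        obtain ⟨hFA, hFE⟩ := (Finset.mem_bipartiteBelow _).mp hF'
        obtain ⟨hFP, hFc⟩ := hAsub (i - 1) (le_trans (Nat.sub_le _ _) h2) F hFA
        have hcard : (E \ F).card = 1 := by
          rw [Finset.card_sdiff_of_subset hFE, hEc, hFc]; omega
        obtain ⟨p, hp⟩ := Finset.card_eq_one.mp hcard
        have hpEF : p ∈ E \ F := hp ▸ Finset.mem_singleton_self p
        refine Finset.mem_image.mpr ⟨p, (Finset.mem_sdiff.mp hpEF).1, ?_⟩
        have h := Finset.sdiff_sdiff_eq_self hFE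
        rw [hp, ← Finset.erase_eq] at h
        exact h
      calc ((A (i - 1)).bipartiteBelow (fun F E => F ⊆ E) E).card
          ≤ (E.image (E.erase ·)).card := Finset.card_le_card hsub
        _ ≤ E.card := Finset.card_image_le
        _ = i := hEc
  -- A j ⊆ A' j
  have L3 : ∀ j, 1 ≤ j → j ≤ M → (A j).card ≤ (A' j).card := by
    intro j h1 h2
    apply Finset.card_le_card
    intro E hE
    obtain ⟨hEP, hEc⟩ := hAsub j h2 E hE
    have hne : E.Nonempty := Finset.card_pos.mp (by omega)
    obtain ⟨p, hp⟩ := hne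
    have hF := hAdown j h1 h2 E hE p hp
    have := hA'up j h1 h2 (E.erase p) hF p (hEP hp) (Finset.notMem_erase p E)
    rwa [Finset.insert_erase hp] at this
  -- choose identity
  have hid : ∀ i, 1 ≤ i → M.choose i * i = M.choose (i - 1) * (M - (i - 1)) := by
    intro i h1
    have h := Nat.choose_succ_right_eq M (i - 1)
    rwa [Nat.sub_add_cancel h1] at h
  have N1 : ∀ i, 1 ≤ i → i ≤ M →
      (A i).card * M.choose (i - 1) ≤ (A (i - 1)).card * M.choose i := by
    intro i h1 h2
    apply Nat.le_of_mul_le_mul_right _ (h1 : 0 < i)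
    calc (A i).card * M.choose (i - 1) * i = (A i).card * i * M.choose (i - 1) := by ring
      _ ≤ (A (i - 1)).card * (M - (i - 1)) * M.choose (i - 1) :=
          Nat.mul_le_mul_right _ (L1 i h1 h2)
      _ = (A (i - 1)).card * (M.choose (i - 1) * (M - (i - 1))) := by ring
      _ = (A (i - 1)).card * (M.choose i * i) := by rw [← hid i h1]
      _ = (A (i - 1)).card * M.choose i * i := by ring
  have N2 : ∀ i, 1 ≤ i → i ≤ M →
      (A (i - 1)).card * M.choose i ≤ (A' i).card * M.choose (i - 1) := by
    intro i h1 h2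
    apply Nat.le_of_mul_le_mul_right _ (h1 : 0 < i)
    calc (A (i - 1)).card * M.choose i * i = (A (i - 1)).card * (M.choose i * i) := by ring
      _ = (A (i - 1)).card * (M.choose (i - 1) * (M - (i - 1))) := by rw [hid i h1]
      _ = (A (i - 1)).card * (M - (i - 1)) * M.choose (i - 1) := by ring
      _ ≤ (A' i).card * i * M.choose (i - 1) := Nat.mul_le_mul_right _ (L2 i h1 h2)
      _ = (A' i).card * M.choose (i - 1) * i := by ring
  -- Real comparison helper
  have key : ∀ (x y : ℝ) (X Y ca cb : ℕ), 0 < ca → 0 < cb →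
      x * ca = X → y * cb = Y → X * cb ≤ Y * ca → x ≤ y := by
    intro x y X Y ca cb hca hcb hx hy h
    have hca' : (0 : ℝ) < ca := by exact_mod_cast hca
    have hcb' : (0 : ℝ) < cb := by exact_mod_cast hcb
    have hx' : x = X / ca := by rw [eq_div_iff hca'.ne']; exact hx
    have hy' : y = Y / cb := by rw [eq_div_iff hcb'.ne']; exact hy
    rw [hx', hy', div_le_div_iff₀ hca' hcb']
    exact_mod_cast h
  intro t ht
  constructor
  · intro hle
    have h1 : 1 ≤ 2 * t := by omega
    have h1' : 1 ≤ 2 * t - 1 := by omega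
    have h2' : 2 * t - 1 ≤ M := by omega
    have cpos : 0 < M.choose (2 * t) := Nat.choose_pos hle
    have cpos' : 0 < M.choose (2 * t - 1) := Nat.choose_pos h2'
    have hσa := hσ (2 * t - 1) h1' h2'
    have hσb := hσ (2 * t) h1 hle
    have hτa := hτ (2 * t - 1) h1' h2'
    have hτb := hτ (2 * t) h1 hle
    rw [if_pos (Nat.odd_iff.mpr (by omega))] at hσa
    rw [if_neg (by rw [Nat.odd_iff]; omega)] at hσb
    rw [if_neg (by rw [Nat.even_iff]; omega)] at hτa
    rw [if_pos (Nat.even_iff.mpr (by omega))] at hτb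
    constructor
    · exact key _ _ _ _ _ _ cpos' cpos hσa hσb (N2 (2 * t) h1 hle)
    · refine key _ _ _ _ _ _ cpos cpos' hτb hτa ?_
      calc (A (2 * t)).card * M.choose (2 * t - 1)
          ≤ (A (2 * t - 1)).card * M.choose (2 * t) := N1 (2 * t) h1 hle
        _ ≤ (A' (2 * t - 1)).card * M.choose (2 * t) :=
            Nat.mul_le_mul_right _ (L3 (2 * t - 1) h1' h2')
  · intro hle
    have h1 : 1 ≤ 2 * t + 1 := by omega
    have h2 : 2 * t ≤ M := by omega
    have h1'' : 1 ≤ 2 * t := by omega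
    have cpos : 0 < M.choose (2 * t) := Nat.choose_pos h2
    have cpos' : 0 < M.choose (2 * t + 1) := Nat.choose_pos hle
    have hσa := hσ (2 * t + 1) h1 hle
    have hσb := hσ (2 * t) h1'' h2
    have hτa := hτ (2 * t + 1) h1 hle
    have hτb := hτ (2 * t) h1'' h2
    rw [if_pos (Nat.odd_iff.mpr (by omega))] at hσa
    rw [if_neg (by rw [Nat.odd_iff]; omega)] at hσb
    rw [if_neg (by rw [Nat.even_iff]; omega)] at hτa
    rw [if_pos (Nat.even_iff.mpr (by omega))] at hτb
    have hN1 := N1 (2 * t + 1) h1 hle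
    have hN2 := N2 (2 * t + 1) h1 hle
    simp only [Nat.add_sub_cancel] at hN1 hN2
    constructor
    · refine key _ _ _ _ _ _ cpos' cpos hσa hσb ?_
      calc (A (2 * t + 1)).card * M.choose (2 * t)
          ≤ (A (2 * t)).card * M.choose (2 * t + 1) := hN1
        _ ≤ (A' (2 * t)).card * M.choose (2 * t + 1) :=
            Nat.mul_le_mul_right _ (L3 (2 * t) h1'' h2)
    · exact key _ _ _ _ _ _ cpos cpos' hτb hτa hN2
end
end

section
/- Let P be a finite set of cardinality M ≥ 1. For each i = 1, ..., M let A_i be a collection of i-element subsets of P such that if E ∈ A_i and p ∈ E then E \ {p} ∈ A_{i-1}, and let A'_i be a collection of i-element subsets of P such that if F ∈ A_{i-1} and p ∈ P \ F then F ∪ {p} ∈ A'_i. Define a_i and a'_i by a_i · C(M,i) = |A_i| and a'_i · C(M,i) = |A'_i|. Then for every i with 1 ≤ i < M, one has a_i ≤ a'_{i+1} and a'_i ≥ a_{i+1}. -/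
open MeasureTheory Matrix Metric
open scoped Classical

noncomputable section

private lemma dc_aux {γ : Type*} [DecidableEq γ] (𝒜 ℬ : Finset (Finset γ))
    (rel : Finset γ → Finset γ → Prop) [∀ E F, Decidable (rel E F)] (m n : ℕ)
    (h1 : ∀ E ∈ 𝒜, m ≤ (ℬ.filter (fun F => rel E F)).card)
    (h2 : ∀ F ∈ ℬ, (𝒜.filter (fun E => rel E F)).card ≤ n) :
    m * 𝒜.card ≤ n * ℬ.card := by
  calc m * 𝒜.card = ∑ _E ∈ 𝒜, m := by rw [Finset.sum_const, smul_eq_mul, mul_comm]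
    _ ≤ ∑ E ∈ 𝒜, (ℬ.filter (fun F => rel E F)).card := Finset.sum_le_sum h1
    _ = ∑ E ∈ 𝒜, ∑ F ∈ ℬ, if rel E F then 1 else 0 := by
        refine Finset.sum_congr rfl fun E _ => Finset.card_filter _ _
    _ = ∑ F ∈ ℬ, ∑ E ∈ 𝒜, if rel E F then 1 else 0 := Finset.sum_comm
    _ = ∑ F ∈ ℬ, (𝒜.filter (fun E => rel E F)).card := by
        refine Finset.sum_congr rfl fun F _ => (Finset.card_filter _ _).symm
    _ ≤ ∑ _F ∈ ℬ, n := Finset.sum_le_sum h2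
    _ = n * ℬ.card := by rw [Finset.sum_const, smul_eq_mul, mul_comm]

theorem alternating_proportions_step {γ : Type*} [DecidableEq γ]
    (P : Finset γ) (M : ℕ) (hPM : P.card = M) (hM : 1 ≤ M)
    (A A' : ℕ → Finset (Finset γ))
    (hAsub : ∀ i, i ≤ M → ∀ E ∈ A i, E ⊆ P ∧ E.card = i)
    (hA'sub : ∀ i, i ≤ M → ∀ E ∈ A' i, E ⊆ P ∧ E.card = i)
    (hAdown : ∀ i, 1 ≤ i → i ≤ M → ∀ E ∈ A i, ∀ p ∈ E, E.erase p ∈ A (i - 1))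
    (hA'up : ∀ i, 1 ≤ i → i ≤ M → ∀ F ∈ A (i - 1), ∀ p ∈ P, p ∉ F → insert p F ∈ A' i)
    (a a' : ℕ → ℝ)
    (ha : ∀ i, 1 ≤ i → i ≤ M → a i * (M.choose i) = ((A i).card : ℝ))
    (ha' : ∀ i, 1 ≤ i → i ≤ M → a' i * (M.choose i) = ((A' i).card : ℝ)) :
    ∀ i, 1 ≤ i → i < M → a i ≤ a' (i + 1) ∧ a (i + 1) ≤ a' i := by
  intro i hi1 hiM
  have hiM' : i ≤ M := hiM.le
  have hi1M : i + 1 ≤ M := hiM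
  -- key choose identity
  have hchoose : M.choose (i + 1) * (i + 1) = M.choose i * (M - i) :=
    Nat.choose_succ_right_eq M i
  have hcpos : 0 < (M.choose i : ℝ) := by
    exact_mod_cast Nat.choose_pos hiM'
  have hMipos : 0 < ((M - i : ℕ) : ℝ) := by
    have : 0 < M - i := Nat.sub_pos_of_lt hiM
    exact_mod_cast this
  constructor
  · -- a i ≤ a' (i+1)
    have key : (M - i) * (A i).card ≤ (i + 1) * (A' (i + 1)).card := by
      apply dc_aux (A i) (A' (i + 1)) (fun E F => E ⊆ F)
      · intro E hE
        obtain ⟨hEP, hEc⟩ := hAsub i hiM' E hE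
        have himg : (P \ E).image (fun p => insert p E) ⊆
            (A' (i + 1)).filter (fun F => E ⊆ F) := by
          intro F hF
          simp only [Finset.mem_image] at hF
          obtain ⟨p, hp, rfl⟩ := hF
          rw [Finset.mem_sdiff] at hp
          refine Finset.mem_filter.mpr ⟨?_, Finset.subset_insert _ _⟩
          have := hA'up (i + 1) (Nat.le_add_left 1 i) hi1M E (by simpa using hE) p hp.1 hp.2
          simpa using this
        have hle := Finset.card_le_card himg
        have hinj : Set.InjOn (fun p => insert p E) (↑(P \ E) : Set γ) := by
          intro p hp q hq hpq
          simp only [Finset.coe_sdiff, Set.mem_diff, Finset.mem_coe] at hp hq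
          have hpq' : insert p E = insert q E := hpq
          have : p ∈ insert q E := hpq' ▸ Finset.mem_insert_self p E
          rcases Finset.mem_insert.mp this with h | h
          · exact h
          · exact absurd h hp.2
        have hcard : ((P \ E).image (fun p => insert p E)).card = M - i := by
          rw [Finset.card_image_of_injOn hinj, Finset.card_sdiff_of_subset hEP, hPM, hEc]
        exact le_trans hcard.symm.le hle
      · intro F hF
        obtain ⟨hFP, hFc⟩ := hA'sub (i + 1) hi1M F hF
        have himg : (A i).filter (fun E => E ⊆ F) ⊆ F.image (fun p => F.erase p) := by
          intro E hE
          rw [Finset.mem_filter] at hE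
          obtain ⟨hEA, hEF⟩ := hE
          obtain ⟨_, hEc⟩ := hAsub i hiM' E hEA
          have hne : (F \ E).Nonempty := by
            rw [← Finset.card_pos, Finset.card_sdiff_of_subset hEF, hFc, hEc]
            omega
          obtain ⟨p, hp⟩ := hne
          rw [Finset.mem_sdiff] at hp
          refine Finset.mem_image.mpr ⟨p, hp.1, ?_⟩
          have hsub : E ⊆ F.erase p := fun x hx =>
            Finset.mem_erase.mpr ⟨fun h => hp.2 (h ▸ hx), hEF hx⟩
          exact (Finset.eq_of_subset_of_card_le hsub
            (by rw [Finset.card_erase_of_mem hp.1, hFc, hEc]; omega)).symm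
        calc ((A i).filter (fun E => E ⊆ F)).card ≤ (F.image (fun p => F.erase p)).card :=
              Finset.card_le_card himg
          _ ≤ F.card := Finset.card_image_le
          _ = i + 1 := hFc
    have h1 := ha i hi1 hiM'
    have h2 := ha' (i + 1) (Nat.le_add_left 1 i) hi1M
    have keyR : ((M - i : ℕ) : ℝ) * (a i * M.choose i) ≤
        ((i + 1 : ℕ) : ℝ) * (a' (i + 1) * M.choose (i + 1)) := by
      rw [h1, h2]; exact_mod_cast key
    have hchR : ((M.choose (i + 1) : ℕ) : ℝ) * ((i + 1 : ℕ) : ℝ) =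
        ((M.choose i : ℕ) : ℝ) * ((M - i : ℕ) : ℝ) := by exact_mod_cast hchoose
    have h3 : a i * (((M - i : ℕ) : ℝ) * (M.choose i)) ≤
        a' (i + 1) * (((M - i : ℕ) : ℝ) * (M.choose i)) := by
      calc a i * (((M - i : ℕ) : ℝ) * (M.choose i))
          = ((M - i : ℕ) : ℝ) * (a i * M.choose i) := by ring
        _ ≤ ((i + 1 : ℕ) : ℝ) * (a' (i + 1) * M.choose (i + 1)) := keyR
        _ = a' (i + 1) * ((M.choose (i + 1) : ℝ) * ((i + 1 : ℕ) : ℝ)) := by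
            push_cast; ring
        _ = a' (i + 1) * ((M.choose i : ℝ) * ((M - i : ℕ) : ℝ)) := by rw [hchR]
        _ = a' (i + 1) * (((M - i : ℕ) : ℝ) * (M.choose i)) := by ring
    exact le_of_mul_le_mul_right h3 (mul_pos hMipos hcpos)
  · -- a (i+1) ≤ a' i
    have herase : ∀ E ∈ A (i + 1), ∀ p ∈ E, E.erase p ∈ A' i := by
      intro E hE p hp
      have hS : E.erase p ∈ A i := by
        have := hAdown (i + 1) (Nat.le_add_left 1 i) hi1M E hE p hp
        simpa using this
      obtain ⟨hSP, hSc⟩ := hAsub i hiM' _ hS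
      have hne : (E.erase p).Nonempty := by rw [← Finset.card_pos, hSc]; omega
      obtain ⟨q, hq⟩ := hne
      have h1 := hAdown i hi1 hiM' _ hS q hq
      have h2 := hA'up i hi1 hiM' _ h1 q (hSP hq) (Finset.notMem_erase q _)
      rwa [Finset.insert_erase hq] at h2
    have key : (i + 1) * (A (i + 1)).card ≤ (M - i) * (A' i).card := by
      apply dc_aux (A (i + 1)) (A' i) (fun E F => F ⊆ E)
      · intro E hE
        obtain ⟨hEP, hEc⟩ := hAsub (i + 1) hi1M E hE
        have himg : E.image (fun p => E.erase p) ⊆ (A' i).filter (fun F => F ⊆ E) := by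
          intro F hF
          simp only [Finset.mem_image] at hF
          obtain ⟨p, hp, rfl⟩ := hF
          exact Finset.mem_filter.mpr ⟨herase E hE p hp, Finset.erase_subset _ _⟩
        have hle := Finset.card_le_card himg
        have hinj : Set.InjOn (fun p => E.erase p) (↑E : Set γ) := by
          intro p hp q hq hpq
          simp only [Finset.mem_coe] at hp hq
          have hpq' : E.erase p = E.erase q := hpq
          by_contra hne
          have : p ∈ E.erase p := by
            rw [hpq']; exact Finset.mem_erase.mpr ⟨hne, hp⟩
          exact Finset.notMem_erase p E this
        have hcard : (E.image (fun p => E.erase p)).card = i + 1 := by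
          rw [Finset.card_image_of_injOn hinj, hEc]
        exact le_trans hcard.symm.le hle
      · intro F hF
        obtain ⟨hFP, hFc⟩ := hA'sub i hiM' F hF
        have himg : (A (i + 1)).filter (fun E => F ⊆ E) ⊆
            (P \ F).image (fun p => insert p F) := by
          intro E hE
          rw [Finset.mem_filter] at hE
          obtain ⟨hEA, hFE⟩ := hE
          obtain ⟨hEP, hEc⟩ := hAsub (i + 1) hi1M E hEA
          have hne : (E \ F).Nonempty := by
            rw [← Finset.card_pos, Finset.card_sdiff_of_subset hFE, hEc, hFc]; omega
          obtain ⟨p, hp⟩ := hne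
          rw [Finset.mem_sdiff] at hp
          refine Finset.mem_image.mpr ⟨p, Finset.mem_sdiff.mpr ⟨hEP hp.1, hp.2⟩, ?_⟩
          exact Finset.eq_of_subset_of_card_le (Finset.insert_subset hp.1 hFE)
            (by rw [hEc, Finset.card_insert_of_notMem hp.2, hFc])
        calc ((A (i + 1)).filter (fun E => F ⊆ E)).card
            ≤ ((P \ F).image (fun p => insert p F)).card := Finset.card_le_card himg
          _ ≤ (P \ F).card := Finset.card_image_le
          _ = M - i := by rw [Finset.card_sdiff_of_subset hFP, hPM, hFc]
    have h1 := ha (i + 1) (Nat.le_add_left 1 i) hi1M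
    have h2 := ha' i hi1 hiM'
    have keyR : ((i + 1 : ℕ) : ℝ) * (a (i + 1) * M.choose (i + 1)) ≤
        ((M - i : ℕ) : ℝ) * (a' i * M.choose i) := by
      rw [h1, h2]; exact_mod_cast key
    have hchR : ((M.choose (i + 1) : ℕ) : ℝ) * ((i + 1 : ℕ) : ℝ) =
        ((M.choose i : ℕ) : ℝ) * ((M - i : ℕ) : ℝ) := by exact_mod_cast hchoose
    have h3 : a (i + 1) * (((M - i : ℕ) : ℝ) * (M.choose i)) ≤
        a' i * (((M - i : ℕ) : ℝ) * (M.choose i)) := by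
      calc a (i + 1) * (((M - i : ℕ) : ℝ) * (M.choose i))
          = a (i + 1) * ((M.choose (i + 1) : ℝ) * ((i + 1 : ℕ) : ℝ)) := by rw [hchR]; ring
        _ = ((i + 1 : ℕ) : ℝ) * (a (i + 1) * M.choose (i + 1)) := by ring
        _ ≤ ((M - i : ℕ) : ℝ) * (a' i * M.choose i) := keyR
        _ = a' i * (((M - i : ℕ) : ℝ) * (M.choose i)) := by ring
    exact le_of_mul_le_mul_right h3 (mul_pos hMipos hcpos)
end
end

section
/- Let λ ≥ 0 be a real number and k ≥ 1 an integer. Then e^{-λ} · Σ_{j=k}^∞ λ^j / j! = Σ_{h=k}^∞ (-1)^{h-k} · C(h-1, k-1) · λ^h / h!, and the series on the right-hand side converges absolutely. -/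
open MeasureTheory Matrix Metric
open scoped Classical

noncomputable section

set_option maxRecDepth 8000

lemma alt_partial_sum (n : ℕ) (hn : 1 ≤ n) (m : ℕ) :
    ∑ i ∈ Finset.range (m + 1), (-1 : ℝ) ^ i * (n.choose i) =
      (-1) ^ m * ((n - 1).choose m) := by
  obtain ⟨p, rfl⟩ : ∃ p, n = p + 1 := ⟨n - 1, (Nat.succ_pred_eq_of_pos hn).symm⟩
  induction m with
  | zero => simp
  | succ m ih =>
    rw [Finset.sum_range_succ, ih, Nat.choose_succ_succ]
    simp only [Nat.add_sub_cancel]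
    push_cast
    ring

theorem poisson_tail_alternating_series (lam : ℝ) (hlam : 0 ≤ lam) (k : ℕ) (hk : 1 ≤ k) :
    (Summable fun h : ℕ =>
      |if k ≤ h then (-1 : ℝ) ^ (h - k) * ((h - 1).choose (k - 1)) * lam ^ h /
        (Nat.factorial h) else 0|) ∧
    Real.exp (-lam) * (∑' j : ℕ, if k ≤ j then lam ^ j / (Nat.factorial j) else 0) =
      ∑' h : ℕ, if k ≤ h then (-1 : ℝ) ^ (h - k) * ((h - 1).choose (k - 1)) * lam ^ h /
        (Nat.factorial h) else 0 := by
  set a : ℕ → ℝ := fun i => (-lam) ^ i / i.factorial with ha_def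
  set b : ℕ → ℝ := fun j => if k ≤ j then lam ^ j / j.factorial else 0 with hb_def
  set r : ℕ → ℝ := fun h => if k ≤ h then
      (-1 : ℝ) ^ (h - k) * ((h - 1).choose (k - 1)) * lam ^ h / h.factorial else 0 with hr_def
  have ha : Summable fun i => ‖a i‖ := by
    refine (Real.summable_pow_div_factorial |lam|).congr fun i => ?_
    simp [ha_def, Real.norm_eq_abs, abs_div, abs_pow, Nat.abs_cast]
  have hb : Summable fun j => ‖b j‖ := by
    refine Summable.of_nonneg_of_le (fun j => norm_nonneg _) (fun j => ?_)
      (Real.summable_pow_div_factorial lam)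
    by_cases h : k ≤ j <;>
      simp [hb_def, h, abs_div, abs_pow, Nat.abs_cast, abs_of_nonneg hlam,
        div_nonneg (pow_nonneg hlam j) (Nat.cast_nonneg j.factorial)]
  -- pointwise identification of Cauchy product terms
  have hpt : ∀ n : ℕ, (∑ kl ∈ Finset.HasAntidiagonal.antidiagonal n, a kl.1 * b kl.2) = r n := by
    intro n
    rw [Finset.Nat.sum_antidiagonal_eq_sum_range_succ_mk]
    by_cases hn : k ≤ n
    · have h1n : 1 ≤ n := le_trans hk hn
      have hsub : Finset.range (n - k + 1) ⊆ Finset.range (n + 1) :=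
        Finset.range_subset_range.2 (by omega)
      have hzero : ∀ i ∈ Finset.range (n + 1), i ∉ Finset.range (n - k + 1) →
          a i * b (n - i) = 0 := by
        intro i hi hni
        simp only [Finset.mem_range] at hi hni
        have : ¬ k ≤ n - i := by omega
        simp [hb_def, this]
      rw [← Finset.sum_subset hsub hzero]
      have hterm : ∀ i ∈ Finset.range (n - k + 1),
          a i * b (n - i) = ((-1 : ℝ) ^ i * (n.choose i)) * (lam ^ n / n.factorial) := by
        intro i hi
        simp only [Finset.mem_range] at hi
        have hik : k ≤ n - i := by omega
        have hin : i ≤ n := by omega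
        have hif : (i.factorial : ℝ) ≠ 0 := Nat.cast_ne_zero.2 i.factorial_ne_zero
        have hnif : ((n - i).factorial : ℝ) ≠ 0 := Nat.cast_ne_zero.2 (n - i).factorial_ne_zero
        have hnf : (n.factorial : ℝ) ≠ 0 := Nat.cast_ne_zero.2 n.factorial_ne_zero
        have hl : lam ^ i * lam ^ (n - i) = lam ^ n := by
          rw [← pow_add]; congr 1; omega
        have hc : (n.choose i : ℝ) = n.factorial / (i.factorial * (n - i).factorial) := by
          rw [eq_div_iff (mul_ne_zero hif hnif), ← mul_assoc]
          exact_mod_cast congrArg Nat.cast (Nat.choose_mul_factorial_mul_factorial hin)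
        have hstep : a i * b (n - i) =
            (-1 : ℝ) ^ i * lam ^ n * (1 / (i.factorial * (n - i).factorial)) := by
          have hbv : b (n - i) = lam ^ (n - i) / (n - i).factorial := by
            simp only [hb_def, if_pos hik]
          have hav : a i = (-1 : ℝ) ^ i * lam ^ i / i.factorial := by
            simp only [ha_def]
            rw [neg_pow]
          rw [hav, hbv, div_mul_div_comm, mul_assoc, hl]
          ring
        rw [hstep, hc]
        field_simp
      rw [Finset.sum_congr rfl hterm, ← Finset.sum_mul, alt_partial_sum n h1n (n - k)]
      have hch : (n - 1).choose (n - k) = (n - 1).choose (k - 1) := by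
        have h2 : n - k = (n - 1) - (k - 1) := by omega
        rw [h2, Nat.choose_symm (by omega)]
      rw [hch]
      simp only [hr_def, if_pos hn]
      ring
    · have hz : ∀ i ∈ Finset.range (n + 1), a i * b (n - i) = 0 := by
        intro i hi
        have : ¬ k ≤ n - i := by omega
        simp [hb_def, this]
      rw [Finset.sum_eq_zero hz]
      simp [hr_def, hn]
  constructor
  · have hs := summable_norm_sum_mul_antidiagonal_of_summable_norm ha hb
    refine hs.congr fun n => ?_
    rw [hpt n, Real.norm_eq_abs]
  · have hexp : Real.exp (-lam) = ∑' i, a i := by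
      rw [Real.exp_eq_exp_ℝ, NormedSpace.exp_eq_tsum_div]
    rw [hexp, tsum_mul_tsum_eq_tsum_sum_antidiagonal_of_summable_norm ha hb]
    exact tsum_congr hpt
end
end

section
/- Let C = 0.05. There exists an integer n_0 such that for all integers n ≥ n_0, the following holds: let α ∈ {n-1, n-2}, let k ≥ 1 be an integer and V > 0 a real number with k ≤ Cα and V ≤ Cα, suppose α - k is odd, and write λ = V/2. Then | Σ_{h=k}^{α} (-1)^{h-k} · C(h-1, k-1) · λ^h / h! - Q(λ, k) | < e^{-n} · Q(λ, k). -/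
open MeasureTheory Matrix Metric
open scoped Classical

noncomputable section

/-- `Qtail λ k` is the upper tail of the Poisson distribution with mean `λ` evaluated at `k`,
i.e. `Q(λ, k) = e^{-λ} Σ_{j ≥ k} λ^j / j!`. -/
def Qtail (l : ℝ) (k : ℕ) : ℝ :=
  Real.exp (-l) * ∑' j : ℕ, if k ≤ j then l ^ j / (Nat.factorial j) else 0

open Finset

lemma altPartial (m κ : ℕ) :
    ∑ j ∈ range (κ + 1), (-1 : ℝ) ^ j * ((m + 1).choose j) = (-1) ^ κ * (m.choose κ) := by
  induction κ with
  | zero => simp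
  | succ κ ih =>
    rw [Finset.sum_range_succ, ih, Nat.choose_succ_succ' (m) (κ)]
    push_cast
    ring

lemma altIcc (m κ : ℕ) (h : κ ≤ m) :
    ∑ j ∈ Icc (κ + 1) (m + 1), (-1 : ℝ) ^ j * ((m + 1).choose j)
      = (-1 : ℝ) ^ (κ + 1) * (m.choose κ) := by
  have hfull : ∑ j ∈ range (m + 2), (-1 : ℝ) ^ j * ((m + 1).choose j) = 0 := by
    have h0 := Int.alternating_sum_range_choose (n := m + 1)
    rw [if_neg (Nat.succ_ne_zero m)] at h0
    have : ((∑ i ∈ range (m + 1 + 1), (-1 : ℤ) ^ i * ((m + 1).choose i) : ℤ) : ℝ) = 0 := by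
      rw [h0]; norm_num
    push_cast at this
    convert this using 2
  have hsplit := Finset.sum_Ico_consecutive (f := fun j => (-1 : ℝ) ^ j * ((m + 1).choose j))
    (Nat.zero_le (κ + 1)) (by omega : κ + 1 ≤ m + 2)
  rw [← Finset.Ico_add_one_right_eq_Icc]
  have hr1 : Finset.Ico 0 (κ + 1) = Finset.range (κ + 1) := by
    rw [Finset.range_eq_Ico]
  have hr2 : Finset.Ico 0 (m + 2) = Finset.range (m + 2) := by
    rw [Finset.range_eq_Ico]
  rw [hr1, hr2] at hsplit
  have e : m + 1 + 1 = m + 2 := rfl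
  rw [e]
  have := altPartial m κ
  have hsign : (-1 : ℝ) ^ (κ + 1) = -(-1 : ℝ) ^ κ := by ring
  rw [hsign]
  linarith [hsplit, this, hfull]

lemma expTsum (x : ℝ) : Real.exp x = ∑' n : ℕ, x ^ n / n.factorial := by
  rw [Real.exp_eq_exp_ℝ, NormedSpace.exp_eq_tsum_div]

lemma shiftSummable (x : ℝ) (M : ℕ) :
    Summable (fun i : ℕ => x ^ (M + i) / (M + i).factorial) := by
  have h2 := (summable_nat_add_iff M).2 (Real.summable_pow_div_factorial x)
  simpa [add_comm] using h2

lemma tailLe (x : ℝ) (hx : 0 ≤ x) (M : ℕ) :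
    ∑' i : ℕ, x ^ (M + i) / (M + i).factorial
      ≤ x ^ M / M.factorial * Real.exp x := by
  have hsum := shiftSummable x M
  have hsum2 : Summable (fun i : ℕ => x ^ M / M.factorial * (x ^ i / i.factorial)) :=
    (Real.summable_pow_div_factorial x).mul_left _
  have hle : ∀ i : ℕ, x ^ (M + i) / (M + i).factorial
      ≤ x ^ M / M.factorial * (x ^ i / i.factorial) := by
    intro i
    have key : (M.factorial * i.factorial : ℝ) ≤ ((M + i).factorial : ℝ) := by
      exact_mod_cast Nat.le_of_dvd (Nat.factorial_pos _)
        (Nat.factorial_mul_factorial_dvd_factorial_add M i)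
    calc x ^ (M + i) / (M + i).factorial
        ≤ x ^ (M + i) / (M.factorial * i.factorial) := by
          gcongr <;> positivity
      _ = x ^ M / M.factorial * (x ^ i / i.factorial) := by
          rw [pow_add]; ring
  calc ∑' i : ℕ, x ^ (M + i) / (M + i).factorial
      ≤ ∑' i : ℕ, x ^ M / M.factorial * (x ^ i / i.factorial) :=
        Summable.tsum_le_tsum hle hsum hsum2
    _ = x ^ M / M.factorial * Real.exp x := by
        rw [tsum_mul_left, ← expTsum]

lemma termLeExp (x : ℝ) (hx : 0 ≤ x) (M : ℕ) :
    x ^ M / M.factorial ≤ Real.exp x := by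
  rw [expTsum]
  exact Summable.le_tsum (Real.summable_pow_div_factorial x) M (fun j _ => by positivity)

lemma expRemainder (x : ℝ) (hx : 0 ≤ x) (M : ℕ) :
    |Real.exp (-x) - ∑ m ∈ Finset.range M, (-x) ^ m / m.factorial|
      ≤ x ^ M / M.factorial * Real.exp x := by
  have hs := Real.summable_pow_div_factorial (-x)
  have h := Summable.sum_add_tsum_nat_add (f := fun m : ℕ => (-x) ^ m / m.factorial) M hs
  have hdiff : Real.exp (-x) - ∑ m ∈ Finset.range M, (-x) ^ m / m.factorial
      = ∑' i : ℕ, (-x) ^ (i + M) / (i + M).factorial := by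
    rw [expTsum (-x), ← h]; ring
  rw [hdiff]
  have habs : ∀ i : ℕ, |(-x) ^ (i + M) / ((i + M).factorial : ℝ)|
      = x ^ (i + M) / (i + M).factorial := by
    intro i
    rw [abs_div, abs_pow, abs_neg, abs_of_nonneg hx, abs_of_nonneg (by positivity)]
  have hsumabs : Summable (fun i : ℕ => |(-x) ^ (i + M) / ((i + M).factorial : ℝ)|) := by
    simp only [habs]
    simpa [add_comm] using shiftSummable x M
  calc |∑' i : ℕ, (-x) ^ (i + M) / ((i + M).factorial : ℝ)|
      ≤ ∑' i : ℕ, |(-x) ^ (i + M) / ((i + M).factorial : ℝ)| := by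
        have h1 : Summable fun i : ℕ => ‖(-x) ^ (i + M) / ((i + M).factorial : ℝ)‖ := by
          simpa only [Real.norm_eq_abs] using hsumabs
        simpa only [Real.norm_eq_abs] using norm_tsum_le_tsum_norm h1
    _ = ∑' i : ℕ, x ^ (M + i) / ((M + i).factorial : ℝ) := by
        simp only [habs]
        exact tsum_congr (fun i => by rw [add_comm])
    _ ≤ x ^ M / M.factorial * Real.exp x := tailLe x hx M

lemma indSummable (l : ℝ) (hl : 0 ≤ l) (p : ℕ → Prop) [DecidablePred p] :
    Summable (fun j : ℕ => if p j then l ^ j / (j.factorial : ℝ) else 0) := by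
  refine Summable.of_nonneg_of_le (fun j => ?_) (fun j => ?_)
    (Real.summable_pow_div_factorial l)
  · split <;> positivity
  · split
    · exact le_refl _
    · positivity

lemma qsplit (l : ℝ) (hl : 0 ≤ l) (k α : ℕ) (hkα : k ≤ α) :
    (∑' j : ℕ, if k ≤ j then l ^ j / (j.factorial : ℝ) else 0)
      = (∑ j ∈ Icc k α, l ^ j / j.factorial)
        + ∑' i : ℕ, l ^ (α + 1 + i) / ((α + 1 + i).factorial : ℝ) := by
  have hg := indSummable l hl (fun j => k ≤ j ∧ j ≤ α)
  have hh := indSummable l hl (fun j => α + 1 ≤ j)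
  have hfun : (fun j : ℕ => if k ≤ j then l ^ j / (j.factorial : ℝ) else 0)
      = fun j => (if k ≤ j ∧ j ≤ α then l ^ j / (j.factorial : ℝ) else 0)
        + (if α + 1 ≤ j then l ^ j / (j.factorial : ℝ) else 0) := by
    funext j
    split_ifs <;> (first | ring1 | (exfalso; omega))
  rw [hfun, Summable.tsum_add hg hh]
  congr 1
  · rw [tsum_eq_sum (s := Icc k α) (fun j hj => by
      rw [if_neg]; intro hc; exact hj (mem_Icc.2 ⟨hc.1, hc.2⟩))]
    exact Finset.sum_congr rfl (fun j hj => by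
      rw [if_pos ⟨(mem_Icc.1 hj).1, (mem_Icc.1 hj).2⟩])
  · have h := Summable.sum_add_tsum_nat_add
      (f := fun j : ℕ => if α + 1 ≤ j then l ^ j / (j.factorial : ℝ) else 0) (α + 1) hh
    have hzero : ∑ i ∈ range (α + 1),
        (if α + 1 ≤ i then l ^ i / (i.factorial : ℝ) else 0) = 0 := by
      apply Finset.sum_eq_zero
      intro i hi
      have hi' := mem_range.1 hi
      rw [if_neg (by omega)]
    rw [← h, hzero, zero_add]
    apply tsum_congr
    intro i
    rw [show α + 1 + i = i + (α + 1) from by omega]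
    exact if_pos (by omega)

lemma qtail_lb (l : ℝ) (hl : 0 < l) (k : ℕ) :
    Real.exp (-l) * (l ^ k / k.factorial) ≤ Qtail l k := by
  unfold Qtail
  have h := Summable.le_tsum (indSummable l hl.le (fun j => k ≤ j)) k
    (fun j _ => by split <;> positivity)
  simp only [le_refl, if_pos] at h
  have := mul_le_mul_of_nonneg_left h (Real.exp_pos (-l)).le
  simpa using this

lemma negOneSplit (h j : ℕ) (hjh : j ≤ h) : (-1 : ℝ) ^ (h - j) = (-1) ^ h * (-1) ^ j := by
  have a1 : (-1 : ℝ) ^ (h - j) * (-1) ^ j = (-1) ^ h := by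
    rw [← pow_add, Nat.sub_add_cancel hjh]
  have a2 : ((-1 : ℝ) ^ j) * ((-1) ^ j) = 1 := by
    rw [← pow_add, ← two_mul, pow_mul]; norm_num
  calc (-1 : ℝ) ^ (h - j) = (-1) ^ (h - j) * (((-1 : ℝ) ^ j) * ((-1) ^ j)) := by
        rw [a2, mul_one]
    _ = ((-1 : ℝ) ^ (h - j) * (-1) ^ j) * (-1) ^ j := by ring
    _ = (-1) ^ h * (-1) ^ j := by rw [a1]

lemma rearrange (l : ℝ) (k α : ℕ) (hk : 1 ≤ k) (hkα : k ≤ α) :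
    ∑ h ∈ Icc k α, (-1 : ℝ) ^ (h - k) * ((h - 1).choose (k - 1)) * l ^ h / (h.factorial : ℝ)
      = ∑ j ∈ Icc k α, (l ^ j / j.factorial) *
          (∑ m ∈ range (α + 1 - j), (-l) ^ m / m.factorial) := by
  have hterm : ∀ h ∈ Icc k α,
      (-1 : ℝ) ^ (h - k) * ((h - 1).choose (k - 1)) * l ^ h / (h.factorial : ℝ)
        = ∑ j ∈ Icc k h, (l ^ j / j.factorial) * ((-l) ^ (h - j) / ((h - j).factorial : ℝ)) := by
    intro h hh
    obtain ⟨hkh, hhα⟩ := mem_Icc.1 hh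
    have h1 : 1 ≤ h := le_trans hk hkh
    have halt := altIcc (h - 1) (k - 1) (by omega)
    rw [show k - 1 + 1 = k from by omega, show h - 1 + 1 = h from by omega] at halt
    have step : ∀ j ∈ Icc k h, (l ^ j / j.factorial) * ((-l) ^ (h - j) / ((h - j).factorial : ℝ))
        = (l ^ h / h.factorial) * ((-1) ^ h * ((-1) ^ j * (h.choose j))) := by
      intro j hj
      obtain ⟨hkj, hjh⟩ := mem_Icc.1 hj
      have e2 := negOneSplit h j hjh
      have e3 : l ^ j * l ^ (h - j) = l ^ h := pow_mul_pow_sub l hjh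
      have e4 : (h.choose j : ℝ) = h.factorial / (j.factorial * (h - j).factorial) :=
        Nat.cast_choose ℝ hjh
      have hf1 : (j.factorial : ℝ) ≠ 0 := by positivity
      have hf2 : ((h - j).factorial : ℝ) ≠ 0 := by positivity
      have hf3 : (h.factorial : ℝ) ≠ 0 := by positivity
      rw [neg_pow, e2, e4, ← e3]
      field_simp
    rw [Finset.sum_congr rfl step, ← Finset.mul_sum]
    have : ∑ j ∈ Icc k h, (-1 : ℝ) ^ h * ((-1 : ℝ) ^ j * ((h.choose j : ℝ)))
        = (-1 : ℝ) ^ h * ∑ j ∈ Icc k h, (-1 : ℝ) ^ j * ((h.choose j : ℝ)) := by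
      rw [Finset.mul_sum]
    rw [this, halt, negOneSplit h k hkh]
    ring
  rw [Finset.sum_congr rfl hterm]
  have h1 : ∀ s : Finset ℕ, ∀ F : ℕ → ℝ, True := fun _ _ => trivial
  calc ∑ h ∈ Icc k α, ∑ j ∈ Icc k h,
        (l ^ j / j.factorial) * ((-l) ^ (h - j) / ((h - j).factorial : ℝ))
      = ∑ h ∈ Ico k (α + 1), ∑ j ∈ Ico k (h + 1),
          (l ^ j / j.factorial) * ((-l) ^ (h - j) / ((h - j).factorial : ℝ)) := by
        rw [Finset.Ico_add_one_right_eq_Icc]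
        exact Finset.sum_congr rfl (fun h _ => by rw [Finset.Ico_add_one_right_eq_Icc])
    _ = ∑ j ∈ Ico k (α + 1), ∑ h ∈ Ico j (α + 1),
          (l ^ j / j.factorial) * ((-l) ^ (h - j) / ((h - j).factorial : ℝ)) := by
        rw [← Finset.sum_Ico_Ico_comm]
    _ = ∑ j ∈ Icc k α, (l ^ j / j.factorial) *
          (∑ m ∈ range (α + 1 - j), (-l) ^ m / m.factorial) := by
        rw [Finset.Ico_add_one_right_eq_Icc]
        refine Finset.sum_congr rfl (fun j hj => ?_)
        rw [Finset.sum_Ico_eq_sum_range, Finset.mul_sum]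
        refine Finset.sum_congr rfl (fun i hi => ?_)
        rw [Nat.add_sub_cancel_left]

lemma midBound (l : ℝ) (hl0 : 0 < l) (k α : ℕ) (hk : 1 ≤ k) (hkα : k ≤ α) :
    |(∑ h ∈ Icc k α, (-1 : ℝ) ^ (h - k) * ((h - 1).choose (k - 1)) * l ^ h / (Nat.factorial h))
        - Qtail l k|
      ≤ 2 * Real.exp l * (2 * l) ^ (α + 1) / (((α + 1).factorial : ℝ)) := by
  have hS := rearrange l k α hk hkα
  have hQs := qsplit l hl0.le k α hkα
  set β := α + 1 with hβdef
  set E := Real.exp (-l) with hE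
  set Tail := ∑' i : ℕ, l ^ (β + i) / ((β + i).factorial : ℝ) with hTdef
  have hQ : Qtail l k = E * ((∑ j ∈ Icc k α, l ^ j / j.factorial) + Tail) := by
    unfold Qtail
    rw [hQs]
  have hTail_nonneg : 0 ≤ Tail := tsum_nonneg (fun i => by positivity)
  have hTail_le : Tail ≤ l ^ β / β.factorial * Real.exp l := tailLe l hl0.le β
  have hfacβ : (0 : ℝ) < (β.factorial : ℝ) := by
    exact_mod_cast Nat.factorial_pos β
  have hdiff : (∑ h ∈ Icc k α,
        (-1 : ℝ) ^ (h - k) * ((h - 1).choose (k - 1)) * l ^ h / (Nat.factorial h)) - Qtail l k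
      = (∑ j ∈ Icc k α, (l ^ j / j.factorial) *
          ((∑ m ∈ range (α + 1 - j), (-l) ^ m / m.factorial) - E)) - E * Tail := by
    rw [hS, hQ, mul_add, Finset.mul_sum]
    have e : ∀ j ∈ Icc k α, (l ^ j / (j.factorial : ℝ)) *
        ((∑ m ∈ range (α + 1 - j), (-l) ^ m / m.factorial) - E)
        = (l ^ j / j.factorial) * (∑ m ∈ range (α + 1 - j), (-l) ^ m / m.factorial)
          - E * (l ^ j / j.factorial) := fun j _ => by ring
    rw [Finset.sum_congr rfl e, Finset.sum_sub_distrib]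
    ring
  rw [hdiff]
  have habs1 : |(∑ j ∈ Icc k α, (l ^ j / (j.factorial : ℝ)) *
        ((∑ m ∈ range (α + 1 - j), (-l) ^ m / m.factorial) - E)) - E * Tail|
      ≤ |∑ j ∈ Icc k α, (l ^ j / (j.factorial : ℝ)) *
          ((∑ m ∈ range (α + 1 - j), (-l) ^ m / m.factorial) - E)| + |E * Tail| := by
    rw [sub_eq_add_neg]
    exact (abs_add_le _ _).trans (by rw [abs_neg])
  have hterm : ∀ j ∈ Icc k α, |(l ^ j / (j.factorial : ℝ)) *
        ((∑ m ∈ range (α + 1 - j), (-l) ^ m / m.factorial) - E)|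
      ≤ Real.exp l * l ^ β * ((β.choose j : ℝ)) / (β.factorial : ℝ) := by
    intro j hj
    obtain ⟨hkj, hjα⟩ := mem_Icc.1 hj
    have hjβ : j ≤ β := by omega
    have hrem := expRemainder l hl0.le (α + 1 - j)
    have habs : |(l ^ j / (j.factorial : ℝ)) *
          ((∑ m ∈ range (α + 1 - j), (-l) ^ m / m.factorial) - E)|
        = (l ^ j / (j.factorial : ℝ)) *
          |E - (∑ m ∈ range (α + 1 - j), (-l) ^ m / m.factorial)| := by
      rw [abs_mul, abs_of_nonneg (by positivity : (0:ℝ) ≤ l ^ j / (j.factorial : ℝ)),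
        abs_sub_comm]
    rw [habs]
    have h1 : (l ^ j / (j.factorial : ℝ)) *
          |E - (∑ m ∈ range (α + 1 - j), (-l) ^ m / m.factorial)|
        ≤ (l ^ j / (j.factorial : ℝ)) *
          (l ^ (α + 1 - j) / ((α + 1 - j).factorial : ℝ) * Real.exp l) := by
      apply mul_le_mul_of_nonneg_left _ (by positivity)
      exact hrem
    refine h1.trans (le_of_eq ?_)
    have e3 : l ^ j * l ^ (β - j) = l ^ β := pow_mul_pow_sub l hjβ
    have e4 : ((β.choose j : ℕ) : ℝ) = (β.factorial : ℝ) /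
        ((j.factorial : ℝ) * ((β - j).factorial : ℝ)) := by
      rw [Nat.cast_choose ℝ hjβ]
    have hbj : β - j = α + 1 - j := by omega
    rw [← hbj, e4, ← e3]
    have hf1 : (j.factorial : ℝ) ≠ 0 := by positivity
    have hf2 : ((β - j).factorial : ℝ) ≠ 0 := by positivity
    have hf3 : (β.factorial : ℝ) ≠ 0 := ne_of_gt hfacβ
    field_simp
  have hsum1 : |∑ j ∈ Icc k α, (l ^ j / (j.factorial : ℝ)) *
        ((∑ m ∈ range (α + 1 - j), (-l) ^ m / m.factorial) - E)|
      ≤ ∑ j ∈ Icc k α, Real.exp l * l ^ β * ((β.choose j : ℝ)) / (β.factorial : ℝ) :=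
    (Finset.abs_sum_le_sum_abs _ _).trans (Finset.sum_le_sum hterm)
  have hchoose : (∑ j ∈ Icc k α, ((β.choose j : ℕ) : ℝ)) ≤ (2 : ℝ) ^ β := by
    have hnat : (∑ j ∈ Icc k α, β.choose j) ≤ 2 ^ β := by
      calc (∑ j ∈ Icc k α, β.choose j) ≤ ∑ j ∈ range (β + 1), β.choose j := by
            apply Finset.sum_le_sum_of_subset
            intro j hj
            rw [mem_range]
            have := (mem_Icc.1 hj).2
            omega
        _ = 2 ^ β := Nat.sum_range_choose β
    calc (∑ j ∈ Icc k α, ((β.choose j : ℕ) : ℝ)) = ((∑ j ∈ Icc k α, β.choose j : ℕ) : ℝ) := by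
          push_cast
          ring
      _ ≤ ((2 ^ β : ℕ) : ℝ) := by exact_mod_cast hnat
      _ = (2 : ℝ) ^ β := by push_cast; ring
  have hsum2 : ∑ j ∈ Icc k α, Real.exp l * l ^ β * ((β.choose j : ℝ)) / (β.factorial : ℝ)
      ≤ Real.exp l * l ^ β / (β.factorial : ℝ) * (2 : ℝ) ^ β := by
    have : ∑ j ∈ Icc k α, Real.exp l * l ^ β * ((β.choose j : ℝ)) / (β.factorial : ℝ)
        = (Real.exp l * l ^ β / (β.factorial : ℝ)) * ∑ j ∈ Icc k α, ((β.choose j : ℕ) : ℝ) := by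
      rw [Finset.mul_sum]
      exact Finset.sum_congr rfl (fun j _ => by ring)
    rw [this]
    apply mul_le_mul_of_nonneg_left hchoose (by positivity)
  have hEtail : |E * Tail| ≤ l ^ β / (β.factorial : ℝ) := by
    have hE1 : E * Real.exp l = 1 := by
      rw [hE, ← Real.exp_add]
      simp
    have hEpos : 0 < E := Real.exp_pos _
    rw [abs_of_nonneg (by positivity)]
    calc E * Tail ≤ E * (l ^ β / β.factorial * Real.exp l) :=
          mul_le_mul_of_nonneg_left hTail_le hEpos.le
      _ = l ^ β / (β.factorial : ℝ) * (E * Real.exp l) := by ring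
      _ = l ^ β / (β.factorial : ℝ) := by rw [hE1, mul_one]
  have hfin1 : Real.exp l * l ^ β / (β.factorial : ℝ) * (2 : ℝ) ^ β
      = Real.exp l * (2 * l) ^ β / (β.factorial : ℝ) := by
    rw [mul_pow]
    ring
  have hfin2 : l ^ β / (β.factorial : ℝ) ≤ Real.exp l * (2 * l) ^ β / (β.factorial : ℝ) := by
    have ha : l ^ β ≤ (2 * l) ^ β := by
      apply pow_le_pow_left₀ hl0.le
      linarith
    have hb : (1 : ℝ) ≤ Real.exp l := Real.one_le_exp hl0.le
    have hnum : l ^ β ≤ Real.exp l * (2 * l) ^ β := by nlinarith [pow_nonneg hl0.le β]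
    gcongr
  calc |(∑ j ∈ Icc k α, (l ^ j / (j.factorial : ℝ)) *
        ((∑ m ∈ range (α + 1 - j), (-l) ^ m / m.factorial) - E)) - E * Tail|
      ≤ |∑ j ∈ Icc k α, (l ^ j / (j.factorial : ℝ)) *
          ((∑ m ∈ range (α + 1 - j), (-l) ^ m / m.factorial) - E)| + |E * Tail| := habs1
    _ ≤ Real.exp l * l ^ β / (β.factorial : ℝ) * (2 : ℝ) ^ β + l ^ β / (β.factorial : ℝ) := by
        have := hsum1.trans hsum2
        linarith [hEtail, this]
    _ ≤ 2 * Real.exp l * (2 * l) ^ β / (β.factorial : ℝ) := by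
        rw [hfin1]
        rw [show (2 : ℝ) * Real.exp l * (2 * l) ^ β / (β.factorial : ℝ)
          = Real.exp l * (2 * l) ^ β / (β.factorial : ℝ)
            + Real.exp l * (2 * l) ^ β / (β.factorial : ℝ) from by ring]
        linarith [hfin2]

lemma expC5 : Real.exp ((29 : ℝ) / 10) ≤ 40 := by
  have h1 : Real.exp ((29 : ℝ) / 10) ^ (10 : ℕ) = Real.exp 29 := by
    rw [← Real.exp_nat_mul]
    norm_num
  have h2 : Real.exp (29 : ℝ) = Real.exp 1 ^ (29 : ℕ) := by
    rw [← Real.exp_nat_mul]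
    norm_num
  have h3 : Real.exp 1 ^ (29 : ℕ) ≤ (2.7182818286 : ℝ) ^ (29 : ℕ) :=
    pow_le_pow_left₀ (Real.exp_pos 1).le Real.exp_one_lt_d9.le 29
  have h4 : (2.7182818286 : ℝ) ^ (29 : ℕ) ≤ (40 : ℝ) ^ (10 : ℕ) := by norm_num
  have h5 : Real.exp ((29 : ℝ) / 10) ^ (10 : ℕ) ≤ (40 : ℝ) ^ (10 : ℕ) := by
    rw [h1, h2]
    exact le_trans h3 h4
  exact le_of_pow_le_pow_left₀ (by norm_num) (by norm_num) h5

lemma numeric (l : ℝ) (n k β : ℕ) (hl0 : 0 < l) (hkβ : k ≤ β)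
    (hk20 : (k : ℝ) ≤ (β : ℝ) / 20) (hl40 : l ≤ (β : ℝ) / 40)
    (h2l : 2 * l ≤ (β : ℝ) / 20)
    (hn : 100 ≤ n) (hnβ : (n : ℝ) ≤ (β : ℝ) + 1) :
    2 * Real.exp l * (2 * l) ^ β / (β.factorial : ℝ)
      < Real.exp (-(n : ℝ)) * (Real.exp (-l) * (l ^ k / (k.factorial : ℝ))) := by
  have hfacβ : (0 : ℝ) < (β.factorial : ℝ) := by exact_mod_cast Nat.factorial_pos β
  have hfack : (0 : ℝ) < (k.factorial : ℝ) := by exact_mod_cast Nat.factorial_pos k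
  have hn100 : (100 : ℝ) ≤ (n : ℝ) := by exact_mod_cast hn
  have hβ99 : (99 : ℝ) ≤ (β : ℝ) := by linarith
  have hβpos : (0 : ℝ) < (β : ℝ) := by linarith
  -- c3 : 2^(β+k) ≤ exp((3/4)(β+k))
  have c3 : (2 : ℝ) ^ (β + k) ≤ Real.exp ((3 / 4) * ((β : ℝ) + k)) := by
    have hlog2 : Real.log 2 < 3 / 4 := lt_of_lt_of_le Real.log_two_lt_d9 (by norm_num)
    have h2e : (2 : ℝ) = Real.exp (Real.log 2) := (Real.exp_log (by norm_num)).symm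
    calc (2 : ℝ) ^ (β + k) = Real.exp (Real.log 2) ^ (β + k) := by rw [← h2e]
      _ = Real.exp (((β + k : ℕ) : ℝ) * Real.log 2) := (Real.exp_nat_mul _ _).symm
      _ ≤ Real.exp ((3 / 4) * ((β : ℝ) + k)) := by
          apply Real.exp_le_exp.2
          have hc : ((β + k : ℕ) : ℝ) = (β : ℝ) + k := by push_cast; ring
          rw [hc]
          have hnn : (0 : ℝ) ≤ (β : ℝ) + k := by positivity
          nlinarith [hnn, hlog2.le]
  have c4 : (2 : ℝ) ≤ Real.exp 1 := by
    have := Real.exp_one_gt_d9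
    linarith
  have c6 : ((β : ℝ)) ^ β ≤ Real.exp (β : ℝ) * (β.factorial : ℝ) := by
    have := termLeExp (β : ℝ) hβpos.le β
    rw [div_le_iff₀ hfacβ] at this
    linarith
  have c7 : Real.exp ((29 / 10) * (β : ℝ)) ≤ (40 : ℝ) ^ β := by
    calc Real.exp ((29 / 10) * (β : ℝ)) = Real.exp ((β : ℕ) * ((29 : ℝ) / 10)) := by
          congr 1
          ring
      _ = Real.exp ((29 : ℝ) / 10) ^ β := Real.exp_nat_mul _ β
      _ ≤ (40 : ℝ) ^ β := pow_le_pow_left₀ (Real.exp_pos _).le expC5 β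
  -- main chain
  have main : 2 * Real.exp ((n : ℝ) + 2 * l) * 2 ^ β * l ^ (β - k) * (k.factorial : ℝ)
      < (β.factorial : ℝ) := by
    have b1 : (k.factorial : ℝ) ≤ ((β : ℝ) / 20) ^ k := by
      calc (k.factorial : ℝ) ≤ ((k : ℝ)) ^ k := by exact_mod_cast Nat.factorial_le_pow k
        _ ≤ ((β : ℝ) / 20) ^ k := pow_le_pow_left₀ (Nat.cast_nonneg k) hk20 k
    have b2 : l ^ (β - k) ≤ ((β : ℝ) / 40) ^ (β - k) := pow_le_pow_left₀ hl0.le hl40 _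
    calc 2 * Real.exp ((n : ℝ) + 2 * l) * 2 ^ β * l ^ (β - k) * (k.factorial : ℝ)
        ≤ 2 * Real.exp ((n : ℝ) + 2 * l) * 2 ^ β * ((β : ℝ) / 40) ^ (β - k)
            * ((β : ℝ) / 20) ^ k := by gcongr <;> positivity
      _ = 2 * Real.exp ((n : ℝ) + 2 * l) * 2 ^ (β + k) * ((β : ℝ) / 40) ^ β := by
          rw [show ((β : ℝ) / 20) = 2 * ((β : ℝ) / 40) from by ring, mul_pow,
            ← pow_sub_mul_pow ((β : ℝ) / 40) hkβ]
          ring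
      _ ≤ Real.exp 1 * Real.exp ((n : ℝ) + 2 * l) * Real.exp ((3 / 4) * ((β : ℝ) + k))
            * ((β : ℝ) / 40) ^ β := by gcongr <;> positivity
      _ = Real.exp (1 + ((n : ℝ) + 2 * l) + (3 / 4) * ((β : ℝ) + k)) * ((β : ℝ) / 40) ^ β := by
          rw [← Real.exp_add, ← Real.exp_add]
      _ < Real.exp ((19 / 10) * (β : ℝ)) * ((β : ℝ) / 40) ^ β := by
          have hpow : (0 : ℝ) < ((β : ℝ) / 40) ^ β := by positivity
          apply mul_lt_mul_of_pos_right _ hpow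
          apply Real.exp_lt_exp.2
          linarith
      _ ≤ ((40 : ℝ) ^ β / Real.exp (β : ℝ)) * ((β : ℝ) / 40) ^ β := by
          have he : Real.exp ((19 / 10) * (β : ℝ))
              = Real.exp ((29 / 10) * (β : ℝ)) / Real.exp (β : ℝ) := by
            rw [← Real.exp_sub]
            congr 1
            ring
          rw [he]
          gcongr
      _ = ((β : ℝ)) ^ β / Real.exp (β : ℝ) := by
          rw [div_mul_eq_mul_div]
          congr 1
          rw [← mul_pow]
          congr 1
          ring
      _ ≤ (β.factorial : ℝ) := by
          rw [div_le_iff₀ (Real.exp_pos _)]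
          linarith [c6]
  -- derive the goal
  have hEn : (0 : ℝ) < Real.exp ((n : ℝ) + l) := Real.exp_pos _
  have step1 : 2 * Real.exp ((n : ℝ) + 2 * l) * (2 * l) ^ β * (k.factorial : ℝ)
      < (β.factorial : ℝ) * l ^ k := by
    have h := mul_lt_mul_of_pos_right main (pow_pos hl0 k)
    calc 2 * Real.exp ((n : ℝ) + 2 * l) * (2 * l) ^ β * (k.factorial : ℝ)
        = 2 * Real.exp ((n : ℝ) + 2 * l) * 2 ^ β * l ^ (β - k) * (k.factorial : ℝ) * l ^ k := by
          rw [mul_pow, ← pow_sub_mul_pow l hkβ]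
          ring
      _ < (β.factorial : ℝ) * l ^ k := h
  have hBeq : Real.exp (-(n : ℝ)) * (Real.exp (-l) * (l ^ k / (k.factorial : ℝ)))
      = (Real.exp (-((n : ℝ) + l)) * l ^ k) / (k.factorial : ℝ) := by
    calc Real.exp (-(n : ℝ)) * (Real.exp (-l) * (l ^ k / (k.factorial : ℝ)))
        = (Real.exp (-(n : ℝ)) * Real.exp (-l)) * (l ^ k / (k.factorial : ℝ)) := by ring
      _ = Real.exp (-(n : ℝ) + -l) * (l ^ k / (k.factorial : ℝ)) := by rw [← Real.exp_add]
      _ = (Real.exp (-((n : ℝ) + l)) * l ^ k) / (k.factorial : ℝ) := by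
          rw [show -(n : ℝ) + -l = -((n : ℝ) + l) from by ring]
          ring
  rw [hBeq, div_lt_div_iff₀ hfacβ hfack]
  calc 2 * Real.exp l * (2 * l) ^ β * (k.factorial : ℝ)
      = (2 * Real.exp ((n : ℝ) + 2 * l) * (2 * l) ^ β * (k.factorial : ℝ))
          / Real.exp ((n : ℝ) + l) := by
        rw [show Real.exp ((n : ℝ) + 2 * l) = Real.exp ((n : ℝ) + l) * Real.exp l from by
          rw [← Real.exp_add]; congr 1; ring]
        field_simp
    _ < ((β.factorial : ℝ) * l ^ k) / Real.exp ((n : ℝ) + l) := by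
        rw [div_lt_div_iff₀ hEn hEn]
        exact mul_lt_mul_of_pos_right step1 hEn
    _ = Real.exp (-((n : ℝ) + l)) * l ^ k * (β.factorial : ℝ) := by
        rw [Real.exp_neg]
        ring


theorem truncated_series_approximates_poisson_tail :
    ∃ n₀ : ℕ, ∀ n : ℕ, n₀ ≤ n → ∀ α k : ℕ, ∀ V : ℝ,
      (α = n - 1 ∨ α = n - 2) → 1 ≤ k → (k : ℝ) ≤ 0.05 * α → 0 < V → V ≤ 0.05 * α →
      Odd (α - k) →
      |(∑ h ∈ Finset.Icc k α,
          (-1 : ℝ) ^ (h - k) * ((h - 1).choose (k - 1)) * (V / 2) ^ h / (Nat.factorial h)) -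
        Qtail (V / 2) k| < Real.exp (-(n : ℝ)) * Qtail (V / 2) k := by
  refine ⟨100, fun n hn α k V hα hk hkα hV hVα _ => ?_⟩
  set l : ℝ := V / 2 with hldef
  have hl0 : 0 < l := by rw [hldef]; positivity
  have hn100 : (100 : ℝ) ≤ (n : ℝ) := by exact_mod_cast hn
  have hαn : (n : ℝ) - 2 ≤ (α : ℝ) := by
    rcases hα with rfl | rfl
    · rw [Nat.cast_sub (by omega)]
      push_cast
      linarith
    · rw [Nat.cast_sub (by omega)]
      push_cast
      linarith
  have h005 : (0.05 : ℝ) * (α : ℝ) = (α : ℝ) / 20 := by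
    rw [show (0.05 : ℝ) = 1 / 20 from by norm_num]
    ring
  have hk20 : (k : ℝ) ≤ (α : ℝ) / 20 := by rw [← h005]; exact hkα
  have hV20 : V ≤ (α : ℝ) / 20 := by rw [← h005]; exact hVα
  have hl40 : l ≤ (α : ℝ) / 40 := by rw [hldef]; linarith
  have hα0 : (0 : ℝ) ≤ (α : ℝ) := Nat.cast_nonneg α
  have hkαn : k ≤ α := by
    have h1 : (k : ℝ) ≤ (α : ℝ) := le_trans hk20 (by linarith)
    exact_mod_cast h1
  have hQlb : Real.exp (-l) * (l ^ k / k.factorial) ≤ Qtail l k := qtail_lb l hl0 k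
  have hmid := midBound l hl0 k α hk hkαn
  have hnum := numeric l n k (α + 1) hl0 (by omega)
    (by push_cast; linarith) (by push_cast; linarith)
    (by rw [hldef]; push_cast; linarith) hn
    (by push_cast; linarith)
  calc |(∑ h ∈ Finset.Icc k α,
          (-1 : ℝ) ^ (h - k) * ((h - 1).choose (k - 1)) * l ^ h / (Nat.factorial h)) -
        Qtail l k|
      ≤ 2 * Real.exp l * (2 * l) ^ (α + 1) / (((α + 1).factorial : ℝ)) := hmid
    _ < Real.exp (-(n : ℝ)) * (Real.exp (-l) * (l ^ k / (k.factorial : ℝ))) := hnum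
    _ ≤ Real.exp (-(n : ℝ)) * Qtail l k :=
        mul_le_mul_of_nonneg_left hQlb (Real.exp_pos _).le
end
end

section
/- Let W be a finite set of nonzero vectors in ℝ^n with |W| = M, and let k ≥ 1 be an integer. Define P_k = (the fraction of k-element subsets of W that are linearly independent) if M ≥ k, and P_k = 0 if M < k. For h ≥ k, let S_h denote the number of h-element subsets of W of corank 0 if h - k is even and of corank ≤ 1 if h - k is odd, and let T_h denote the number of h-element subsets of W of corank ≤ 1 if h - k is even and of corank 0 if h - k is odd. Then for any integers α, β ≥ k with α - k odd and β - k even, Σ_{h=k}^{α} (-1)^{h-k} · C(h-1, k-1) · S_h ≤ P_k ≤ Σ_{h=k}^{β} (-1)^{h-k} · C(h-1, k-1) · T_h. -/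
open MeasureTheory Matrix Metric
open scoped Classical

noncomputable section

/-- The collection of `h`-element subsets of `W` consisting of linearly independent vectors. -/
def indepSubsets {n : ℕ} (h : ℕ) (W : Set (EuclideanSpace ℝ (Fin n))) :
    Set (Finset (EuclideanSpace ℝ (Fin n))) :=
  {E | ↑E ⊆ W ∧ E.card = h ∧
    LinearIndependent ℝ (fun v : (E : Set (EuclideanSpace ℝ (Fin n))) =>
      (v : EuclideanSpace ℝ (Fin n)))}

/-- The collection of `h`-element subsets of `W` of corank at most 1, i.e. whose span has
dimension at least `h - 1`. -/
def corank1Subsets {n : ℕ} (h : ℕ) (W : Set (EuclideanSpace ℝ (Fin n))) :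
    Set (Finset (EuclideanSpace ℝ (Fin n))) :=
  {E | ↑E ⊆ W ∧ E.card = h ∧
    h ≤ Module.finrank ℝ (Submodule.span ℝ (E : Set (EuclideanSpace ℝ (Fin n)))) + 1}


open Module Submodule Finset

variable {n : ℕ}
local notation "Vec" => EuclideanSpace ℝ (Fin n)

/-- total rank of `U` together with span of `F`. -/
def dU (U : Submodule ℝ (EuclideanSpace ℝ (Fin n))) (F : Finset (EuclideanSpace ℝ (Fin n))) : ℕ :=
  finrank ℝ ↥(U ⊔ Submodule.span ℝ (F : Set (EuclideanSpace ℝ (Fin n))))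

def IndU (U : Submodule ℝ (EuclideanSpace ℝ (Fin n))) (F : Finset (EuclideanSpace ℝ (Fin n))) : Prop :=
  dU U F = finrank ℝ U + F.card

def CorU (U : Submodule ℝ (EuclideanSpace ℝ (Fin n))) (F : Finset (EuclideanSpace ℝ (Fin n))) : Prop :=
  F.card + finrank ℝ U ≤ dU U F + 1

lemma dU_empty (U : Submodule ℝ Vec) : dU U ∅ = finrank ℝ U := by
  unfold dU
  rw [Finset.coe_empty, Submodule.span_empty, sup_bot_eq]

lemma dU_insert (U : Submodule ℝ Vec) (e : Vec) (F : Finset Vec) :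
    dU U (insert e F) = dU (U ⊔ Submodule.span ℝ {e}) F := by
  unfold dU
  rw [Finset.coe_insert, Submodule.span_insert, ← sup_assoc]

lemma sup_singleton_of_mem {U : Submodule ℝ Vec} {e : Vec} (he : e ∈ U) :
    U ⊔ Submodule.span ℝ {e} = U := by
  rw [sup_eq_left, Submodule.span_singleton_le_iff_mem]; exact he

lemma finrank_sup_singleton_of_not_mem {U : Submodule ℝ Vec} {e : Vec} (he : e ∉ U) :
    finrank ℝ ↥(U ⊔ Submodule.span ℝ {e}) = finrank ℝ U + 1 := by
  have he0 : e ≠ 0 := fun h => he (h ▸ U.zero_mem)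
  have hinf : U ⊓ Submodule.span ℝ {e} = ⊥ := by
    rw [eq_bot_iff]
    intro x hx
    rw [Submodule.mem_inf] at hx
    obtain ⟨hxU, hxe⟩ := hx
    rw [Submodule.mem_span_singleton] at hxe
    obtain ⟨c, rfl⟩ := hxe
    rcases eq_or_ne c 0 with rfl | hc
    · simp
    · exact absurd (by simpa [hc] using U.smul_mem c⁻¹ hxU) he
  have := Submodule.finrank_sup_add_finrank_inf_eq U (Submodule.span ℝ {e})
  rw [hinf, finrank_span_singleton he0] at this
  simpa using this

lemma finrank_sup_singleton_le (U : Submodule ℝ Vec) (e : Vec) :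
    finrank ℝ ↥(U ⊔ Submodule.span ℝ {e}) ≤ finrank ℝ U + 1 := by
  by_cases he : e ∈ U
  · rw [sup_singleton_of_mem he]; omega
  · rw [finrank_sup_singleton_of_not_mem he]

lemma finrank_le_dU (U : Submodule ℝ Vec) (F : Finset Vec) : finrank ℝ U ≤ dU U F :=
  Submodule.finrank_mono le_sup_left

lemma dU_le (F : Finset Vec) : ∀ U : Submodule ℝ Vec, dU U F ≤ finrank ℝ U + F.card := by
  induction F using Finset.induction_on with
  | empty => intro U; simp [dU_empty]
  | @insert e F he ih =>
      intro U
      rw [dU_insert, Finset.card_insert_of_notMem he]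
      calc dU (U ⊔ Submodule.span ℝ {e}) F ≤ finrank ℝ ↥(U ⊔ Submodule.span ℝ {e}) + F.card := ih _
      _ ≤ finrank ℝ U + 1 + F.card := by
            have := finrank_sup_singleton_le U e; omega
      _ = finrank ℝ U + (F.card + 1) := by ring

lemma dU_union (U : Submodule ℝ Vec) (K F : Finset Vec) :
    dU U (K ∪ F) = dU (U ⊔ Submodule.span ℝ (K : Set Vec)) F := by
  unfold dU
  rw [Finset.coe_union, Submodule.span_union, ← sup_assoc]

/-- nullity is monotone: independence is hereditary. -/
lemma IndU_of_subset {U : Submodule ℝ Vec} {K E : Finset Vec} (hKE : K ⊆ E)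
    (hE : IndU U E) : IndU U K := by
  have h1 : dU U E ≤ dU U K + (E \ K).card := by
    have h0 : dU U (K ∪ (E \ K)) = dU (U ⊔ Submodule.span ℝ (K : Set Vec)) (E \ K) :=
      dU_union U K (E \ K)
    rw [Finset.union_sdiff_of_subset hKE] at h0
    rw [h0]
    exact dU_le _ _
  have h2 : dU U K ≤ finrank ℝ U + K.card := dU_le _ _
  have h3 : (E \ K).card = E.card - K.card := Finset.card_sdiff_of_subset hKE
  have h4 : K.card ≤ E.card := Finset.card_le_card hKE
  unfold IndU at *
  omega
/-- summand of the sieve sum: class pattern `p` (0 or 1), truncation `t`. -/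
def gS (U : Submodule ℝ (EuclideanSpace ℝ (Fin n))) (p t : ℕ)
    (F : Finset (EuclideanSpace ℝ (Fin n))) : ℝ :=
  if F.card ≤ t then
    (-1 : ℝ) ^ F.card *
      (if F.card % 2 = p then (if IndU U F then 1 else 0) else (if CorU U F then 1 else 0))
  else 0

def Ssum (U : Submodule ℝ (EuclideanSpace ℝ (Fin n))) (p t : ℕ)
    (G : Finset (EuclideanSpace ℝ (Fin n))) : ℝ :=
  ∑ F ∈ G.powerset, gS U p t F

lemma IndU_empty (U : Submodule ℝ Vec) : IndU U ∅ := by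
  unfold IndU; rw [dU_empty]; simp

lemma CorU_empty (U : Submodule ℝ Vec) : CorU U ∅ := by
  unfold CorU; rw [dU_empty]; simp

lemma CorU_singleton (U : Submodule ℝ Vec) (e : Vec) : CorU U {e} := by
  unfold CorU
  have := finrank_le_dU U {e}
  simp only [Finset.card_singleton]
  omega

lemma gS_empty (U : Submodule ℝ Vec) (p t : ℕ) : gS U p t ∅ = 1 := by
  unfold gS
  rcases Nat.eq_zero_or_pos p with rfl | hp
  · simp [IndU_empty]
  · have : ¬ (Finset.card (∅ : Finset Vec) % 2 = p) := by simp; omega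
    simp only [Finset.card_empty, Nat.zero_le, if_true, pow_zero, one_mul]
    simp [show p ≠ 0 by omega, show (0:ℕ) ≠ p by omega, CorU_empty U]

lemma Ssum_empty (U : Submodule ℝ Vec) (p t : ℕ) : Ssum U p t ∅ = 1 := by
  unfold Ssum
  rw [Finset.powerset_empty, Finset.sum_singleton, gS_empty]

lemma Ssum_insert (U : Submodule ℝ Vec) (p t : ℕ) {e : Vec} {G : Finset Vec} (he : e ∉ G) :
    Ssum U p t (insert e G) = Ssum U p t G + ∑ F ∈ G.powerset, gS U p t (insert e F) :=
  Finset.sum_powerset_insert he _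

/-- key recursion, non-member case -/
lemma gS_insert_not_mem {U : Submodule ℝ Vec} {e : Vec} (heU : e ∉ U) {F : Finset Vec}
    (heF : e ∉ F) {p t : ℕ} (hp : p ≤ 1) (ht : 1 ≤ t) :
    gS U p t (insert e F) = - gS (U ⊔ Submodule.span ℝ {e}) (1 - p) (t - 1) F := by
  have hc : (insert e F).card = F.card + 1 := Finset.card_insert_of_notMem heF
  have hrk : finrank ℝ ↥(U ⊔ Submodule.span ℝ {e}) = finrank ℝ U + 1 :=
    finrank_sup_singleton_of_not_mem heU
  have hd : dU U (insert e F) = dU (U ⊔ Submodule.span ℝ {e}) F := dU_insert U e F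
  have hInd : IndU U (insert e F) ↔ IndU (U ⊔ Submodule.span ℝ {e}) F := by
    unfold IndU; rw [hc, hd, hrk]; omega
  have hCor : CorU U (insert e F) ↔ CorU (U ⊔ Submodule.span ℝ {e}) F := by
    unfold CorU; rw [hc, hd, hrk]; omega
  have hcard : (F.card + 1 ≤ t) ↔ (F.card ≤ t - 1) := by omega
  have hpar : ((F.card + 1) % 2 = p) ↔ (F.card % 2 = 1 - p) := by omega
  unfold gS
  rw [hc]
  by_cases h1 : F.card + 1 ≤ t
  · rw [if_pos h1, if_pos (hcard.mp h1)]
    rw [pow_succ]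
    by_cases h2 : (F.card + 1) % 2 = p
    · rw [if_pos h2, if_pos (hpar.mp h2)]
      rcases em (IndU U (insert e F)) with h3 | h3
      · rw [if_pos h3, if_pos (hInd.mp h3)]; ring
      · rw [if_neg h3, if_neg (fun hh => h3 (hInd.mpr hh))]; ring
    · rw [if_neg h2, if_neg (fun hh => h2 (hpar.mpr hh))]
      rcases em (CorU U (insert e F)) with h3 | h3
      · rw [if_pos h3, if_pos (hCor.mp h3)]; ring
      · rw [if_neg h3, if_neg (fun hh => h3 (hCor.mpr hh))]; ring
  · rw [if_neg h1, if_neg (fun hh => h1 (hcard.mpr hh))]; ring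

/-- member (loop) case: sign facts -/
lemma gS_insert_mem_nonpos {U : Submodule ℝ Vec} {e : Vec} (heU : e ∈ U) {F : Finset Vec}
    (heF : e ∉ F) {t : ℕ} :
    gS U 0 t (insert e F) ≤ 0 := by
  have hc : (insert e F).card = F.card + 1 := Finset.card_insert_of_notMem heF
  have hd : dU U (insert e F) = dU U F := by
    rw [dU_insert, sup_singleton_of_mem heU]
  have hInd : ¬ IndU U (insert e F) := by
    unfold IndU; rw [hc, hd]
    have := dU_le F U
    omega
  unfold gS
  rw [hc]
  by_cases h1 : F.card + 1 ≤ t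
  · rw [if_pos h1]
    by_cases h2 : (F.card + 1) % 2 = 0
    · rw [if_pos h2, if_neg hInd]; simp
    · rw [if_neg h2]
      have hodd : (F.card + 1) % 2 = 1 := by omega
      have : (-1 : ℝ) ^ (F.card + 1) = -1 := by
        rw [← Nat.div_add_mod (F.card + 1) 2, pow_add, hodd]
        simp [pow_mul]
      rw [this]
      split <;> norm_num
  · rw [if_neg h1]

lemma gS_insert_mem_nonneg {U : Submodule ℝ Vec} {e : Vec} (heU : e ∈ U) {F : Finset Vec}
    (heF : e ∉ F) {t : ℕ} :
    0 ≤ gS U 1 t (insert e F) := by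
  have hc : (insert e F).card = F.card + 1 := Finset.card_insert_of_notMem heF
  have hd : dU U (insert e F) = dU U F := by
    rw [dU_insert, sup_singleton_of_mem heU]
  have hInd : ¬ IndU U (insert e F) := by
    unfold IndU; rw [hc, hd]
    have := dU_le F U
    omega
  unfold gS
  rw [hc]
  by_cases h1 : F.card + 1 ≤ t
  · rw [if_pos h1]
    by_cases h2 : (F.card + 1) % 2 = 1
    · rw [if_pos h2, if_neg hInd]; simp
    · rw [if_neg h2]
      have heven : (F.card + 1) % 2 = 0 := by omega
      have : (-1 : ℝ) ^ (F.card + 1) = 1 := by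
        rw [← Nat.div_add_mod (F.card + 1) 2, pow_add, heven]
        simp [pow_mul]
      rw [this]
      split <;> norm_num
  · rw [if_neg h1]
lemma Ssum_singleton (U : Submodule ℝ Vec) (p t : ℕ) (e : Vec) :
    Ssum U p t {e} = gS U p t ∅ + gS U p t {e} := by
  unfold Ssum
  rw [show ({e} : Finset Vec) = insert e ∅ by simp, Finset.sum_powerset_insert (by simp)]
  simp [Ssum_empty]

lemma Ssum_t0 (U : Submodule ℝ Vec) (p : ℕ) (G : Finset Vec) : Ssum U p 0 G = 1 := by
  unfold Ssum
  rw [Finset.sum_eq_single_of_mem ∅ (Finset.mem_powerset.mpr (Finset.empty_subset G))]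
  · exact gS_empty U p 0
  · intro F _ hF
    unfold gS
    rw [if_neg]
    have : F.card ≠ 0 := by simpa using hF
    omega

theorem S_main : ∀ (G : Finset (EuclideanSpace ℝ (Fin n))) (U : Submodule ℝ (EuclideanSpace ℝ (Fin n))) (t : ℕ),
    (G.Nonempty → t % 2 = 1 → Ssum U 0 t G ≤ 0) ∧ (t % 2 = 0 → 0 ≤ Ssum U 1 t G) := by
  intro G
  induction G using Finset.strongInduction with
  | _ G ih =>
    intro U t
    rcases Finset.eq_empty_or_nonempty G with rfl | hG
    · refine ⟨fun h _ => absurd h (by simp), fun _ => by rw [Ssum_empty]; norm_num⟩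
    obtain ⟨e, he⟩ := hG
    set G' := G.erase e with hG'
    have heG' : e ∉ G' := Finset.notMem_erase e G
    have hGi : G = insert e G' := (Finset.insert_erase he).symm
    have hG'ss : G' ⊂ G := Finset.erase_ssubset he
    constructor
    · -- lower: p = 0, t odd
      intro _ ht
      have ht1 : 1 ≤ t := by omega
      rw [hGi, Ssum_insert U 0 t heG']
      rcases Finset.eq_empty_or_nonempty G' with hG'e | hG'ne
      · -- G = {e} : direct computation
        rw [hG'e, Ssum_empty, Finset.powerset_empty, Finset.sum_singleton]
        have : gS U 0 t (insert e ∅) ≤ -1 + 0 := by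
          unfold gS
          rw [show (insert e ∅ : Finset Vec) = {e} by rfl, Finset.card_singleton, if_pos ht1,
            if_neg (by omega), if_pos (CorU_singleton U e)]
          norm_num
        linarith
      · have h1 : Ssum U 0 t G' ≤ 0 := (ih G' hG'ss U t).1 hG'ne ht
        have h2 : (∑ F ∈ G'.powerset, gS U 0 t (insert e F)) ≤ 0 := by
          by_cases heU : e ∈ U
          · apply Finset.sum_nonpos
            intro F hF
            exact gS_insert_mem_nonpos heU
              (fun hh => heG' (Finset.mem_powerset.mp hF hh))
          · have hrw : ∀ F ∈ G'.powerset, gS U 0 t (insert e F)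
                = - gS (U ⊔ Submodule.span ℝ {e}) 1 (t - 1) F := by
              intro F hF
              have := gS_insert_not_mem heU (fun hh => heG' (Finset.mem_powerset.mp hF hh))
                (p := 0) (t := t) (by omega) ht1
              simpa using this
            rw [Finset.sum_congr rfl hrw, Finset.sum_neg_distrib]
            have h3 : 0 ≤ Ssum (U ⊔ Submodule.span ℝ {e}) 1 (t - 1) G' :=
              (ih G' hG'ss _ (t - 1)).2 (by omega)
            unfold Ssum at h3
            linarith
        linarith
    · -- upper: p = 1, t even
      intro ht
      rcases Nat.eq_zero_or_pos t with rfl | ht1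
      · rw [Ssum_t0]; norm_num
      have ht2 : 2 ≤ t := by omega
      rw [hGi, Ssum_insert U 1 t heG']
      rcases Finset.eq_empty_or_nonempty G' with hG'e | hG'ne
      · -- G = {e}: 1 - [Ind {e}] ≥ 0
        rw [hG'e, Ssum_empty, Finset.powerset_empty, Finset.sum_singleton]
        have : -1 ≤ gS U 1 t (insert e ∅) := by
          unfold gS
          rw [show (insert e ∅ : Finset Vec) = {e} by rfl, Finset.card_singleton, if_pos (by omega),
            if_pos (by omega)]
          split <;> norm_num
        linarith
      · have h1 : 0 ≤ Ssum U 1 t G' := (ih G' hG'ss U t).2 ht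
        have h2 : 0 ≤ (∑ F ∈ G'.powerset, gS U 1 t (insert e F)) := by
          by_cases heU : e ∈ U
          · apply Finset.sum_nonneg
            intro F hF
            exact gS_insert_mem_nonneg heU
              (fun hh => heG' (Finset.mem_powerset.mp hF hh))
          · have hrw : ∀ F ∈ G'.powerset, gS U 1 t (insert e F)
                = - gS (U ⊔ Submodule.span ℝ {e}) 0 (t - 1) F := by
              intro F hF
              have := gS_insert_not_mem heU (fun hh => heG' (Finset.mem_powerset.mp hF hh))
                (p := 1) (t := t) (by omega) (by omega)
              simpa using this
            rw [Finset.sum_congr rfl hrw, Finset.sum_neg_distrib]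
            have h3 : Ssum (U ⊔ Submodule.span ℝ {e}) 0 (t - 1) G' ≤ 0 :=
              (ih G' hG'ss _ (t - 1)).1 hG'ne (by omega)
            unfold Ssum at h3
            linarith
        linarith
def chiS (p k γ : ℕ) (E : Finset (EuclideanSpace ℝ (Fin n))) : ℝ :=
  if E.card ≤ γ then
    (-1 : ℝ) ^ (E.card - k) *
      (if (E.card - k) % 2 = p then (if IndU ⊥ E then 1 else 0) else (if CorU ⊥ E then 1 else 0))
  else 0

lemma neg_one_pow_of_mod {m : ℕ} (h : m % 2 = 1) : ((-1 : ℝ)) ^ m = -1 :=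
  Odd.neg_one_pow (Nat.odd_iff.mpr h)

lemma finrank_span_of_IndU {K : Finset Vec} (hK : IndU ⊥ K) :
    finrank ℝ ↥(Submodule.span ℝ (K : Set Vec)) = K.card := by
  unfold IndU dU at hK
  rw [bot_sup_eq] at hK
  simpa using hK

lemma Phi_eq_Ssum {K V : Finset Vec} (hK : IndU ⊥ K) (hKV : K ⊆ V) {k γ : ℕ}
    (hkc : K.card = k) (hkγ : k ≤ γ) (p : ℕ) :
    ∑ E ∈ V.powerset.filter (fun E => K ⊆ E), chiS p k γ E
      = Ssum (Submodule.span ℝ (K : Set Vec)) p (γ - k) (V \ K) := by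
  have hfr : finrank ℝ ↥(Submodule.span ℝ (K : Set Vec)) = k := by
    rw [finrank_span_of_IndU hK, hkc]
  unfold Ssum
  apply Finset.sum_nbij' (i := fun E => E \ K) (j := fun F => K ∪ F)
  · intro E hE
    simp only [Finset.mem_filter, Finset.mem_powerset] at hE
    exact Finset.mem_powerset.mpr (Finset.sdiff_subset_sdiff hE.1 (le_refl _))
  · intro F hF
    simp only [Finset.mem_powerset] at hF
    simp only [Finset.mem_filter, Finset.mem_powerset]
    exact ⟨Finset.union_subset hKV (hF.trans (Finset.sdiff_subset)), Finset.subset_union_left⟩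
  · intro E hE
    simp only [Finset.mem_filter, Finset.mem_powerset] at hE
    exact Finset.union_sdiff_of_subset hE.2
  · intro F hF
    simp only [Finset.mem_powerset] at hF
    exact Finset.union_sdiff_cancel_left
      (Finset.disjoint_of_subset_right hF Finset.disjoint_sdiff)
  · intro E hE
    simp only [Finset.mem_filter, Finset.mem_powerset] at hE
    obtain ⟨hEV, hKE⟩ := hE
    have hcard : (E \ K).card = E.card - k := by rw [Finset.card_sdiff_of_subset hKE, hkc]
    have hkE : k ≤ E.card := hkc ▸ Finset.card_le_card hKE
    -- identify E = K ∪ (E \ K)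
    have hEu : E = K ∪ (E \ K) := (Finset.union_sdiff_of_subset hKE).symm
    have hdU : dU ⊥ E = dU (Submodule.span ℝ (K : Set Vec)) (E \ K) := by
      conv_lhs => rw [hEu]
      rw [dU_union, bot_sup_eq]
    have hInd : IndU ⊥ E ↔ IndU (Submodule.span ℝ (K : Set Vec)) (E \ K) := by
      unfold IndU
      rw [hdU, hfr, finrank_bot, hcard]
      omega
    have hCor : CorU ⊥ E ↔ CorU (Submodule.span ℝ (K : Set Vec)) (E \ K) := by
      unfold CorU
      rw [hdU, hfr, finrank_bot, hcard]
      omega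
    unfold chiS gS
    rw [hcard]
    have hle : E.card ≤ γ ↔ E.card - k ≤ γ - k := by omega
    by_cases h1 : E.card ≤ γ
    · rw [if_pos h1, if_pos (hle.mp h1)]
      congr 1
      by_cases h2 : (E.card - k) % 2 = p
      · rw [if_pos h2, if_pos h2]
        split_ifs with h3 h4 h4
        · rfl
        · exact absurd (hInd.mp h3) h4
        · exact absurd (hInd.mpr h4) h3
        · rfl
      · rw [if_neg h2, if_neg h2]
        split_ifs with h3 h4 h4
        · rfl
        · exact absurd (hCor.mp h3) h4
        · exact absurd (hCor.mpr h4) h3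
        · rfl
    · rw [if_neg h1, if_neg (fun hh => h1 (hle.mpr hh))]
lemma chiS_nonpos_of_dep {K E : Finset Vec} (hKE : K ⊆ E) (hKdep : ¬ IndU ⊥ K)
    {k γ : ℕ} (hkc : K.card = k) : chiS 0 k γ E ≤ 0 := by
  unfold chiS
  split_ifs with h1 h2 h3 h3
  · exact absurd (IndU_of_subset hKE h3) hKdep
  · simp
  · rw [neg_one_pow_of_mod (by omega)]; norm_num
  · simp
  · exact le_refl 0

lemma chiS_nonneg_of_dep {K E : Finset Vec} (hKE : K ⊆ E) (hKdep : ¬ IndU ⊥ K)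
    {k γ : ℕ} (hkc : K.card = k) : 0 ≤ chiS 1 k γ E := by
  unfold chiS
  split_ifs with h1 h2 h3 h3
  · exact absurd (IndU_of_subset hKE h3) hKdep
  · simp
  · have : (E.card - k) % 2 = 0 := by omega
    rw [Even.neg_one_pow (Nat.even_iff.mpr this)]; norm_num
  · simp
  · exact le_refl 0

lemma filter_subset_self_powerset (K : Finset Vec) :
    K.powerset.filter (fun E => K ⊆ E) = {K} := by
  ext E
  simp only [Finset.mem_filter, Finset.mem_powerset, Finset.mem_singleton]
  constructor
  · rintro ⟨h1, h2⟩; exact Finset.Subset.antisymm h1 h2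
  · rintro rfl; exact ⟨le_refl _, le_refl _⟩

/-- Lower bound per pair. -/
lemma Phi_le {K V : Finset Vec} (hKV : K ⊆ V) {k γ : ℕ} (hkc : K.card = k) (hk : 1 ≤ k)
    (hkγ : k ≤ γ) (hγ : (γ - k) % 2 = 1) :
    ∑ E ∈ V.powerset.filter (fun E => K ⊆ E), chiS 0 k γ E
      ≤ (if V = K ∧ IndU ⊥ K then 1 else 0) := by
  by_cases hK : IndU ⊥ K
  · by_cases hVK : V = K
    · subst hVK
      rw [filter_subset_self_powerset, Finset.sum_singleton, if_pos ⟨rfl, hK⟩]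
      unfold chiS
      rw [hkc, if_pos hkγ]
      simp [hK]
    · rw [if_neg (fun h => hVK h.1)]
      rw [Phi_eq_Ssum hK hKV hkc hkγ]
      have hne : (V \ K).Nonempty := by
        rw [Finset.sdiff_nonempty]
        exact fun h => hVK (Finset.Subset.antisymm h hKV)
      exact (S_main (V \ K) _ (γ - k)).1 hne hγ
  · rw [if_neg (fun h => hK h.2)]
    apply Finset.sum_nonpos
    intro E hE
    exact chiS_nonpos_of_dep (Finset.mem_filter.mp hE).2 hK hkc

/-- Upper bound per pair. -/
lemma Phi_ge {K V : Finset Vec} (hKV : K ⊆ V) {k γ : ℕ} (hkc : K.card = k) (hk : 1 ≤ k)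
    (hkγ : k ≤ γ) (hγ : (γ - k) % 2 = 0) :
    (if V = K ∧ IndU ⊥ K then 1 else 0)
      ≤ ∑ E ∈ V.powerset.filter (fun E => K ⊆ E), chiS 1 k γ E := by
  by_cases hK : IndU ⊥ K
  · by_cases hVK : V = K
    · rw [if_pos ⟨hVK, hK⟩, hVK, filter_subset_self_powerset, Finset.sum_singleton]
      unfold chiS
      rw [hkc, if_pos hkγ]
      have hCor : CorU ⊥ K := by
        unfold CorU
        unfold IndU at hK
        omega
      simp only [Nat.sub_self, pow_zero, one_mul]
      rw [if_neg (by omega), if_pos hCor]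
    · rw [if_neg (fun h => hVK h.1)]
      rw [Phi_eq_Ssum hK hKV hkc hkγ]
      refine le_trans ?_ ((S_main (V \ K) _ (γ - k)).2 hγ)
      exact le_refl 0
  · rw [if_neg (fun h => hK h.2)]
    apply Finset.sum_nonneg
    intro E hE
    exact chiS_nonneg_of_dep (Finset.mem_filter.mp hE).2 hK hkc
def lam (M k v : ℕ) : ℝ := (k : ℝ) / (v * (M.choose v))

lemma lam_nonneg (M k v : ℕ) : 0 ≤ lam M k v := by
  unfold lam
  positivity

lemma count_supersets {W E : Finset Vec} (hE : E ⊆ W) {v : ℕ} (hv : E.card ≤ v) :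
    (W.powerset.filter (fun V => E ⊆ V ∧ V.card = v)).card
      = (W.card - E.card).choose (v - E.card) := by
  have hrw : (W.card - E.card).choose (v - E.card) = ((W \ E).powersetCard (v - E.card)).card := by
    rw [Finset.card_powersetCard, Finset.card_sdiff_of_subset hE]
  rw [hrw]
  apply Finset.card_bij (i := fun V _ => V \ E)
  · intro V hV
    simp only [Finset.mem_filter, Finset.mem_powerset] at hV
    rw [Finset.mem_powersetCard]
    exact ⟨Finset.sdiff_subset_sdiff hV.1 (le_refl _),
      by rw [Finset.card_sdiff_of_subset hV.2.1, hV.2.2]⟩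
  · intro V1 hV1 V2 hV2 heq
    simp only [Finset.mem_filter, Finset.mem_powerset] at hV1 hV2
    have h1 : V1 = E ∪ (V1 \ E) := (Finset.union_sdiff_of_subset hV1.2.1).symm
    have h2 : V2 = E ∪ (V2 \ E) := (Finset.union_sdiff_of_subset hV2.2.1).symm
    rw [h1, h2, heq]
  · intro F hF
    rw [Finset.mem_powersetCard] at hF
    refine ⟨E ∪ F, ?_, ?_⟩
    · simp only [Finset.mem_filter, Finset.mem_powerset]
      have hFW : F ⊆ W := hF.1.trans (Finset.sdiff_subset)
      have hdisj : Disjoint E F := Finset.disjoint_of_subset_right hF.1 Finset.disjoint_sdiff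
      refine ⟨Finset.union_subset hE hFW, Finset.subset_union_left, ?_⟩
      rw [Finset.card_union_of_disjoint hdisj, hF.2]
      omega
    · exact Finset.union_sdiff_cancel_left
        (Finset.disjoint_of_subset_right hF.1 Finset.disjoint_sdiff)
lemma nat_trinomial {M v h : ℕ} (hhv : h ≤ v) (hvM : v ≤ M) :
    M.choose h * (M - h).choose (v - h) = M.choose v * v.choose h :=
  (Nat.choose_mul (n := M) hhv).symm

lemma nat_absorb {v h : ℕ} (hh : 1 ≤ h) (hhv : h ≤ v) :
    v * (v - 1).choose (h - 1) = v.choose h * h := by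
  have := Nat.add_one_mul_choose_eq (v - 1) (h - 1)
  have hv1 : v - 1 + 1 = v := by omega
  have hh1 : h - 1 + 1 = h := by omega
  rw [hv1, hh1] at this
  exact this

lemma perv_identity {M v h k : ℕ} (hh : 1 ≤ h) (hhv : h ≤ v) (hvM : v ≤ M) :
    ((M - h).choose (v - h) : ℝ) * lam M k v
      = (k : ℝ) * ((v - 1).choose (h - 1)) / (h * (M.choose h)) := by
  unfold lam
  have hv : 1 ≤ v := le_trans hh hhv
  have hMv : (0:ℝ) < (M.choose v : ℝ) := by
    exact_mod_cast Nat.choose_pos hvM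
  have hMh : (0:ℝ) < (M.choose h : ℝ) := by
    exact_mod_cast Nat.choose_pos (le_trans hhv hvM)
  have hv0 : (0:ℝ) < (v:ℝ) := by exact_mod_cast hv
  have hh0 : (0:ℝ) < (h:ℝ) := by exact_mod_cast hh
  have key : ((M - h).choose (v - h) : ℝ) * (h * (M.choose h))
      = ((v - 1).choose (h - 1) : ℝ) * (v * (M.choose v)) := by
    have : (M.choose h * (M - h).choose (v - h)) * h = (M.choose v * v.choose h) * h := by
      rw [nat_trinomial hhv hvM]
    calc ((M - h).choose (v - h) : ℝ) * (h * (M.choose h))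
        = ((M.choose h * (M - h).choose (v - h)) * h : ℕ) := by push_cast; ring
      _ = ((M.choose v * (v.choose h * h)) : ℕ) := by rw [this]; ring_nf
      _ = ((M.choose v * (v * (v - 1).choose (h - 1))) : ℕ) := by
            rw [nat_absorb hh hhv]
      _ = ((v - 1).choose (h - 1) : ℝ) * (v * (M.choose v)) := by push_cast; ring
  field_simp
  nlinarith [key, sq_nonneg ((k:ℝ))]

lemma hockey {M h : ℕ} (hh : 1 ≤ h) (hM : h ≤ M) :
    ∑ v ∈ Finset.Icc h M, ((v - 1).choose (h - 1) : ℝ) = (M.choose h : ℝ) := by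
  have : ∑ v ∈ Finset.Icc h M, ((v - 1).choose (h - 1) : ℕ) = M.choose h := by
    have hmap : Finset.Icc h M = (Finset.Icc (h - 1) (M - 1)).map
        (addRightEmbedding 1) := by
      rw [Finset.map_add_right_Icc]
      congr 1 <;> omega
    rw [hmap, Finset.sum_map]
    have : ∀ m ∈ Finset.Icc (h - 1) (M - 1),
        ((addRightEmbedding 1 m) - 1).choose (h - 1) = m.choose (h - 1) := by
      intro m _
      simp [addRightEmbedding]
    rw [Finset.sum_congr rfl this, Nat.sum_Icc_choose]
    congr 1 <;> omega
  exact_mod_cast congrArg (Nat.cast : ℕ → ℝ) this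

/-- The weight identity: total λ-weight over supersets of `E` equals `k / E.card`. -/
lemma wgt_eq {W E : Finset Vec} (hE : E ⊆ W) (k : ℕ) (hh : 1 ≤ E.card) :
    ∑ V ∈ W.powerset.filter (fun V => E ⊆ V), lam W.card k V.card
      = (k : ℝ) / E.card := by
  set M := W.card with hM
  set h := E.card with hhE
  have hhM : h ≤ M := Finset.card_le_card hE
  have hfib : ∑ V ∈ W.powerset.filter (fun V => E ⊆ V), lam M k V.card
      = ∑ v ∈ Finset.Icc h M, ∑ V ∈ (W.powerset.filter (fun V => E ⊆ V)).filter
          (fun V => V.card = v), lam M k V.card := by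
    rw [Finset.sum_fiberwise_of_maps_to]
    intro V hV
    simp only [Finset.mem_filter, Finset.mem_powerset] at hV
    rw [Finset.mem_Icc]
    exact ⟨Finset.card_le_card hV.2, Finset.card_le_card hV.1⟩
  rw [hfib]
  have hinner : ∀ v ∈ Finset.Icc h M,
      ∑ V ∈ (W.powerset.filter (fun V => E ⊆ V)).filter (fun V => V.card = v), lam M k V.card
        = ((M - h).choose (v - h) : ℝ) * lam M k v := by
    intro v hv
    rw [Finset.mem_Icc] at hv
    rw [Finset.filter_filter]
    have hc : (W.powerset.filter (fun V => E ⊆ V ∧ V.card = v)).card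
        = (M - h).choose (v - h) := count_supersets hE hv.1
    rw [Finset.sum_congr rfl (fun V hV => by
      rw [(Finset.mem_filter.mp hV).2.2]), Finset.sum_const, hc, nsmul_eq_mul]
  rw [Finset.sum_congr rfl hinner]
  have hper : ∀ v ∈ Finset.Icc h M, ((M - h).choose (v - h) : ℝ) * lam M k v
      = (k : ℝ) * ((v - 1).choose (h - 1)) / (h * (M.choose h)) := by
    intro v hv
    rw [Finset.mem_Icc] at hv
    exact perv_identity hh hv.1 hv.2
  rw [Finset.sum_congr rfl hper, ← Finset.sum_div, ← Finset.mul_sum, hockey hh hhM]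
  have hch : (0:ℝ) < (M.choose h : ℝ) := by exact_mod_cast Nat.choose_pos hhM
  have hh0 : (0:ℝ) < (h:ℝ) := by exact_mod_cast hh
  field_simp
lemma chiS_eq_zero_of_gt {p k γ : ℕ} {E : Finset Vec} (h : ¬ E.card ≤ γ) :
    chiS p k γ E = 0 := by
  unfold chiS
  rw [if_neg h]

/-- R1: fold the h-indexed sum into an E-indexed sum. -/
lemma reorg1 (W : Finset Vec) (p k γ : ℕ) (hk : 1 ≤ k) :
    ∑ h ∈ Finset.Icc k γ, ((h - 1).choose (k - 1) : ℝ) *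
        (∑ E ∈ W.powerset.filter (fun E => E.card = h), chiS p k γ E)
      = ∑ E ∈ W.powerset.filter (fun E => k ≤ E.card),
          ((E.card - 1).choose (k - 1) : ℝ) * chiS p k γ E := by
  have step1 : ∑ E ∈ W.powerset.filter (fun E => k ≤ E.card),
        ((E.card - 1).choose (k - 1) : ℝ) * chiS p k γ E
      = ∑ E ∈ W.powerset.filter (fun E => k ≤ E.card ∧ E.card ≤ γ),
          ((E.card - 1).choose (k - 1) : ℝ) * chiS p k γ E := by
    symm
    apply Finset.sum_subset
    · intro E hE
      simp only [Finset.mem_filter] at hE ⊢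
      exact ⟨hE.1, hE.2.1⟩
    · intro E hE1 hE2
      simp only [Finset.mem_filter] at hE1 hE2
      have : ¬ E.card ≤ γ := by
        by_contra h
        exact hE2 ⟨hE1.1, hE1.2, h⟩
      rw [chiS_eq_zero_of_gt this, mul_zero]
  have hmap : ∀ E ∈ W.powerset.filter (fun E => k ≤ E.card ∧ E.card ≤ γ),
      E.card ∈ Finset.Icc k γ := by
    intro E hE
    simp only [Finset.mem_filter] at hE
    rw [Finset.mem_Icc]
    exact hE.2
  have step2 := (Finset.sum_fiberwise_of_maps_to hmap
    (fun E => ((E.card - 1).choose (k - 1) : ℝ) * chiS p k γ E)).symm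
  rw [step1, step2]
  apply Finset.sum_congr rfl
  intro h hh
  rw [Finset.mem_Icc] at hh
  have hset : (W.powerset.filter (fun E => k ≤ E.card ∧ E.card ≤ γ)).filter
      (fun E => E.card = h) = W.powerset.filter (fun E => E.card = h) := by
    ext E
    simp only [Finset.mem_filter, Finset.mem_powerset]
    constructor
    · rintro ⟨⟨h1, _⟩, h3⟩; exact ⟨h1, h3⟩
    · rintro ⟨h1, h3⟩; exact ⟨⟨h1, by omega, by omega⟩, h3⟩
  rw [hset, Finset.mul_sum]
  apply Finset.sum_congr rfl
  intro E hE
  rw [(Finset.mem_filter.mp hE).2]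
lemma card_choose_as_sum {W E : Finset Vec} (hE : E ∈ W.powerset) (k : ℕ) :
    ((E.card.choose k : ℕ) : ℝ)
      = ∑ K ∈ W.powerset, (if K ⊆ E ∧ K.card = k then (1:ℝ) else 0) := by
  rw [Finset.mem_powerset] at hE
  rw [← Finset.sum_filter]
  have hset : W.powerset.filter (fun K => K ⊆ E ∧ K.card = k) = E.powersetCard k := by
    ext K
    simp only [Finset.mem_filter, Finset.mem_powerset, Finset.mem_powersetCard]
    constructor
    · rintro ⟨_, h2, h3⟩; exact ⟨h2, h3⟩
    · rintro ⟨h2, h3⟩; exact ⟨h2.trans hE, h2, h3⟩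
  rw [hset, Finset.sum_const, Finset.card_powersetCard, nsmul_eq_mul, mul_one]

/-- R2-R4 : from E-indexed sum to (V, K)-indexed sums of Φ. -/
lemma reorg2 (W : Finset Vec) (p k γ : ℕ) (hk : 1 ≤ k) :
    ∑ E ∈ W.powerset.filter (fun E => k ≤ E.card),
        ((E.card - 1).choose (k - 1) : ℝ) * chiS p k γ E
      = ∑ V ∈ W.powerset, ∑ K ∈ W.powerset.filter (fun K => K ⊆ V ∧ K.card = k),
          lam W.card k V.card *
            (∑ E ∈ V.powerset.filter (fun E => K ⊆ E), chiS p k γ E) := by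
  set M := W.card with hM
  have stepA : ∀ E ∈ W.powerset.filter (fun E => k ≤ E.card),
      ((E.card - 1).choose (k - 1) : ℝ) * chiS p k γ E
        = ∑ V ∈ W.powerset, (if E ⊆ V then lam M k V.card else 0) *
            ((E.card.choose k : ℕ) : ℝ) * chiS p k γ E := by
    intro E hE
    simp only [Finset.mem_filter, Finset.mem_powerset] at hE
    obtain ⟨hEW, hkE⟩ := hE
    have hh : 1 ≤ E.card := le_trans hk hkE
    rw [← Finset.sum_mul, ← Finset.sum_mul, ← Finset.sum_filter, wgt_eq hEW k hh]
    congr 1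
    have hnat : E.card * ((E.card - 1).choose (k - 1)) = E.card.choose k * k :=
      nat_absorb hk hkE
    have hE0 : (0:ℝ) < (E.card : ℝ) := by exact_mod_cast hh
    field_simp
    calc ((E.card - 1).choose (k - 1) : ℝ) * E.card
        = ((E.card * ((E.card - 1).choose (k - 1)) : ℕ) : ℝ) := by push_cast; ring
      _ = ((E.card.choose k * k : ℕ) : ℝ) := by rw [hnat]
      _ = (k:ℝ) * (E.card.choose k) := by push_cast; ring
  rw [Finset.sum_congr rfl stepA]
  have stepB : ∀ E ∈ W.powerset.filter (fun E => k ≤ E.card),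
      (∑ V ∈ W.powerset, (if E ⊆ V then lam M k V.card else 0) *
          ((E.card.choose k : ℕ) : ℝ) * chiS p k γ E)
        = ∑ V ∈ W.powerset, ∑ K ∈ W.powerset,
            (if K ⊆ E ∧ K.card = k ∧ E ⊆ V then lam M k V.card * chiS p k γ E else 0) := by
    intro E hE
    have hEW : E ∈ W.powerset := (Finset.mem_filter.mp hE).1
    apply Finset.sum_congr rfl
    intro V _
    rw [card_choose_as_sum hEW k, Finset.mul_sum, Finset.sum_mul]
    apply Finset.sum_congr rfl
    intro K _
    by_cases h1 : E ⊆ V <;> by_cases h2 : K ⊆ E ∧ K.card = k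
    · rw [if_pos h1, if_pos h2, if_pos ⟨h2.1, h2.2, h1⟩]; ring
    · rw [if_pos h1, if_neg h2, if_neg (fun h : K ⊆ E ∧ K.card = k ∧ E ⊆ V => h2 ⟨h.1, h.2.1⟩)]; ring
    · rw [if_neg h1, if_neg (fun h : K ⊆ E ∧ K.card = k ∧ E ⊆ V => h1 h.2.2)]; ring
    · rw [if_neg h1, if_neg (fun h : K ⊆ E ∧ K.card = k ∧ E ⊆ V => h1 h.2.2)]; ring
  rw [Finset.sum_congr rfl stepB]
  rw [Finset.sum_comm]
  apply Finset.sum_congr rfl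
  intro V hV
  have hVW : V ⊆ W := Finset.mem_powerset.mp hV
  rw [Finset.sum_comm]
  have e2 : W.powerset.filter (fun E => E ⊆ V) = V.powerset := by
    ext E
    simp only [Finset.mem_filter, Finset.mem_powerset]
    exact ⟨fun h => h.2, fun h => ⟨h.trans hVW, h⟩⟩
  have inner : ∀ K ∈ W.powerset,
      (∑ E ∈ W.powerset.filter (fun E => k ≤ E.card),
        (if K ⊆ E ∧ K.card = k ∧ E ⊆ V then lam M k V.card * chiS p k γ E else 0))
      = (if K ⊆ V ∧ K.card = k then
          lam M k V.card * (∑ E ∈ V.powerset.filter (fun E => K ⊆ E), chiS p k γ E) else 0) := by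
    intro K _
    by_cases hKV : K ⊆ V ∧ K.card = k
    · rw [if_pos hKV]
      obtain ⟨hKVs, hKk⟩ := hKV
      have e1 : ∑ E ∈ W.powerset.filter (fun E => k ≤ E.card),
          (if K ⊆ E ∧ K.card = k ∧ E ⊆ V then lam M k V.card * chiS p k γ E else 0)
          = ∑ E ∈ W.powerset,
              (if E ⊆ V then (if K ⊆ E then lam M k V.card * chiS p k γ E else 0) else 0) := by
        rw [Finset.sum_filter]
        apply Finset.sum_congr rfl
        intro E _
        by_cases h1 : K ⊆ E
        · by_cases h3 : E ⊆ V
          · have hcard : k ≤ E.card := hKk ▸ Finset.card_le_card h1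
            rw [if_pos hcard, if_pos ⟨h1, hKk, h3⟩, if_pos h3, if_pos h1]
          · by_cases h2 : k ≤ E.card
            · rw [if_pos h2, if_neg (fun h : K ⊆ E ∧ K.card = k ∧ E ⊆ V => h3 h.2.2), if_neg h3]
            · rw [if_neg h2, if_neg h3]
        · by_cases h3 : E ⊆ V
          · by_cases h2 : k ≤ E.card
            · rw [if_pos h2, if_neg (fun h : K ⊆ E ∧ K.card = k ∧ E ⊆ V => h1 h.1), if_pos h3, if_neg h1]
            · rw [if_neg h2, if_pos h3, if_neg h1]
          · by_cases h2 : k ≤ E.card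
            · rw [if_pos h2, if_neg (fun h : K ⊆ E ∧ K.card = k ∧ E ⊆ V => h1 h.1), if_neg h3]
            · rw [if_neg h2, if_neg h3]
      rw [e1, ← Finset.sum_filter, e2, Finset.mul_sum, Finset.sum_filter]
    · rw [if_neg hKV]
      apply Finset.sum_eq_zero
      intro E _
      rw [if_neg]
      rintro ⟨h1, h2, h3⟩
      exact hKV ⟨h1.trans h3, h2⟩
  rw [Finset.sum_congr rfl inner, ← Finset.sum_filter]
lemma target_eval (W : Finset Vec) (k : ℕ) (hk : 1 ≤ k) :
    ∑ V ∈ W.powerset, ∑ K ∈ W.powerset.filter (fun K => K ⊆ V ∧ K.card = k),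
        lam W.card k V.card * (if V = K ∧ IndU ⊥ K then (1:ℝ) else 0)
      = ((W.powerset.filter (fun K => K.card = k ∧ IndU ⊥ K)).card : ℝ)
          / (W.card.choose k) := by
  set M := W.card with hM
  have hinner : ∀ V ∈ W.powerset,
      (∑ K ∈ W.powerset.filter (fun K => K ⊆ V ∧ K.card = k),
        lam M k V.card * (if V = K ∧ IndU ⊥ K then (1:ℝ) else 0))
      = (if V.card = k ∧ IndU ⊥ V then lam M k k else 0) := by
    intro V hV
    by_cases hc : V.card = k ∧ IndU ⊥ V
    · rw [if_pos hc]
      rw [Finset.sum_eq_single V]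
      · rw [if_pos ⟨rfl, hc.2⟩, mul_one, hc.1]
      · intro K hK hKV
        rw [if_neg (fun h => hKV (h.1.symm)), mul_zero]
      · intro hVn
        exact absurd (Finset.mem_filter.mpr ⟨hV, le_refl V, hc.1⟩) hVn
    · rw [if_neg hc]
      apply Finset.sum_eq_zero
      intro K hK
      have hKm := Finset.mem_filter.mp hK
      rw [if_neg, mul_zero]
      rintro ⟨rfl, hInd⟩
      exact hc ⟨hKm.2.2, hInd⟩
  rw [Finset.sum_congr rfl hinner, ← Finset.sum_filter]
  have hfe : W.powerset.filter (fun V => V.card = k ∧ IndU ⊥ V)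
      = W.powerset.filter (fun K => K.card = k ∧ IndU ⊥ K) := rfl
  rw [hfe, Finset.sum_const, nsmul_eq_mul]
  set cnt := (W.powerset.filter (fun K => K.card = k ∧ IndU ⊥ K)).card with hcnt
  by_cases hMk : k ≤ M
  · have hC : (0:ℝ) < (M.choose k : ℝ) := by exact_mod_cast Nat.choose_pos hMk
    have hk0 : (0:ℝ) < (k:ℝ) := by exact_mod_cast hk
    unfold lam
    field_simp
  · have hcnt0 : cnt = 0 := by
      rw [hcnt, Finset.card_eq_zero, Finset.filter_eq_empty_iff]
      rintro K hKW ⟨hKc, _⟩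
      exact hMk (hKc ▸ Finset.card_le_card (Finset.mem_powerset.mp hKW))
    rw [hcnt0]
    simp

/-- Master lower bound. -/
theorem master_low (W : Finset Vec) (k γ : ℕ) (hk : 1 ≤ k) (hkγ : k ≤ γ)
    (hγ : (γ - k) % 2 = 1) :
    ∑ h ∈ Finset.Icc k γ, ((h - 1).choose (k - 1) : ℝ) *
        (∑ E ∈ W.powerset.filter (fun E => E.card = h), chiS 0 k γ E)
      ≤ ((W.powerset.filter (fun K => K.card = k ∧ IndU ⊥ K)).card : ℝ)
          / (W.card.choose k) := by
  rw [reorg1 W 0 k γ hk, reorg2 W 0 k γ hk, ← target_eval W k hk]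
  apply Finset.sum_le_sum
  intro V hV
  apply Finset.sum_le_sum
  intro K hK
  have hKm := Finset.mem_filter.mp hK
  exact mul_le_mul_of_nonneg_left
    (Phi_le hKm.2.1 hKm.2.2 hk hkγ hγ) (lam_nonneg _ _ _)

/-- Master upper bound. -/
theorem master_up (W : Finset Vec) (k γ : ℕ) (hk : 1 ≤ k) (hkγ : k ≤ γ)
    (hγ : (γ - k) % 2 = 0) :
    ((W.powerset.filter (fun K => K.card = k ∧ IndU ⊥ K)).card : ℝ)
          / (W.card.choose k)
      ≤ ∑ h ∈ Finset.Icc k γ, ((h - 1).choose (k - 1) : ℝ) *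
        (∑ E ∈ W.powerset.filter (fun E => E.card = h), chiS 1 k γ E) := by
  rw [reorg1 W 1 k γ hk, reorg2 W 1 k γ hk, ← target_eval W k hk]
  apply Finset.sum_le_sum
  intro V hV
  apply Finset.sum_le_sum
  intro K hK
  have hKm := Finset.mem_filter.mp hK
  exact mul_le_mul_of_nonneg_left
    (Phi_ge hKm.2.1 hKm.2.2 hk hkγ hγ) (lam_nonneg _ _ _)
lemma IndU_iff_linearIndependent (E : Finset Vec) :
    IndU ⊥ E ↔ LinearIndependent ℝ
      (fun v : ((E : Set (EuclideanSpace ℝ (Fin n)))) => (v : EuclideanSpace ℝ (Fin n))) := by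
  rw [linearIndependent_iff_card_eq_finrank_span]
  unfold IndU dU
  rw [bot_sup_eq, finrank_bot]
  have h1 : Fintype.card ((E : Set (EuclideanSpace ℝ (Fin n)))) = E.card := by
    simp
  have h2 : Set.range (fun v : ((E : Set (EuclideanSpace ℝ (Fin n)))) =>
      (v : EuclideanSpace ℝ (Fin n))) = (E : Set (EuclideanSpace ℝ (Fin n))) :=
    Subtype.range_coe
  rw [h1, h2]
  unfold Set.finrank
  omega

lemma indepSubsets_eq (W : Finset Vec) (h : ℕ) :
    indepSubsets h (↑W : Set (EuclideanSpace ℝ (Fin n)))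
      = ↑(W.powerset.filter (fun E => E.card = h ∧ IndU ⊥ E)) := by
  ext E
  simp only [indepSubsets, Set.mem_setOf_eq, Finset.coe_filter, Finset.mem_powerset,
    Finset.mem_coe, Finset.mem_filter, Finset.coe_subset]
  rw [IndU_iff_linearIndependent]
  all_goals tauto

lemma corank1Subsets_eq (W : Finset Vec) (h : ℕ) :
    corank1Subsets h (↑W : Set (EuclideanSpace ℝ (Fin n)))
      = ↑(W.powerset.filter (fun E => E.card = h ∧ CorU ⊥ E)) := by
  ext E
  simp only [corank1Subsets, Set.mem_setOf_eq, Finset.coe_filter, Finset.mem_powerset,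
    Finset.mem_coe, Finset.mem_filter, Finset.coe_subset]
  unfold CorU dU
  rw [bot_sup_eq, finrank_bot]
  constructor
  · rintro ⟨h1, h2, h3⟩
    exact ⟨h1, h2, by omega⟩
  · rintro ⟨h1, h2, h3⟩
    exact ⟨h1, h2, by omega⟩

lemma ncard_indep (W : Finset Vec) (h : ℕ) :
    ((indepSubsets h (↑W : Set (EuclideanSpace ℝ (Fin n)))).ncard : ℝ)
      = ((W.powerset.filter (fun E => E.card = h ∧ IndU ⊥ E)).card : ℝ) := by
  rw [indepSubsets_eq, Set.ncard_coe_finset]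

lemma ncard_cor (W : Finset Vec) (h : ℕ) :
    ((corank1Subsets h (↑W : Set (EuclideanSpace ℝ (Fin n)))).ncard : ℝ)
      = ((W.powerset.filter (fun E => E.card = h ∧ CorU ⊥ E)).card : ℝ) := by
  rw [corank1Subsets_eq, Set.ncard_coe_finset]

lemma inner_sum_eval (W : Finset Vec) (p k γ h : ℕ) (hh : h ∈ Finset.Icc k γ) :
    ∑ E ∈ W.powerset.filter (fun E => E.card = h), chiS p k γ E
      = (-1:ℝ)^(h-k) * (if (h - k) % 2 = p
          then ((W.powerset.filter (fun E => E.card = h ∧ IndU ⊥ E)).card : ℝ)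
          else ((W.powerset.filter (fun E => E.card = h ∧ CorU ⊥ E)).card : ℝ)) := by
  rw [Finset.mem_Icc] at hh
  have hterm : ∀ E ∈ W.powerset.filter (fun E => E.card = h), chiS p k γ E
      = (-1:ℝ)^(h-k) * (if (h - k) % 2 = p then (if IndU ⊥ E then (1:ℝ) else 0)
          else (if CorU ⊥ E then (1:ℝ) else 0)) := by
    intro E hE
    have hc : E.card = h := (Finset.mem_filter.mp hE).2
    unfold chiS
    rw [hc, if_pos hh.2]
  rw [Finset.sum_congr rfl hterm, ← Finset.mul_sum]
  congr 1
  by_cases hp : (h - k) % 2 = p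
  · rw [if_pos hp]
    rw [Finset.sum_congr rfl (fun E _ => if_pos hp), Finset.sum_boole, Finset.filter_filter]
  · rw [if_neg hp]
    rw [Finset.sum_congr rfl (fun E _ => if_neg hp), Finset.sum_boole, Finset.filter_filter]
theorem sieve_inequality_for_independent_fraction (n : ℕ)
    (W : Finset (EuclideanSpace ℝ (Fin n))) (h0 : (0 : EuclideanSpace ℝ (Fin n)) ∉ W)
    (M : ℕ) (hM : W.card = M) (k : ℕ) (hk : 1 ≤ k)
    (α β : ℕ) (hkα : k ≤ α) (hkβ : k ≤ β) (hα : Odd (α - k)) (hβ : Even (β - k)) :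
    (∑ h ∈ Finset.Icc k α, (-1 : ℝ) ^ (h - k) * ((h - 1).choose (k - 1)) *
        (if Even (h - k) then ((indepSubsets h (↑W : Set (EuclideanSpace ℝ (Fin n)))).ncard : ℝ)
         else ((corank1Subsets h (↑W : Set (EuclideanSpace ℝ (Fin n)))).ncard : ℝ)) ≤
      (if k ≤ M then
        ((indepSubsets k (↑W : Set (EuclideanSpace ℝ (Fin n)))).ncard : ℝ) / (M.choose k)
       else 0)) ∧
    ((if k ≤ M then
        ((indepSubsets k (↑W : Set (EuclideanSpace ℝ (Fin n)))).ncard : ℝ) / (M.choose k)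
      else 0) ≤
      ∑ h ∈ Finset.Icc k β, (-1 : ℝ) ^ (h - k) * ((h - 1).choose (k - 1)) *
        (if Even (h - k) then ((corank1Subsets h (↑W : Set (EuclideanSpace ℝ (Fin n)))).ncard : ℝ)
         else ((indepSubsets h (↑W : Set (EuclideanSpace ℝ (Fin n)))).ncard : ℝ))) := by
  subst hM
  set M := W.card with hM
  set cnt := ((W.powerset.filter (fun K => K.card = k ∧ IndU ⊥ K)).card : ℝ) with hcnt
  have hrhs : (if k ≤ M then
      ((indepSubsets k (↑W : Set (EuclideanSpace ℝ (Fin n)))).ncard : ℝ) / (M.choose k)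
      else 0) = cnt / (M.choose k) := by
    by_cases hkM : k ≤ M
    · rw [if_pos hkM, ncard_indep]
    · rw [if_neg hkM]
      have hcnt0 : cnt = 0 := by
        rw [hcnt]
        norm_cast
        rw [Finset.card_eq_zero, Finset.filter_eq_empty_iff]
        rintro K hKW ⟨hKc, _⟩
        exact hkM (hKc ▸ Finset.card_le_card (Finset.mem_powerset.mp hKW))
      rw [hcnt0, zero_div]
  rw [hrhs]
  constructor
  · -- lower bound
    have hterm : ∀ h ∈ Finset.Icc k α,
        (-1 : ℝ) ^ (h - k) * ((h - 1).choose (k - 1)) *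
          (if Even (h - k) then ((indepSubsets h (↑W : Set (EuclideanSpace ℝ (Fin n)))).ncard : ℝ)
           else ((corank1Subsets h (↑W : Set (EuclideanSpace ℝ (Fin n)))).ncard : ℝ))
        = ((h - 1).choose (k - 1) : ℝ) *
            (∑ E ∈ W.powerset.filter (fun E => E.card = h), chiS 0 k α E) := by
      intro h hh
      rw [inner_sum_eval W 0 k α h hh, ncard_indep, ncard_cor]
      have : (if Even (h - k) then
          ((W.powerset.filter (fun E => E.card = h ∧ IndU ⊥ E)).card : ℝ)
          else ((W.powerset.filter (fun E => E.card = h ∧ CorU ⊥ E)).card : ℝ))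
        = (if (h - k) % 2 = 0 then
          ((W.powerset.filter (fun E => E.card = h ∧ IndU ⊥ E)).card : ℝ)
          else ((W.powerset.filter (fun E => E.card = h ∧ CorU ⊥ E)).card : ℝ)) := by
        by_cases hp : Even (h - k)
        · rw [if_pos hp, if_pos (Nat.even_iff.mp hp)]
        · rw [if_neg hp, if_neg (fun hm => hp (Nat.even_iff.mpr hm))]
      rw [this]
      ring
    rw [Finset.sum_congr rfl hterm]
    exact master_low W k α hk hkα (Nat.odd_iff.mp hα)
  · -- upper bound
    have hterm : ∀ h ∈ Finset.Icc k β,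
        (-1 : ℝ) ^ (h - k) * ((h - 1).choose (k - 1)) *
          (if Even (h - k) then ((corank1Subsets h (↑W : Set (EuclideanSpace ℝ (Fin n)))).ncard : ℝ)
           else ((indepSubsets h (↑W : Set (EuclideanSpace ℝ (Fin n)))).ncard : ℝ))
        = ((h - 1).choose (k - 1) : ℝ) *
            (∑ E ∈ W.powerset.filter (fun E => E.card = h), chiS 1 k β E) := by
      intro h hh
      rw [inner_sum_eval W 1 k β h hh, ncard_indep, ncard_cor]
      have : (if Even (h - k) then
          ((W.powerset.filter (fun E => E.card = h ∧ CorU ⊥ E)).card : ℝ)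
          else ((W.powerset.filter (fun E => E.card = h ∧ IndU ⊥ E)).card : ℝ))
        = (if (h - k) % 2 = 1 then
          ((W.powerset.filter (fun E => E.card = h ∧ IndU ⊥ E)).card : ℝ)
          else ((W.powerset.filter (fun E => E.card = h ∧ CorU ⊥ E)).card : ℝ)) := by
        by_cases hp : Even (h - k)
        · rw [if_pos hp, if_neg (by rw [Nat.even_iff] at hp; omega)]
        · rw [if_neg hp, if_pos (by rw [Nat.even_iff] at hp; omega)]
      rw [this]
      ring
    rw [Finset.sum_congr rfl hterm]
    exact master_up W k β hk hkβ (Nat.even_iff.mp hβ)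
end
end

section
/- Let n ≥ 2 and 1 ≤ N < n be integers, let 0 ≤ s < t be reals with V = t - s, and let T ⊆ [0,π]^{N(N-1)/2} be a Borel set. Define f : (ℝ^n)^N → ℝ by f(x_1, ..., x_N) = [∏_{i=1}^N 1(U·‖x_i‖^n ∈ [s,t])] · 1(({θ_{i,j}}_{1 ≤ j < i ≤ N}) ∈ T), where U is the volume of the n-dimensional unit ball. Then ∫_{(ℝ^n)^N} f(x_1, ..., x_N) dx_1 ⋯ dx_N = A(T) · V^N. -/
open MeasureTheory Matrix Metric
open scoped Classical

noncomputable section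

/-- `Uvol n` is the volume of the `n`-dimensional unit ball. -/
def Uvol (n : ℕ) : ℝ := (volume (Metric.ball (0 : EuclideanSpace ℝ (Fin n)) 1)).toReal

/-- The tuple of angles `θ_{i,j}` (for `j < i`) of a tuple of vectors `x_1, ..., x_N`:
`θ_{i,j}` is the angle between `x_i` and `x*_j`, the component of `x_j` orthogonal to
`span(x_1, ..., x_{j-1})` (obtained from the Gram-Schmidt process). -/
def angTuple {n N : ℕ} (x : Fin N → EuclideanSpace ℝ (Fin n)) :
    {p : Fin N × Fin N // p.2 < p.1} → ℝ :=
  fun p => InnerProductGeometry.angle (x p.1.1)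
    (@InnerProductSpace.gramSchmidt ℝ _ _ _ _ (Fin N) _ _ (inferInstance : WellFoundedLT (Fin N)) x p.1.2)

/-- The uniform (rotation invariant) probability measure on the unit sphere `S^{n-1}`. -/
def sphereMeasure (n : ℕ) : Measure (Metric.sphere (0 : EuclideanSpace ℝ (Fin n)) 1) :=
  (((volume : Measure (EuclideanSpace ℝ (Fin n))).toSphere Set.univ)⁻¹) •
    (volume : Measure (EuclideanSpace ℝ (Fin n))).toSphere

/-- `Aprob n N T` is the probability that `N` independent uniformly distributed random points
on the unit sphere `S^{n-1}` have their angle tuple `{θ_{i,j}}` in `T`. -/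
def Aprob (n N : ℕ) (T : Set ({p : Fin N × Fin N // p.2 < p.1} → ℝ)) : ℝ :=
  ((Measure.pi fun _ : Fin N => sphereMeasure n)
    {u | angTuple (fun i => ((u i : EuclideanSpace ℝ (Fin n)))) ∈ T}).toReal

/-! ### Auxiliary lemmas -/

/-- Abbreviation for the Gram-Schmidt process with the same instance path as in `angTuple`. -/
def gs {n N : ℕ} (x : Fin N → EuclideanSpace ℝ (Fin n)) : Fin N → EuclideanSpace ℝ (Fin n) :=
  @InnerProductSpace.gramSchmidt ℝ _ _ _ _ (Fin N) _ _ (inferInstance : WellFoundedLT (Fin N)) x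

lemma angTuple_eq {n N : ℕ} (x : Fin N → EuclideanSpace ℝ (Fin n)) :
    angTuple x = fun p => InnerProductGeometry.angle (x p.1.1) (gs x p.1.2) := rfl

lemma gs_def {n N : ℕ} (x : Fin N → EuclideanSpace ℝ (Fin n)) (i : Fin N) :
    gs x i = x i - ∑ j ∈ Finset.Iio i,
      ((inner ℝ (gs x j) (x i) : ℝ) / (‖gs x j‖ : ℝ) ^ 2) • gs x j := by
  unfold gs
  rw [InnerProductSpace.gramSchmidt_def]
  congr 1
  refine Finset.sum_congr rfl fun j _ => ?_
  exact Submodule.starProjection_singleton ℝ _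

lemma gs_smul_pos {n N : ℕ} (x : Fin N → EuclideanSpace ℝ (Fin n)) (c : Fin N → ℝ)
    (hc : ∀ i, c i ≠ 0) : ∀ i : Fin N, gs (fun j => c j • x j) i = c i • gs x i := by
  have key : ∀ (m : ℕ) (i : Fin N), (i : ℕ) < m → gs (fun j => c j • x j) i = c i • gs x i := by
    intro m
    induction m with
    | zero => exact fun i hi => absurd hi (Nat.not_lt_zero _)
    | succ m IH =>
      intro i hi
      rw [gs_def, gs_def x i, smul_sub, Finset.smul_sum]
      congr 1
      refine Finset.sum_congr rfl fun j hj => ?_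
      have hji : (j : ℕ) < m := by
        have := Finset.mem_Iio.1 hj
        omega
      rw [IH j hji]
      by_cases hg : gs x j = 0
      · simp [hg]
      · have hng : ‖gs x j‖ ≠ 0 := norm_ne_zero_iff.2 hg
        have hcj : c j ≠ 0 := hc j
        show ((inner ℝ (c j • gs x j) (c i • x i) : ℝ) / ‖c j • gs x j‖ ^ 2) • (c j • gs x j)
            = c i • ((inner ℝ (gs x j) (x i) : ℝ) / ‖gs x j‖ ^ 2) • gs x j
        rw [real_inner_smul_left, real_inner_smul_right, norm_smul, smul_smul, smul_smul]
        congr 1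
        rw [Real.norm_eq_abs, mul_pow, sq_abs]
        field_simp
  exact fun i => key (i + 1) i (Nat.lt_succ_self _)

lemma measurable_gs {n N : ℕ} :
    ∀ i : Fin N, Measurable (fun x : Fin N → EuclideanSpace ℝ (Fin n) => gs x i) := by
  have key : ∀ (m : ℕ) (i : Fin N), (i : ℕ) < m →
      Measurable (fun x : Fin N → EuclideanSpace ℝ (Fin n) => gs x i) := by
    intro m
    induction m with
    | zero => exact fun i hi => absurd hi (Nat.not_lt_zero _)
    | succ m IH =>
      intro i hi
      have hrw : (fun x : Fin N → EuclideanSpace ℝ (Fin n) => gs x i)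
          = fun x => x i - ∑ j ∈ Finset.Iio i,
              ((inner ℝ (gs x j) (x i) : ℝ) / (‖gs x j‖ : ℝ) ^ 2) • gs x j := by
        funext x; exact gs_def x i
      rw [hrw]
      refine (measurable_pi_apply i).sub (Finset.measurable_sum _ fun j hj => ?_)
      have hji : (j : ℕ) < m := by
        have := Finset.mem_Iio.1 hj
        omega
      have hgj := IH j hji
      exact (((hgj.inner (measurable_pi_apply i))).div ((hgj.norm).pow_const 2)).smul hgj
  exact fun i => key (i + 1) i (Nat.lt_succ_self _)

lemma angTuple_smul_pos {n N : ℕ} (x : Fin N → EuclideanSpace ℝ (Fin n)) (c : Fin N → ℝ)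
    (hc : ∀ i, 0 < c i) : angTuple (fun j => c j • x j) = angTuple x := by
  funext p
  simp only [angTuple_eq]
  rw [gs_smul_pos x c (fun i => (hc i).ne') p.1.2,
    InnerProductGeometry.angle_smul_left_of_pos _ _ (hc p.1.1),
    InnerProductGeometry.angle_smul_right_of_pos _ _ (hc p.1.2)]

lemma measurable_angTuple {n N : ℕ} :
    Measurable (fun x : Fin N → EuclideanSpace ℝ (Fin n) => angTuple x) := by
  refine measurable_pi_lambda _ fun p => ?_
  have h1 : Measurable fun x : Fin N → EuclideanSpace ℝ (Fin n) => x p.1.1 :=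
    measurable_pi_apply _
  have h2 := measurable_gs (n := n) (N := N) p.1.2
  simp only [angTuple_eq, InnerProductGeometry.angle]
  exact Real.continuous_arccos.measurable.comp
    ((h1.inner h2).div (h1.norm.mul h2.norm))

lemma uvol_pos (n : ℕ) (hn : 1 ≤ n) : 0 < Uvol n := by
  haveI : Nonempty (Fin n) := ⟨⟨0, hn⟩⟩
  have h1 : volume (Metric.ball (0 : EuclideanSpace ℝ (Fin n)) 1) ≠ 0 :=
    (measure_ball_pos _ _ one_pos).ne'
  have h2 : volume (Metric.ball (0 : EuclideanSpace ℝ (Fin n)) 1) ≠ ⊤ :=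
    measure_ball_lt_top.ne
  exact ENNReal.toReal_pos h1 h2

lemma toSphere_univ_eq (n : ℕ) (hn : 1 ≤ n) :
    (volume : Measure (EuclideanSpace ℝ (Fin n))).toSphere Set.univ
      = ENNReal.ofReal (n * Uvol n) := by
  haveI : Nonempty (Fin n) := ⟨⟨0, hn⟩⟩
  rw [Measure.toSphere_apply_univ, finrank_euclideanSpace_fin,
    ENNReal.ofReal_mul (by positivity), ENNReal.ofReal_natCast, Uvol,
    ENNReal.ofReal_toReal measure_ball_lt_top.ne]

/-- The radial part of the computation. -/
lemma radial_measure (n : ℕ) (hn : 1 ≤ n) (s t : ℝ) (hs : 0 ≤ s) (hst : s < t) :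
    Measure.volumeIoiPow (n - 1)
        {r : Set.Ioi (0 : ℝ) | Uvol n * (r : ℝ) ^ n ∈ Set.Icc s t}
      = ENNReal.ofReal ((t - s) / (n * Uvol n)) := by
  have hnn : n ≠ 0 := by omega
  have hU : 0 < Uvol n := uvol_pos n hn
  set U := Uvol n with hUdef
  set a : ℝ := (s / U) ^ ((n : ℝ)⁻¹) with ha
  set b : ℝ := (t / U) ^ ((n : ℝ)⁻¹) with hb
  have hsU : 0 ≤ s / U := div_nonneg hs hU.le
  have htU : 0 ≤ t / U := div_nonneg (hs.trans hst.le) hU.le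
  have ha0 : 0 ≤ a := Real.rpow_nonneg hsU _
  have hb0 : 0 ≤ b := Real.rpow_nonneg htU _
  have han : a ^ n = s / U := Real.rpow_inv_natCast_pow hsU hnn
  have hbn : b ^ n = t / U := Real.rpow_inv_natCast_pow htU hnn
  have hab : a ≤ b :=
    Real.rpow_le_rpow hsU ((div_le_div_iff_of_pos_right hU).2 hst.le) (by positivity)
  have hQm : MeasurableSet {r : ℝ | U * r ^ n ∈ Set.Icc s t} :=
    (measurable_const.mul (measurable_id.pow_const n)) measurableSet_Icc
  have hRm : MeasurableSet {r : Set.Ioi (0 : ℝ) | U * (r : ℝ) ^ n ∈ Set.Icc s t} :=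
    measurable_subtype_coe hQm
  have himg : Subtype.val '' {r : Set.Ioi (0 : ℝ) | U * (r : ℝ) ^ n ∈ Set.Icc s t}
      = {r : ℝ | U * r ^ n ∈ Set.Icc s t} ∩ Set.Ioi (0 : ℝ) := by
    rw [show {r : Set.Ioi (0 : ℝ) | U * (r : ℝ) ^ n ∈ Set.Icc s t}
        = Subtype.val ⁻¹' {r : ℝ | U * r ^ n ∈ Set.Icc s t} from rfl,
      Set.image_preimage_eq_inter_range, Subtype.range_coe]
  have h1 : Set.Ioc a b ⊆ {r : ℝ | U * r ^ n ∈ Set.Icc s t} ∩ Set.Ioi (0 : ℝ) := by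
    rintro r ⟨har, hrb⟩
    have hr0 : 0 < r := lt_of_le_of_lt ha0 har
    refine ⟨⟨?_, ?_⟩, hr0⟩
    · have h := pow_le_pow_left₀ ha0 har.le n
      rw [han] at h
      have h2 := mul_le_mul_of_nonneg_left h hU.le
      rwa [mul_div_cancel₀ _ hU.ne'] at h2
    · have h := pow_le_pow_left₀ hr0.le hrb n
      rw [hbn] at h
      have h2 := mul_le_mul_of_nonneg_left h hU.le
      rwa [mul_div_cancel₀ _ hU.ne'] at h2
  have h2 : {r : ℝ | U * r ^ n ∈ Set.Icc s t} ∩ Set.Ioi (0 : ℝ) ⊆ Set.Icc a b := by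
    rintro r ⟨⟨hsr, hrt⟩, hr0⟩
    have hr0' : (0:ℝ) < r := hr0
    constructor
    · have h : s / U ≤ r ^ n := (div_le_iff₀' hU).2 hsr
      have h2 := Real.rpow_le_rpow hsU h (by positivity : (0:ℝ) ≤ (n:ℝ)⁻¹)
      rwa [Real.pow_rpow_inv_natCast hr0'.le hnn] at h2
    · have h : r ^ n ≤ t / U := (le_div_iff₀' hU).2 hrt
      have h2 := Real.rpow_le_rpow (by positivity) h (by positivity : (0:ℝ) ≤ (n:ℝ)⁻¹)
      rwa [Real.pow_rpow_inv_natCast hr0'.le hnn] at h2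
  have hae : ({r : ℝ | U * r ^ n ∈ Set.Icc s t} ∩ Set.Ioi (0 : ℝ) : Set ℝ)
      =ᵐ[volume] Set.Ioc a b := by
    have h3 : (Set.Ioc a b : Set ℝ) =ᵐ[volume] Set.Icc a b := Ioc_ae_eq_Icc
    filter_upwards [h3] with r hr
    simp only [eq_iff_iff] at hr ⊢
    exact ⟨fun h => hr.2 (h2 h), fun h => h1 h⟩
  rw [Measure.volumeIoiPow, withDensity_apply _ hRm,
    setLIntegral_subtype measurableSet_Ioi _ (fun r : ℝ => ENNReal.ofReal (r ^ (n - 1))),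
    himg, setLIntegral_congr hae,
    ← ofReal_integral_eq_lintegral_ofReal
      ((intervalIntegral.intervalIntegrable_pow (n - 1) : IntervalIntegrable _ volume a b).1)
      (by filter_upwards [ae_restrict_mem measurableSet_Ioc] with y hy
          exact pow_nonneg (le_trans ha0 hy.1.le) _),
    ← intervalIntegral.integral_of_le hab, integral_pow]
  congr 1
  have hn1 : n - 1 + 1 = n := by omega
  have hcast : ((n - 1 : ℕ) : ℝ) + 1 = (n : ℝ) := by
    exact_mod_cast congrArg (Nat.cast : ℕ → ℝ) hn1
  rw [hn1, hbn, han, hcast, ← sub_div, div_div, mul_comm U (n:ℝ)]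

/-- `sphereMeasure` is a probability measure (for `1 ≤ n`). -/
lemma sphereMeasure_univ (n : ℕ) (hn : 1 ≤ n) :
    IsProbabilityMeasure (sphereMeasure n) := by
  constructor
  rw [sphereMeasure, Measure.smul_apply, smul_eq_mul, ENNReal.inv_mul_cancel]
  · rw [toSphere_univ_eq n hn]
    have := uvol_pos n hn
    simp only [ne_eq, ENNReal.ofReal_eq_zero, not_le]
    positivity
  · rw [toSphere_univ_eq n hn]
    exact ENNReal.ofReal_ne_top

lemma pi_sphereMeasure_eq (n N : ℕ) (hn : 1 ≤ n) :
    (Measure.pi fun _ : Fin N => sphereMeasure n)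
      = (((volume : Measure (EuclideanSpace ℝ (Fin n))).toSphere Set.univ)⁻¹) ^ N •
        Measure.pi (fun _ : Fin N =>
          (volume : Measure (EuclideanSpace ℝ (Fin n))).toSphere) := by
  haveI := sphereMeasure_univ n hn
  refine Measure.pi_eq (μ := fun _ : Fin N => sphereMeasure n) fun s hs => ?_
  rw [Measure.smul_apply, Measure.pi_pi, smul_eq_mul]
  simp only [sphereMeasure, Measure.smul_apply, smul_eq_mul]
  rw [Finset.prod_mul_distrib, Finset.prod_const]
  simp [Finset.card_univ]

theorem integral_indicator_annulus_angles (n N : ℕ) (hn : 2 ≤ n) (hN : 1 ≤ N) (hNn : N < n)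
    (s t : ℝ) (hs : 0 ≤ s) (hst : s < t)
    (T : Set ({p : Fin N × Fin N // p.2 < p.1} → ℝ)) (hT : MeasurableSet T)
    (hTrange : ∀ θ ∈ T, ∀ p, θ p ∈ Set.Icc 0 Real.pi) :
    ∫ x : Fin N → EuclideanSpace ℝ (Fin n),
        (if (∀ i, Uvol n * ‖x i‖ ^ (n : ℕ) ∈ Set.Icc s t) ∧ angTuple x ∈ T
         then (1 : ℝ) else 0) =
      Aprob n N T * (t - s) ^ N := by
  have hn1 : 1 ≤ n := by omega
  have hU : 0 < Uvol n := uvol_pos n hn1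
  -- the set whose measure we compute
  set S : Set (Fin N → EuclideanSpace ℝ (Fin n)) :=
    {x | (∀ i, Uvol n * ‖x i‖ ^ (n : ℕ) ∈ Set.Icc s t) ∧ angTuple x ∈ T} with hSdef
  have hSm : MeasurableSet S := by
    have h1 : MeasurableSet {x : Fin N → EuclideanSpace ℝ (Fin n) |
        ∀ i, Uvol n * ‖x i‖ ^ (n : ℕ) ∈ Set.Icc s t} := by
      rw [Set.setOf_forall]
      exact MeasurableSet.iInter fun i =>
        (measurable_const.mul (((measurable_pi_apply i).norm).pow_const n)) measurableSet_Icc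
    exact h1.inter (measurable_angTuple hT)
  -- the integral is the measure of `S`
  have hint : (∫ x : Fin N → EuclideanSpace ℝ (Fin n),
      (if (∀ i, Uvol n * ‖x i‖ ^ (n : ℕ) ∈ Set.Icc s t) ∧ angTuple x ∈ T
       then (1 : ℝ) else 0)) = (volume S).toReal := by
    have hfun : (fun x : Fin N → EuclideanSpace ℝ (Fin n) =>
        (if (∀ i, Uvol n * ‖x i‖ ^ (n : ℕ) ∈ Set.Icc s t) ∧ angTuple x ∈ T
         then (1 : ℝ) else 0)) = S.indicator fun _ => (1 : ℝ) := by
      funext x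
      by_cases h : x ∈ S
      · rw [Set.indicator_of_mem h]; exact if_pos h
      · rw [Set.indicator_of_notMem h]; exact if_neg h
    rw [hfun, integral_indicator_const _ hSm, smul_eq_mul, mul_one, measureReal_def]
  rw [hint]
  -- sets on the sphere and radial side
  set A : Set (Fin N → Metric.sphere (0 : EuclideanSpace ℝ (Fin n)) 1) :=
    {u | angTuple (fun i => ((u i : EuclideanSpace ℝ (Fin n)))) ∈ T} with hAdef
  have hAm : MeasurableSet A := by
    have hm : Measurable fun (u : Fin N → Metric.sphere (0 : EuclideanSpace ℝ (Fin n)) 1) =>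
        (fun i => ((u i : EuclideanSpace ℝ (Fin n)))) :=
      measurable_pi_lambda _ fun i => measurable_subtype_coe.comp (measurable_pi_apply i)
    exact (measurable_angTuple.comp hm) hT
  set R : Set (Set.Ioi (0 : ℝ)) :=
    {r : Set.Ioi (0 : ℝ) | Uvol n * (r : ℝ) ^ n ∈ Set.Icc s t} with hRdef
  have hRm : MeasurableSet R :=
    measurable_subtype_coe ((measurable_const.mul (measurable_id.pow_const n)) measurableSet_Icc)
  -- measure-preserving maps
  have hdim : Module.finrank ℝ (EuclideanSpace ℝ (Fin n)) = n := finrank_euclideanSpace_fin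
  haveI : Nontrivial (EuclideanSpace ℝ (Fin n)) :=
    Module.nontrivial_of_finrank_pos (R := ℝ) (by rw [hdim]; omega)
  have F1 : MeasurePreserving
      (fun (x : Fin N → ({(0 : EuclideanSpace ℝ (Fin n))}ᶜ : Set (EuclideanSpace ℝ (Fin n)))) i =>
        (x i : EuclideanSpace ℝ (Fin n)))
      (Measure.pi fun _ => (volume : Measure (EuclideanSpace ℝ (Fin n))).comap Subtype.val)
      (Measure.pi fun _ => (volume : Measure (EuclideanSpace ℝ (Fin n)))) := by
    refine measurePreserving_pi
      (fun _ : Fin N => (volume : Measure (EuclideanSpace ℝ (Fin n))).comap Subtype.val)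
      (fun _ => (volume : Measure (EuclideanSpace ℝ (Fin n))))
      fun i => ⟨measurable_subtype_coe, ?_⟩
    rw [(MeasurableEmbedding.subtype_coe
        (measurableSet_singleton (0 : EuclideanSpace ℝ (Fin n))).compl).map_comap,
      Subtype.range_coe]
    simp
  have F2 : MeasurePreserving
      (fun (x : Fin N → ({(0 : EuclideanSpace ℝ (Fin n))}ᶜ : Set (EuclideanSpace ℝ (Fin n)))) i =>
        homeomorphUnitSphereProd (EuclideanSpace ℝ (Fin n)) (x i))
      (Measure.pi fun _ => (volume : Measure (EuclideanSpace ℝ (Fin n))).comap Subtype.val)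
      (Measure.pi fun _ =>
        (volume : Measure (EuclideanSpace ℝ (Fin n))).toSphere.prod
          (Measure.volumeIoiPow (n - 1))) := by
    haveI : SigmaFinite ((volume : Measure (EuclideanSpace ℝ (Fin n))).toSphere.prod
        (Measure.volumeIoiPow (n - 1))) := inferInstance
    refine measurePreserving_pi
      (fun _ : Fin N => (volume : Measure (EuclideanSpace ℝ (Fin n))).comap Subtype.val)
      (fun _ => (volume : Measure (EuclideanSpace ℝ (Fin n))).toSphere.prod
        (Measure.volumeIoiPow (n - 1)))
      fun i => ?_
    have h := (volume : Measure (EuclideanSpace ℝ (Fin n))).measurePreserving_homeomorphUnitSphereProd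
    rwa [hdim] at h
  have F3 : MeasurePreserving
      (MeasurableEquiv.arrowProdEquivProdArrow
        (Metric.sphere (0 : EuclideanSpace ℝ (Fin n)) 1) (Set.Ioi (0:ℝ)) (Fin N))
      (Measure.pi fun _ =>
        (volume : Measure (EuclideanSpace ℝ (Fin n))).toSphere.prod
          (Measure.volumeIoiPow (n - 1)))
      ((Measure.pi fun _ : Fin N => (volume : Measure (EuclideanSpace ℝ (Fin n))).toSphere).prod
        (Measure.pi fun _ : Fin N => Measure.volumeIoiPow (n - 1))) :=
    measurePreserving_arrowProdEquivProdArrow _ _ _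
      (fun _ => (volume : Measure (EuclideanSpace ℝ (Fin n))).toSphere)
      (fun _ => Measure.volumeIoiPow (n - 1))
  -- the two preimages agree
  have hpre : (fun (x : Fin N → ({(0 : EuclideanSpace ℝ (Fin n))}ᶜ :
        Set (EuclideanSpace ℝ (Fin n)))) i => (x i : EuclideanSpace ℝ (Fin n))) ⁻¹' S
      = ((MeasurableEquiv.arrowProdEquivProdArrow
            (Metric.sphere (0 : EuclideanSpace ℝ (Fin n)) 1) (Set.Ioi (0:ℝ)) (Fin N))
          ∘ (fun (x : Fin N → ({(0 : EuclideanSpace ℝ (Fin n))}ᶜ :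
              Set (EuclideanSpace ℝ (Fin n)))) i =>
            homeomorphUnitSphereProd (EuclideanSpace ℝ (Fin n)) (x i)))
        ⁻¹' (A ×ˢ Set.univ.pi fun _ : Fin N => R) := by
    ext x
    have hxne : ∀ i, (x i : EuclideanSpace ℝ (Fin n)) ≠ 0 := fun i => (x i).2
    have hxn : ∀ i, (0:ℝ) < ‖(x i : EuclideanSpace ℝ (Fin n))‖ :=
      fun i => norm_pos_iff.2 (hxne i)
    have hang : angTuple (fun i => ‖(x i : EuclideanSpace ℝ (Fin n))‖⁻¹ •
          (x i : EuclideanSpace ℝ (Fin n)))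
        = angTuple (fun i => (x i : EuclideanSpace ℝ (Fin n))) :=
      angTuple_smul_pos _ _ fun i => inv_pos.2 (hxn i)
    simp only [Set.mem_preimage, Function.comp_apply, hSdef, Set.mem_setOf_eq, Set.mem_prod,
      Set.mem_pi, Set.mem_univ, forall_true_left, hAdef, hRdef,
      MeasurableEquiv.arrowProdEquivProdArrow, MeasurableEquiv.coe_mk,
      Equiv.arrowProdEquivProdArrow, Equiv.coe_fn_mk]
    simp only [homeomorphUnitSphereProd_apply_fst_coe, homeomorphUnitSphereProd_apply_snd_coe,
      hang]
    tauto
  -- compute the measure of `S`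
  have hvol : volume S
      = (Measure.pi fun _ : Fin N =>
          (volume : Measure (EuclideanSpace ℝ (Fin n))).toSphere) A
        * (Measure.volumeIoiPow (n - 1) R) ^ N := by
    have e1 : (volume : Measure (Fin N → EuclideanSpace ℝ (Fin n))) S
        = (Measure.pi fun _ : Fin N => (volume : Measure (EuclideanSpace ℝ (Fin n)))) S := by
      rw [volume_pi]
    rw [e1, ← F1.measure_preimage hSm.nullMeasurableSet, hpre,
      (F3.comp F2).measure_preimage
        ((hAm.prod (MeasurableSet.univ_pi fun _ => hRm)).nullMeasurableSet),
      Measure.prod_prod, Measure.pi_pi, Finset.prod_const, Finset.card_univ, Fintype.card_fin]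
  rw [hvol, radial_measure n hn1 s t hs hst]
  -- final arithmetic
  have hc : (volume : Measure (EuclideanSpace ℝ (Fin n))).toSphere Set.univ
      = ENNReal.ofReal (n * Uvol n) := toSphere_univ_eq n hn1
  have hAprob : Aprob n N T
      = ((ENNReal.ofReal (n * Uvol n))⁻¹ ^ N
          * (Measure.pi fun _ : Fin N =>
              (volume : Measure (EuclideanSpace ℝ (Fin n))).toSphere) A).toReal := by
    rw [Aprob, pi_sphereMeasure_eq n N hn1, Measure.smul_apply, smul_eq_mul, hc]
  rw [hAprob]
  have hnU : (0:ℝ) < n * Uvol n := by positivity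
  have hts : (0:ℝ) ≤ (t - s) / (n * Uvol n) := div_nonneg (sub_nonneg.2 hst.le) hnU.le
  rw [ENNReal.toReal_mul, ENNReal.toReal_mul, ENNReal.toReal_pow, ENNReal.toReal_pow,
    ENNReal.toReal_inv, ENNReal.toReal_ofReal hnU.le, ENNReal.toReal_ofReal hts, div_pow]
  field_simp
  rw [mul_assoc, ← mul_pow, mul_one_div_cancel hnU.ne', one_pow, mul_one]
end
end
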